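/- arXiv:1312.2299 — 13 statements merged into one kernel-verified Lean document; each statement's English description precedes it below -/
import Mathlib

section
/- Let n ≥ 2 be an integer, let S : ℝ → ℝ be nonincreasing on [0,1] with S(1) = 0 and S(t) ≥ 0 for all t ∈ [0,1], and let w : {1,…,n} → ℝ be nonincreasing (w_1 ≥ w_2 ≥ … ≥ w_n) with an index k ∈ {0,…,n} such that w_i ≥ 0 for all i ≤ k and w_i < 0 for all i > k. For any badge assignment r : {1,…,n} → ℕ and each i, define t_i(r) = |{j ≠ i : r_j ≥ r_i}| / (n−1). Then for every badge assignment r, ∑_{i=1}^{n} w_i · S(t_i(r)) ≤ ∑_{i=1}^{k} w_i · S((i−1)/(n−1)); that is, the virtual surplus is maximized by assigning distinct decreasing badges to the k users with nonnegative weight and a common lowest badge to all users with negative weight. -/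
open Finset

/-- The status fraction of user `i` under badge assignment `r`:
the fraction of the other `n - 1` users holding a weakly higher badge. -/
noncomputable def statusFrac (n : ℕ) (r : Fin n → ℕ) (i : Fin n) : ℝ :=
  ((Finset.univ.filter (fun j => j ≠ i ∧ r i ≤ r j)).card : ℝ) / (n - 1)

lemma statusFrac_nonneg (n : ℕ) (hn : 2 ≤ n) (r : Fin n → ℕ) (i : Fin n) :
    0 ≤ statusFrac n r i := by
  unfold statusFrac
  apply div_nonneg (by positivity)
  have : (2:ℝ) ≤ (n:ℝ) := by exact_mod_cast hn
  linarith

lemma statusFrac_le_one (n : ℕ) (hn : 2 ≤ n) (r : Fin n → ℕ) (i : Fin n) :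
    statusFrac n r i ≤ 1 := by
  unfold statusFrac
  have hpos : (0:ℝ) < (n:ℝ) - 1 := by
    have : (2:ℝ) ≤ (n:ℝ) := by exact_mod_cast hn
    linarith
  rw [div_le_one hpos]
  have hsub : (Finset.univ.filter (fun j => j ≠ i ∧ r i ≤ r j)) ⊆ Finset.univ.erase i := by
    intro j hj
    rw [Finset.mem_filter] at hj
    exact Finset.mem_erase.mpr ⟨hj.2.1, Finset.mem_univ j⟩
  have hcard := Finset.card_le_card hsub
  rw [Finset.card_erase_of_mem (Finset.mem_univ i), Finset.card_univ, Fintype.card_fin] at hcard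
  have : ((Finset.univ.filter (fun j => j ≠ i ∧ r i ≤ r j)).card : ℝ) ≤ ((n - 1 : ℕ) : ℝ) := by
    exact_mod_cast hcard
  rwa [Nat.cast_sub (by omega), Nat.cast_one] at this

lemma statusFrac_mem_Icc (n : ℕ) (hn : 2 ≤ n) (r : Fin n → ℕ) (i : Fin n) :
    statusFrac n r i ∈ Set.Icc (0:ℝ) 1 :=
  ⟨statusFrac_nonneg n hn r i, statusFrac_le_one n hn r i⟩

/-- Sum over Fin n indices less than s equals sum over range s. -/
lemma sum_filter_lt_eq (n s : ℕ) (hs : s ≤ n) (f : ℕ → ℝ) :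
    ∑ i ∈ Finset.univ.filter (fun i : Fin n => (i:ℕ) < s), f i
      = ∑ j ∈ Finset.range s, f j := by
  refine Finset.sum_bij' (fun (i : Fin n) _ => (i : ℕ))
    (fun (j : ℕ) hj => (⟨j, lt_of_lt_of_le (Finset.mem_range.mp hj) hs⟩ : Fin n))
    ?_ ?_ ?_ ?_ ?_
  · intro a ha
    rw [Finset.mem_filter] at ha
    exact Finset.mem_range.mpr ha.2
  · intro b hb
    rw [Finset.mem_filter]
    exact ⟨Finset.mem_univ _, Finset.mem_range.mp hb⟩
  · intro a _; rfl
  · intro b _; rfl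
  · intro a _; rfl

lemma card_filter_lt (n s : ℕ) (hs : s ≤ n) :
    (Finset.univ.filter (fun i : Fin n => (i:ℕ) < s)).card = s := by
  have h := sum_filter_lt_eq n s hs (fun _ => (1:ℝ))
  rw [Finset.sum_const, Finset.sum_const, Finset.card_range] at h
  have : ((Finset.univ.filter (fun i : Fin n => (i:ℕ) < s)).card : ℝ) = (s : ℝ) := by
    simpa using h
  exact_mod_cast this

/-- Key lemma: for any set `A` of users, the total status value is at most the
value obtained by giving them the top `|A|` distinct badges. -/
lemma sum_status_le (n : ℕ) (hn : 2 ≤ n) (S : ℝ → ℝ)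
    (hS_anti : AntitoneOn S (Set.Icc 0 1)) (r : Fin n → ℕ) (A : Finset (Fin n)) :
    ∑ i ∈ A, S (statusFrac n r i) ≤ ∑ j ∈ Finset.range A.card, S ((j : ℝ) / (n - 1)) := by
  induction A using Finset.strongInduction with
  | _ A ih =>
    rcases A.eq_empty_or_nonempty with h | h
    · simp [h]
    obtain ⟨i0, hi0A, hi0min⟩ := A.exists_min_image r h
    have hpos : (0:ℝ) < (n:ℝ) - 1 := by
      have : (2:ℝ) ≤ (n:ℝ) := by exact_mod_cast hn
      linarith
    have hc1 : 1 ≤ A.card := Finset.card_pos.mpr h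
    have hcn : A.card ≤ n := by
      simpa using Finset.card_le_card (Finset.subset_univ A)
    -- the minimum-badge user i0 has at least |A| - 1 others weakly above
    have hsub : A.erase i0 ⊆ Finset.univ.filter (fun j => j ≠ i0 ∧ r i0 ≤ r j) := by
      intro j hj
      rw [Finset.mem_erase] at hj
      exact Finset.mem_filter.mpr ⟨Finset.mem_univ j, hj.1, hi0min j hj.2⟩
    have hcard : A.card - 1 ≤ (Finset.univ.filter (fun j => j ≠ i0 ∧ r i0 ≤ r j)).card := by
      have := Finset.card_le_card hsub
      rwa [Finset.card_erase_of_mem hi0A] at this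
    have hlow : ((A.card - 1 : ℕ) : ℝ) / ((n:ℝ) - 1) ≤ statusFrac n r i0 := by
      unfold statusFrac
      gcongr
    have hmem1 : ((A.card - 1 : ℕ) : ℝ) / ((n:ℝ) - 1) ∈ Set.Icc (0:ℝ) 1 := by
      constructor
      · positivity
      · rw [div_le_one hpos]
        calc ((A.card - 1 : ℕ) : ℝ) ≤ ((n - 1 : ℕ) : ℝ) := by
              exact_mod_cast Nat.sub_le_sub_right hcn 1
          _ = (n : ℝ) - 1 := by rw [Nat.cast_sub (by omega), Nat.cast_one]
    have hkey : S (statusFrac n r i0) ≤ S (((A.card - 1 : ℕ) : ℝ) / ((n:ℝ) - 1)) :=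
      hS_anti hmem1 (statusFrac_mem_Icc n hn r i0) hlow
    have hih := ih (A.erase i0) (Finset.erase_ssubset hi0A)
    rw [Finset.card_erase_of_mem hi0A] at hih
    have hsplit : ∑ i ∈ A, S (statusFrac n r i)
        = S (statusFrac n r i0) + ∑ i ∈ A.erase i0, S (statusFrac n r i) :=
      (Finset.add_sum_erase A _ hi0A).symm
    have hrange : ∑ j ∈ Finset.range A.card, S ((j : ℝ) / (n - 1))
        = ∑ j ∈ Finset.range (A.card - 1), S ((j : ℝ) / (n - 1))
          + S (((A.card - 1 : ℕ) : ℝ) / ((n:ℝ) - 1)) := by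
      conv_lhs => rw [show A.card = (A.card - 1) + 1 by omega]
      rw [Finset.sum_range_succ]
    rw [hsplit, hrange]
    linarith

/-- Abel-type induction: for nonincreasing nonnegative weights on the first `m`
indices, the weighted status value is maximized by the canonical assignment. -/
lemma weighted_sum_le (n : ℕ) (hn : 2 ≤ n) (S : ℝ → ℝ)
    (hS_anti : AntitoneOn S (Set.Icc 0 1)) (r : Fin n → ℕ) :
    ∀ m : ℕ, m ≤ n → ∀ v : Fin n → ℝ,
      (∀ i j : Fin n, (j:ℕ) < m → i ≤ j → v j ≤ v i) →
      (∀ i : Fin n, (i:ℕ) < m → 0 ≤ v i) →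
      ∑ i ∈ Finset.univ.filter (fun i : Fin n => (i:ℕ) < m), v i * S (statusFrac n r i)
        ≤ ∑ i ∈ Finset.univ.filter (fun i : Fin n => (i:ℕ) < m), v i * S ((i:ℕ) / (n - 1)) := by
  intro m
  induction m with
  | zero => intro _ v _ _; simp
  | succ m ihm =>
    intro hm1 v hv1 hv2
    have hmn : m < n := hm1
    set em : Fin n := ⟨m, hmn⟩ with hem
    have hemval : (em : ℕ) = m := rfl
    have hins : Finset.univ.filter (fun i : Fin n => (i:ℕ) < m + 1)
        = insert em (Finset.univ.filter (fun i : Fin n => (i:ℕ) < m)) := by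
      ext i
      simp only [Finset.mem_filter, Finset.mem_insert, Finset.mem_univ, true_and]
      constructor
      · intro hi
        rcases Nat.lt_succ_iff_lt_or_eq.mp hi with h' | h'
        · exact Or.inr h'
        · exact Or.inl (Fin.ext h')
      · rintro (rfl | h')
        · exact Nat.lt_succ_self m
        · exact Nat.lt_succ_of_lt h'
    have hnotmem : em ∉ Finset.univ.filter (fun i : Fin n => (i:ℕ) < m) := by
      simp [hemval]
    set c := v em with hc
    have hc0 : 0 ≤ c := hv2 em (Nat.lt_succ_self m)
    -- Abel decomposition identity
    have key : ∀ x : Fin n → ℝ,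
        ∑ i ∈ Finset.univ.filter (fun i : Fin n => (i:ℕ) < m + 1), v i * x i
          = (∑ i ∈ Finset.univ.filter (fun i : Fin n => (i:ℕ) < m), (v i - c) * x i)
            + c * ∑ i ∈ Finset.univ.filter (fun i : Fin n => (i:ℕ) < m + 1), x i := by
      intro x
      rw [hins, Finset.sum_insert hnotmem, Finset.sum_insert hnotmem]
      simp only [sub_mul, Finset.sum_sub_distrib, Finset.mul_sum]
      ring_nf
      rw [Finset.mul_sum]
      ring
    -- apply IH to the shifted weights
    have hIH : ∑ i ∈ Finset.univ.filter (fun i : Fin n => (i:ℕ) < m), (v i - c) * S (statusFrac n r i)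
        ≤ ∑ i ∈ Finset.univ.filter (fun i : Fin n => (i:ℕ) < m), (v i - c) * S ((i:ℕ) / (n - 1)) := by
      apply ihm (le_of_lt hm1) (fun i => v i - c)
      · intro i j hj hij
        have := hv1 i j (Nat.lt_succ_of_lt hj) hij
        linarith
      · intro i hi
        have hile : i ≤ em := by
          rw [Fin.le_def]
          exact le_of_lt hi
        have := hv1 i em (Nat.lt_succ_self m) hile
        linarith
    -- apply the key set lemma to the full first m+1 indices
    have hcardF : (Finset.univ.filter (fun i : Fin n => (i:ℕ) < m + 1)).card = m + 1 :=
      card_filter_lt n (m+1) hm1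
    have hL : ∑ i ∈ Finset.univ.filter (fun i : Fin n => (i:ℕ) < m + 1), S (statusFrac n r i)
        ≤ ∑ i ∈ Finset.univ.filter (fun i : Fin n => (i:ℕ) < m + 1), S ((i:ℕ) / (n - 1)) := by
      have h1 := sum_status_le n hn S hS_anti r
        (Finset.univ.filter (fun i : Fin n => (i:ℕ) < m + 1))
      rw [hcardF] at h1
      have h2 := sum_filter_lt_eq n (m+1) hm1 (fun j : ℕ => S ((j : ℝ) / (n - 1)))
      rw [← h2] at h1
      exact h1
    calc ∑ i ∈ Finset.univ.filter (fun i : Fin n => (i:ℕ) < m + 1), v i * S (statusFrac n r i)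
        = (∑ i ∈ Finset.univ.filter (fun i : Fin n => (i:ℕ) < m), (v i - c) * S (statusFrac n r i))
            + c * ∑ i ∈ Finset.univ.filter (fun i : Fin n => (i:ℕ) < m + 1), S (statusFrac n r i) :=
          key _
      _ ≤ (∑ i ∈ Finset.univ.filter (fun i : Fin n => (i:ℕ) < m), (v i - c) * S ((i:ℕ) / (n - 1)))
            + c * ∑ i ∈ Finset.univ.filter (fun i : Fin n => (i:ℕ) < m + 1), S ((i:ℕ) / (n - 1)) := by
          apply add_le_add hIH
          exact mul_le_mul_of_nonneg_left hL hc0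
      _ = ∑ i ∈ Finset.univ.filter (fun i : Fin n => (i:ℕ) < m + 1), v i * S ((i:ℕ) / (n - 1)) :=
          (key _).symm

theorem virtual_surplus_maximizing_badge_allocation
    (n : ℕ) (hn : 2 ≤ n)
    (S : ℝ → ℝ)
    (hS_anti : AntitoneOn S (Set.Icc 0 1))
    (hS1 : S 1 = 0)
    (hS_nonneg : ∀ t ∈ Set.Icc (0:ℝ) 1, 0 ≤ S t)
    (w : Fin n → ℝ)
    (hw_anti : ∀ i j : Fin n, i ≤ j → w j ≤ w i)
    (k : ℕ) (hk : k ≤ n)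
    (hw_nonneg : ∀ i : Fin n, (i : ℕ) < k → 0 ≤ w i)
    (hw_neg : ∀ i : Fin n, k ≤ (i : ℕ) → w i < 0) :
    ∀ r : Fin n → ℕ,
      ∑ i, w i * S (statusFrac n r i) ≤
        ∑ i ∈ Finset.univ.filter (fun i : Fin n => (i : ℕ) < k),
          w i * S ((i : ℕ) / (n - 1)) := by
  intro r
  have hsplit := Finset.sum_filter_add_sum_filter_not Finset.univ
    (fun i : Fin n => (i:ℕ) < k) (fun i => w i * S (statusFrac n r i))
  have hneg : ∑ i ∈ Finset.univ.filter (fun i : Fin n => ¬ (i:ℕ) < k),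
      w i * S (statusFrac n r i) ≤ 0 := by
    apply Finset.sum_nonpos
    intro i hi
    rw [Finset.mem_filter] at hi
    have hwi : w i ≤ 0 := le_of_lt (hw_neg i (le_of_not_gt hi.2))
    have hSi : 0 ≤ S (statusFrac n r i) := hS_nonneg _ (statusFrac_mem_Icc n hn r i)
    exact mul_nonpos_of_nonpos_of_nonneg hwi hSi
  have hM := weighted_sum_le n hn S hS_anti r k hk w
    (fun i j _ hij => hw_anti i j hij) hw_nonneg
  calc ∑ i, w i * S (statusFrac n r i)
      = (∑ i ∈ Finset.univ.filter (fun i : Fin n => (i:ℕ) < k), w i * S (statusFrac n r i))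
        + ∑ i ∈ Finset.univ.filter (fun i : Fin n => ¬ (i:ℕ) < k), w i * S (statusFrac n r i) :=
        hsplit.symm
    _ ≤ ∑ i ∈ Finset.univ.filter (fun i : Fin n => (i:ℕ) < k), w i * S (statusFrac n r i) := by
        linarith
    _ ≤ ∑ i ∈ Finset.univ.filter (fun i : Fin n => (i : ℕ) < k), w i * S ((i : ℕ) / (n - 1)) := hM
end

section
/- Let R : ℝ → ℝ be differentiable and concave on [0,1] with R(0) = R(1) = 0, and let κ* ∈ [0,1] be a point where R attains its maximum over [0,1]. Let S : ℝ → ℝ be concave and nonincreasing on [0,1] with S(1) = 0. Then ∫_0^{κ*} R'(q)·S(q) dq ≤ 4 · R(1/2) · S(1/2). (That is, the absolute threshold mechanism with a single quantile threshold at 1/2 achieves a 4-approximation to the optimal expected per-user contribution when the status function is concave.) -/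
open MeasureTheory intervalIntegral


lemma concave_comb_aux {f : ℝ → ℝ} (hf : ConcaveOn ℝ (Set.Icc 0 1) f) {x y : ℝ}
    (hx : x ∈ Set.Icc (0:ℝ) 1) (hy : y ∈ Set.Icc (0:ℝ) 1) {a b : ℝ}
    (ha : 0 ≤ a) (hb : 0 ≤ b) (hab : a + b = 1) :
    a * f x + b * f y ≤ f (a * x + b * y) := by
  simpa [smul_eq_mul] using hf.2 hx hy ha hb hab

theorem single_threshold_four_approx_concave
    (R : ℝ → ℝ)
    (hR_diff : DifferentiableOn ℝ R (Set.Icc 0 1))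
    (hR_concave : ConcaveOn ℝ (Set.Icc 0 1) R)
    (hR0 : R 0 = 0) (hR1 : R 1 = 0)
    (κstar : ℝ) (hκ : κstar ∈ Set.Icc (0:ℝ) 1)
    (hκ_max : ∀ q ∈ Set.Icc (0:ℝ) 1, R q ≤ R κstar)
    (S : ℝ → ℝ)
    (hS_concave : ConcaveOn ℝ (Set.Icc 0 1) S)
    (hS_anti : AntitoneOn S (Set.Icc 0 1))
    (hS1 : S 1 = 0) :
    (∫ q in (0:ℝ)..κstar, deriv R q * S q) ≤ 4 * R (1/2) * S (1/2) := by
  have h0m : (0:ℝ) ∈ Set.Icc (0:ℝ) 1 := by norm_num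
  have h1m : (1:ℝ) ∈ Set.Icc (0:ℝ) 1 := by norm_num
  have hhm : (1/2:ℝ) ∈ Set.Icc (0:ℝ) 1 := by norm_num
  -- S is nonnegative on [0,1]
  have hSnn : ∀ q ∈ Set.Icc (0:ℝ) 1, 0 ≤ S q := by
    intro q hq
    have := hS_anti hq h1m hq.2
    rw [hS1] at this
    exact this
  -- R is nonnegative on [0,1]
  have hRnn : ∀ q ∈ Set.Icc (0:ℝ) 1, 0 ≤ R q := by
    intro q hq
    have h := concave_comb_aux hR_concave h0m h1m (a := 1 - q) (b := q)
      (by linarith [hq.2]) hq.1 (by ring)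
    simp only [mul_zero, mul_one, zero_add, hR0, hR1] at h
    linarith
  have hS2 : ∀ q ∈ Set.Icc (0:ℝ) (1/2 : ℝ), S q ≤ 2 * S (1/2) := by
    intro q hq
    have hq1 : (0:ℝ) < 1 - q := by linarith [hq.2]
    set a : ℝ := 1 / (2 * (1 - q)) with ha_def
    have ha0 : 0 < a := by positivity
    have ha1 : a ≤ 1 := by
      rw [ha_def, div_le_one (by positivity)]; linarith [hq.2]
    have hah : (1:ℝ)/2 ≤ a := by
      rw [ha_def, le_div_iff₀ (by positivity)]; nlinarith [hq.1]
    have hqm : q ∈ Set.Icc (0:ℝ) 1 := ⟨hq.1, by linarith [hq.2]⟩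
    have h := concave_comb_aux hS_concave hqm h1m (a := a) (b := 1 - a)
      ha0.le (by linarith) (by ring)
    have hpt : a * q + (1 - a) * 1 = 1/2 := by
      rw [ha_def]; field_simp; ring
    rw [hpt, hS1, mul_zero, add_zero] at h
    nlinarith [hSnn q hqm]
  have hRk0 : 0 ≤ R κstar := hRnn _ hκ
  -- R κstar ≤ 2 R(1/2)
  have hRk2 : R κstar ≤ 2 * R (1/2) := by
    rcases le_or_gt κstar (1/2) with hc | hc
    · have hq1 : (0:ℝ) < 1 - κstar := by linarith
      set a : ℝ := 1 / (2 * (1 - κstar)) with ha_def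
      have ha0 : 0 < a := by positivity
      have ha1 : a ≤ 1 := by
        rw [ha_def, div_le_one (by positivity)]; linarith
      have hah : (1:ℝ)/2 ≤ a := by
        rw [ha_def, le_div_iff₀ (by positivity)]; nlinarith [hκ.1]
      have h := concave_comb_aux hR_concave hκ h1m (a := a) (b := 1 - a)
        ha0.le (by linarith) (by ring)
      have hpt : a * κstar + (1 - a) * 1 = 1/2 := by
        rw [ha_def]; field_simp; ring
      rw [hpt, hR1, mul_zero, add_zero] at h
      nlinarith
    · have hk0' : (0:ℝ) < κstar := by linarith
      set b : ℝ := 1 / (2 * κstar) with hb_def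
      have hb0 : 0 < b := by positivity
      have hb1 : b ≤ 1 := by
        rw [hb_def, div_le_one (by positivity)]; linarith
      have hbh : (1:ℝ)/2 ≤ b := by
        rw [hb_def, le_div_iff₀ (by positivity)]; nlinarith [hκ.2]
      have h := concave_comb_aux hR_concave h0m hκ (a := 1 - b) (b := b)
        (by linarith) hb0.le (by ring)
      have hpt : (1 - b) * 0 + b * κstar = 1/2 := by
        rw [hb_def]; field_simp; ring
      rw [hpt, hR0, mul_zero, zero_add] at h
      nlinarith
  have hShalf : 0 ≤ S (1/2) := hSnn _ hhm
  have hRhalf : 0 ≤ R (1/2) := hRnn _ hhm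
  -- a.e. avoidance of single points
  have hne : ∀ c : ℝ, ∀ᵐ q : ℝ ∂volume, q ≠ c := by
    intro c
    rw [ae_iff]
    have : {q : ℝ | ¬ q ≠ c} = {c} := by ext x; simp
    rw [this]
    exact measure_singleton c
  rcases eq_or_lt_of_le hRk0 with hRkz | hRkpos
  · -- R is identically zero on [0,1]
    have hzero : ∀ q ∈ Set.Icc (0:ℝ) 1, R q = 0 := by
      intro q hq
      have := hκ_max q hq
      have := hRnn q hq
      linarith [hRkz]
    have hdz : ∀ x ∈ Set.Ioo (0:ℝ) 1, deriv R x = 0 := by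
      intro x hx
      have hev : R =ᶠ[nhds x] fun _ => (0:ℝ) := by
        filter_upwards [Ioo_mem_nhds hx.1 hx.2] with y hy
        exact hzero y ⟨hy.1.le, hy.2.le⟩
      rw [hev.deriv_eq]
      simp
    rw [intervalIntegral.integral_of_le hκ.1]
    have hcongr : ∀ᵐ q ∂volume, q ∈ Set.Ioc (0:ℝ) κstar → deriv R q * S q = 0 := by
      filter_upwards [hne 1] with q hq1 hqm
      have hq1' : q < 1 := lt_of_le_of_ne (hqm.2.trans hκ.2) hq1
      rw [hdz q ⟨hqm.1, hq1'⟩, zero_mul]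
    rw [setIntegral_congr_ae measurableSet_Ioc hcongr]
    simp only [MeasureTheory.integral_zero]
    have : R (1/2) = 0 := hzero _ hhm
    rw [this]
    simp
  · -- R κstar > 0, so κstar ∈ (0,1)
    have hk0 : (0:ℝ) < κstar := by
      rcases eq_or_lt_of_le hκ.1 with h | h
      · exfalso; rw [← h, hR0] at hRkpos; exact lt_irrefl _ hRkpos
      · exact h
    have hk1 : κstar < 1 := by
      rcases eq_or_lt_of_le hκ.2 with h | h
      · exfalso; rw [h, hR1] at hRkpos; exact lt_irrefl _ hRkpos
      · exact h
    have hcont : ContinuousOn R (Set.Icc 0 1) := hR_diff.continuousOn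
    have hder : ∀ x ∈ Set.Ioo (0:ℝ) 1, HasDerivAt R (deriv R x) x := by
      intro x hx
      exact ((hR_diff x ⟨hx.1.le, hx.2.le⟩).differentiableAt
        (Icc_mem_nhds hx.1 hx.2)).hasDerivAt
    -- deriv R nonneg on (0, κstar]
    have hdnn : ∀ x ∈ Set.Ioc (0:ℝ) κstar, 0 ≤ deriv R x := by
      intro x hx
      have hx1 : x ∈ Set.Ioo (0:ℝ) 1 := ⟨hx.1, lt_of_le_of_lt hx.2 hk1⟩
      rcases eq_or_lt_of_le hx.2 with hxe | hxl
      · -- x = κstar : local max, deriv = 0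
        have hmax : IsLocalMax R x := by
          have hmem : Set.Ioo (0:ℝ) 1 ∈ nhds x := Ioo_mem_nhds hx1.1 hx1.2
          filter_upwards [hmem] with y hy
          rw [hxe]
          exact hκ_max y ⟨hy.1.le, hy.2.le⟩
        rw [hmax.deriv_eq_zero]
      · have hslope := hR_concave.slope_le_deriv ⟨hx1.1.le, hx1.2.le⟩ hκ hxl
          ((hder x hx1).differentiableAt)
        have hs0 : 0 ≤ slope R x κstar := by
          rw [slope_def_field]
          apply div_nonneg _ (by linarith)
          have := hκ_max x ⟨hx1.1.le, hx1.2.le⟩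
          linarith
        linarith
    have hdnn' : ∀ x ∈ Set.Ioo (0:ℝ) κstar, 0 ≤ deriv R x :=
      fun x hx => hdnn x ⟨hx.1, hx.2.le⟩
    -- interval integrability of deriv R on subintervals of [0, κstar]
    have hI : IntervalIntegrable (deriv R) volume 0 κstar := by
      apply intervalIntegrable_deriv_of_nonneg (g := R)
      · rw [Set.uIcc_of_le hκ.1]
        exact hcont.mono (Set.Icc_subset_Icc le_rfl hκ.2)
      · rw [min_eq_left hκ.1, max_eq_right hκ.1]
        exact fun x hx => hder x ⟨hx.1, hx.2.trans hk1⟩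
      · rw [min_eq_left hκ.1, max_eq_right hκ.1]
        exact hdnn'
    have hIsub : ∀ a b : ℝ, 0 ≤ a → a ≤ b → b ≤ κstar →
        IntervalIntegrable (deriv R) volume a b := by
      intro a b ha hab hb
      apply hI.mono_set
      rw [Set.uIcc_of_le hab, Set.uIcc_of_le hκ.1]
      exact Set.Icc_subset_Icc ha hb
    -- FTC on subintervals
    have hFTC : ∀ a b : ℝ, 0 ≤ a → a ≤ b → b ≤ κstar →
        (∫ x in a..b, deriv R x) = R b - R a := by
      intro a b ha hab hb
      apply intervalIntegral.integral_eq_sub_of_hasDerivAt_of_le hab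
      · exact hcont.mono (Set.Icc_subset_Icc ha (hb.trans hk1.le))
      · exact fun x hx => hder x ⟨lt_of_le_of_lt ha hx.1,
          lt_of_lt_of_le hx.2 (hb.trans hk1.le)⟩
      · exact hIsub a b ha hab hb
    -- measurability of S
    have hScont : ContinuousOn S (Set.Ioo 0 1) := by
      have := hS_concave.continuousOn_interior
      rwa [interior_Icc] at this
    have hSsm : ∀ a b : ℝ, 0 ≤ a → b ≤ κstar →
        AEStronglyMeasurable S (volume.restrict (Set.Ioc a b)) := by
      intro a b ha hb
      have h1 : AEStronglyMeasurable S (volume.restrict (Set.Ioo 0 1)) :=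
        (hScont.aemeasurable measurableSet_Ioo).aestronglyMeasurable
      apply h1.mono_measure
      apply Measure.restrict_mono _ le_rfl
      intro x hx
      exact ⟨lt_of_le_of_lt ha hx.1, lt_of_le_of_lt (hx.2.trans hb) hk1⟩
    -- integrability of the product
    have hprod : ∀ a b : ℝ, 0 ≤ a → a ≤ b → b ≤ κstar →
        IntervalIntegrable (fun q => deriv R q * S q) volume a b := by
      intro a b ha hab hb
      rw [intervalIntegrable_iff_integrableOn_Ioc_of_le hab]
      have hbase : IntegrableOn (deriv R) (Set.Ioc a b) volume := by
        have := hIsub a b ha hab hb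
        rwa [intervalIntegrable_iff_integrableOn_Ioc_of_le hab] at this
      apply Integrable.mono' (hbase.mul_const (S 0))
      · exact ((measurable_deriv R).aestronglyMeasurable).mul (hSsm a b ha hb)
      · filter_upwards [ae_restrict_mem measurableSet_Ioc] with x hx
        have hxk : x ∈ Set.Ioc (0:ℝ) κstar :=
          ⟨lt_of_le_of_lt ha hx.1, hx.2.trans hb⟩
        have hxI : x ∈ Set.Icc (0:ℝ) 1 := ⟨hxk.1.le, hxk.2.trans hk1.le⟩
        have hd : 0 ≤ deriv R x := hdnn x hxk
        have hSx : 0 ≤ S x := hSnn x hxI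
        have hS0 : S x ≤ S 0 := hS_anti h0m hxI hxI.1
        rw [Real.norm_eq_abs, abs_of_nonneg (mul_nonneg hd hSx)]
        exact mul_le_mul_of_nonneg_left hS0 hd
    -- generic bound on a subinterval where S ≤ c
    have hpiece : ∀ a b c : ℝ, 0 ≤ a → a ≤ b → b ≤ κstar → 0 ≤ c →
        (∀ q ∈ Set.Ioo a b, S q ≤ c) →
        (∫ q in a..b, deriv R q * S q) ≤ (R b - R a) * c := by
      intro a b c ha hab hb hc hSc
      have h1 : (∫ q in a..b, deriv R q * S q) ≤ ∫ q in a..b, deriv R q * c := by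
        apply intervalIntegral.integral_mono_ae_restrict hab (hprod a b ha hab hb)
          ((hIsub a b ha hab hb).mul_const c)
        have hae : ∀ᵐ q ∂volume, q ∈ Set.Icc a b →
            deriv R q * S q ≤ deriv R q * c := by
          filter_upwards [hne a, hne b] with q hqa hqb hqm
          have hq : q ∈ Set.Ioo a b :=
            ⟨lt_of_le_of_ne hqm.1 (Ne.symm hqa), lt_of_le_of_ne hqm.2 hqb⟩
          have hd : 0 ≤ deriv R q :=
            hdnn' q ⟨lt_of_le_of_lt ha hq.1, lt_of_lt_of_le hq.2 hb⟩
          exact mul_le_mul_of_nonneg_left (hSc q hq) hd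
        exact (ae_restrict_iff' measurableSet_Icc).2 hae
      calc (∫ q in a..b, deriv R q * S q) ≤ ∫ q in a..b, deriv R q * c := h1
        _ = (∫ q in a..b, deriv R q) * c := intervalIntegral.integral_mul_const c _
        _ = (R b - R a) * c := by rw [hFTC a b ha hab hb]
    rcases le_or_gt κstar (1/2) with hcase | hcase
    · -- κstar ≤ 1/2
      have h := hpiece 0 κstar (2 * S (1/2)) le_rfl hκ.1 le_rfl (by linarith)
        (fun q hq => hS2 q ⟨hq.1.le, hq.2.le.trans hcase⟩)
      rw [hR0, sub_zero] at h
      nlinarith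
    · -- 1/2 < κstar
      have hsplit : (∫ q in (0:ℝ)..κstar, deriv R q * S q) =
          (∫ q in (0:ℝ)..(1/2:ℝ), deriv R q * S q) +
          (∫ q in (1/2:ℝ)..κstar, deriv R q * S q) := by
        rw [intervalIntegral.integral_add_adjacent_intervals
          (hprod 0 (1/2) le_rfl (by norm_num) hcase.le)
          (hprod (1/2) κstar (by norm_num) hcase.le le_rfl)]
      have h1 := hpiece 0 (1/2) (2 * S (1/2)) le_rfl (by norm_num) hcase.le
        (by linarith) (fun q hq => hS2 q ⟨hq.1.le, hq.2.le⟩)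
      rw [hR0, sub_zero] at h1
      have h2 := hpiece (1/2) κstar (S (1/2)) (by norm_num) hcase.le le_rfl hShalf
        (fun q hq => hS_anti hhm ⟨by linarith [hq.1], (hq.2.trans hk1).le⟩ hq.1.le)
      rw [hsplit]
      nlinarith
end

section
/- Let R : ℝ → ℝ be differentiable and concave on [0,1] with R(0) = R(1) = 0, and let κ* ∈ [0,1] be a point where R attains its maximum over [0,1]. Set σ = min{κ*, 1/2}. Then R(κ*)·(1−κ*) + ∫_0^{κ*} R(q) dq ≤ 2 · R(σ)·(1−σ). (That is, for the linear status function S(t) = 1−t, the absolute threshold mechanism with a single quantile threshold at min{κ*, 1/2} achieves a 2-approximation to the optimal expected per-user contribution.) -/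
open MeasureTheory intervalIntegral

theorem single_threshold_two_approx_linear
    (R : ℝ → ℝ)
    (hR_diff : DifferentiableOn ℝ R (Set.Icc 0 1))
    (hR_concave : ConcaveOn ℝ (Set.Icc 0 1) R)
    (hR0 : R 0 = 0) (hR1 : R 1 = 0)
    (κstar : ℝ) (hκ : κstar ∈ Set.Icc (0:ℝ) 1)
    (hκ_max : ∀ q ∈ Set.Icc (0:ℝ) 1, R q ≤ R κstar)
    (σ : ℝ) (hσ : σ = min κstar (1/2)) :
    R κstar * (1 - κstar) + (∫ q in (0:ℝ)..κstar, R q) ≤ 2 * R σ * (1 - σ) := by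
  obtain ⟨hκ0, hκ1⟩ := hκ
  have hRcont : ContinuousOn R (Set.Icc 0 1) := hR_diff.continuousOn
  have hsub : Set.Icc (0:ℝ) κstar ⊆ Set.Icc 0 1 := Set.Icc_subset_Icc le_rfl hκ1
  have hRint : IntervalIntegrable R volume 0 κstar :=
    (hRcont.mono hsub).intervalIntegrable_of_Icc hκ0
  have hRκ_nonneg : 0 ≤ R κstar := hR0 ▸ hκ_max 0 ⟨le_rfl, zero_le_one⟩
  rcases le_or_gt κstar (1/2) with hcase | hcase
  · -- σ = κstar
    rw [hσ, min_eq_left hcase]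
    have hmono : ∫ q in (0:ℝ)..κstar, R q ≤ ∫ q in (0:ℝ)..κstar, R κstar := by
      apply intervalIntegral.integral_mono_on hκ0 hRint intervalIntegrable_const
      intro q hq
      exact hκ_max q (hsub hq)
    have : ∫ q in (0:ℝ)..κstar, R κstar = κstar * R κstar := by
      simp [mul_comm]
    rw [this] at hmono
    nlinarith
  · -- σ = 1/2
    rw [hσ, min_eq_right hcase.le]
    have hhalf : (1/2 : ℝ) ∈ Set.Icc (0:ℝ) 1 := by norm_num
    set d := derivWithin R (Set.Icc 0 1) (1/2) with hd
    have tangent : ∀ q ∈ Set.Icc (0:ℝ) 1, R q ≤ R (1/2) + d * (q - 1/2) := by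
      intro q hq
      rcases lt_trichotomy q (1/2) with h | h | h
      · have := hR_concave.derivWithin_le_slope hq hhalf h (hR_diff _ hhalf)
        rw [slope_def_field, le_div_iff₀ (by linarith)] at this
        · nlinarith [this]
      · simp [h]
      · have := hR_concave.slope_le_derivWithin hhalf hq h (hR_diff _ hhalf)
        rw [slope_def_field, div_le_iff₀ (by linarith)] at this
        · nlinarith [this]
    have hd_nonneg : 0 ≤ d := by
      have h1 := tangent κstar ⟨hκ0, hκ1⟩
      have h2 := hκ_max (1/2) hhalf
      nlinarith
    have hint_le : ∫ q in (0:ℝ)..κstar, R q ≤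
        κstar * R (1/2) + d * (κstar^2/2 - κstar/2) := by
      have h1 : ∫ q in (0:ℝ)..κstar, (R (1/2) + d * (q - 1/2)) =
          κstar * R (1/2) + d * (κstar^2/2 - κstar/2) := by
        rw [intervalIntegral.integral_add intervalIntegrable_const]
        · rw [intervalIntegral.integral_const_mul]
          have : ∫ q in (0:ℝ)..κstar, (q - 1/2) =
              (∫ q in (0:ℝ)..κstar, q) - ∫ q in (0:ℝ)..κstar, (1/2:ℝ) := by
            rw [intervalIntegral.integral_sub intervalIntegrable_id intervalIntegrable_const]
          rw [this, integral_id, intervalIntegral.integral_const,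
            intervalIntegral.integral_const]
          simp [smul_eq_mul]
          ring_nf
          tauto
        · exact (intervalIntegrable_id.sub intervalIntegrable_const).const_mul d
      rw [← h1]
      apply intervalIntegral.integral_mono_on hκ0 hRint
      · exact (intervalIntegrable_const.add
          ((intervalIntegrable_id.sub intervalIntegrable_const).const_mul d))
      · intro q hq
        exact tangent q (hsub hq)
    have hκ_tan : R κstar ≤ R (1/2) + d * (κstar - 1/2) := tangent κstar ⟨hκ0, hκ1⟩
    have key : R κstar * (1 - κstar) + (∫ q in (0:ℝ)..κstar, R q) ≤
        R (1/2) + d * (κstar - 1/2) * (1 - κstar)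
          + (κstar * R (1/2) + d * (κstar^2/2 - κstar/2)) - κstar * R (1/2)
          - d * (κstar - 1/2) * (1 - κstar) + d * (κstar - 1/2) * (1 - κstar) := by
      nlinarith [hint_le, hκ_tan, hκ1]
    nlinarith [key, hd_nonneg, sq_nonneg (1 - κstar)]
end

section
/- Let R : ℝ → ℝ be differentiable and concave on [0,1] with R(0) = R(1) = 0, and let κ* ∈ [0,1] be a point where R attains its maximum over [0,1]. Let S : ℝ → ℝ be differentiable, concave, and nonincreasing on [0,1] with S(1) = 0. Set σ = min{κ*, 1/2}. Then ∫_0^{κ*} R'(q)·S(q) dq ≤ 3 · R(σ)·S(σ). (That is, for concave status functions, the absolute threshold mechanism with a single quantile threshold at min{κ*, 1/2} achieves a 3-approximation to the optimal expected per-user contribution.) -/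
open MeasureTheory intervalIntegral

theorem single_threshold_three_approx_concave
    (R : ℝ → ℝ)
    (hR_diff : DifferentiableOn ℝ R (Set.Icc 0 1))
    (hR_concave : ConcaveOn ℝ (Set.Icc 0 1) R)
    (hR0 : R 0 = 0) (hR1 : R 1 = 0)
    (κstar : ℝ) (hκ : κstar ∈ Set.Icc (0:ℝ) 1)
    (hκ_max : ∀ q ∈ Set.Icc (0:ℝ) 1, R q ≤ R κstar)
    (S : ℝ → ℝ)
    (hS_diff : DifferentiableOn ℝ S (Set.Icc 0 1))
    (hS_concave : ConcaveOn ℝ (Set.Icc 0 1) S)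
    (hS_anti : AntitoneOn S (Set.Icc 0 1))
    (hS1 : S 1 = 0)
    (σ : ℝ) (hσ : σ = min κstar (1/2)) :
    (∫ q in (0:ℝ)..κstar, deriv R q * S q) ≤ 3 * R σ * S σ := by
  obtain ⟨hκ0, hκ1⟩ := hκ
  have hσ0 : 0 ≤ σ := by rw [hσ]; positivity
  have hσκ : σ ≤ κstar := by rw [hσ]; exact min_le_left _ _
  have hσhalf : σ ≤ 1/2 := by rw [hσ]; exact min_le_right _ _
  have hσ1 : σ ≤ 1 := hσhalf.trans (by norm_num)
  have hσmem : σ ∈ Set.Icc (0:ℝ) 1 := ⟨hσ0, hσ1⟩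
  have h0mem : (0:ℝ) ∈ Set.Icc (0:ℝ) 1 := by constructor <;> norm_num
  have h1mem : (1:ℝ) ∈ Set.Icc (0:ℝ) 1 := by constructor <;> norm_num
  -- nonnegativity of R on [0,1]
  have hRnn : ∀ q ∈ Set.Icc (0:ℝ) 1, 0 ≤ R q := by
    intro q hq
    have := hR_concave.2 h0mem h1mem (show (0:ℝ) ≤ 1 - q by linarith [hq.2])
      (show (0:ℝ) ≤ q from hq.1) (show (1-q) + q = 1 by ring)
    simpa [hR0, hR1] using this
  -- nonnegativity of S on [0,1]
  have hSnn : ∀ q ∈ Set.Icc (0:ℝ) 1, 0 ≤ S q := by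
    intro q hq
    have := hS_anti hq h1mem hq.2
    simpa [hS1] using this
  have hRσnn : 0 ≤ R σ := hRnn σ hσmem
  have hSσnn : 0 ≤ S σ := hSnn σ hσmem
  have hRHS : 0 ≤ 3 * R σ * S σ := by positivity
  by_cases hInt : IntervalIntegrable (fun q => deriv R q * S q) volume 0 κstar
  swap
  · rw [intervalIntegral.integral_undef hInt]; exact hRHS
  -- S 0 ≤ 2 * S σ
  have hS0le : S 0 ≤ 2 * S σ := by
    have := hS_concave.2 h0mem h1mem (show (0:ℝ) ≤ 1 - σ by linarith)
      (show (0:ℝ) ≤ σ from hσ0) (show (1-σ) + σ = 1 by ring)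
    have h' : (1 - σ) * S 0 ≤ S σ := by
      simpa [hS1, smul_eq_mul] using this
    have hS0nn : 0 ≤ S 0 := hSnn 0 h0mem
    nlinarith
  -- R κstar ≤ 2 * R σ
  have hRκle : R κstar ≤ 2 * R σ := by
    rcases eq_or_lt_of_le hσκ with h | h
    · rw [← h]; linarith
    · -- σ < κstar, hence σ = 1/2
      have hσeq : σ = 1/2 := by
        rcases min_cases κstar (1/2) with ⟨h1, h2⟩ | ⟨h1, h2⟩
        · exfalso; rw [hσ, h1] at h; exact lt_irrefl _ h
        · rw [hσ, h1]
      have hκpos : 0 < κstar := lt_of_le_of_lt hσ0 h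
      have hb1 : (1:ℝ)/(2*κstar) ≤ 1 := by
        rw [div_le_one (by positivity)]; linarith
      have hb0 : (0:ℝ) ≤ 1/(2*κstar) := by positivity
      have hcomb := hR_concave.2 h0mem ⟨hκ0, hκ1⟩
        (show (0:ℝ) ≤ 1 - 1/(2*κstar) by linarith)
        (show (0:ℝ) ≤ 1/(2*κstar) from hb0)
        (show (1 - 1/(2*κstar)) + 1/(2*κstar) = 1 by ring)
      have hpt : (1 - 1/(2*κstar)) • (0:ℝ) + (1/(2*κstar)) • κstar = σ := by
        rw [hσeq]; field_simp; ring_nf; field_simp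
      rw [hpt] at hcomb
      have h' : (1/(2*κstar)) * R κstar ≤ R σ := by
        simpa [hR0, smul_eq_mul] using hcomb
      have hhalf : (1:ℝ)/2 ≤ 1/(2*κstar) := by
        rw [div_le_div_iff₀ (by norm_num) (by positivity)]; nlinarith
      have hRκnn : 0 ≤ R κstar := hRnn κstar ⟨hκ0, hκ1⟩
      nlinarith
  -- the within-derivative
  set D := derivWithin R (Set.Icc 0 1) with hD
  have hUD : UniqueDiffOn ℝ (Set.Icc (0:ℝ) 1) := uniqueDiffOn_Icc (by norm_num)
  have hD_anti : AntitoneOn D (Set.Icc 0 1) := hR_concave.antitoneOn_derivWithin hR_diff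
  have hD_int : ∀ a b : ℝ, 0 ≤ a → a ≤ b → b ≤ 1 →
      IntervalIntegrable D volume a b := by
    intro a b ha hab hb
    exact (hD_anti.mono (by rw [Set.uIcc_of_le hab]; exact Set.Icc_subset_Icc ha hb)).intervalIntegrable
  have hDeq : ∀ x ∈ Set.Ioo (0:ℝ) 1, DifferentiableAt ℝ R x ∧ deriv R x = D x := by
    intro x hx
    have hxI : x ∈ Set.Icc (0:ℝ) 1 := Set.Ioo_subset_Icc_self hx
    have hdiff : DifferentiableAt ℝ R x :=
      (hR_diff x hxI).differentiableAt (Icc_mem_nhds hx.1 hx.2)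
    exact ⟨hdiff, (hdiff.derivWithin (hUD x hxI)).symm⟩
  have hFTC : ∀ a b : ℝ, 0 ≤ a → a ≤ b → b ≤ 1 →
      (∫ q in a..b, D q) = R b - R a := by
    intro a b ha hab hb
    apply intervalIntegral.integral_eq_sub_of_hasDerivAt_of_le hab
      (hR_diff.continuousOn.mono (Set.Icc_subset_Icc ha hb))
    · intro x hx
      have hxI : x ∈ Set.Ioo (0:ℝ) 1 := ⟨lt_of_le_of_lt ha hx.1, lt_of_lt_of_le hx.2 hb⟩
      obtain ⟨hdiff, heq⟩ := hDeq x hxI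
      rw [← heq]; exact hdiff.hasDerivAt
    · exact hD_int a b ha hab hb
  have hDnn : ∀ x ∈ Set.Icc (0:ℝ) 1, x < κstar → 0 ≤ D x := by
    intro x hx hlt
    have hs := hR_concave.slope_le_derivWithin hx ⟨hκ0, hκ1⟩ hlt (hR_diff x hx)
    have : 0 ≤ slope R x κstar := by
      rw [slope_def_field]
      exact div_nonneg (by linarith [hκ_max x hx]) (by linarith)
    linarith
  -- split the integral
  have hInt1 : IntervalIntegrable (fun q => deriv R q * S q) volume 0 σ :=
    hInt.mono_set (by rw [Set.uIcc_of_le hσ0, Set.uIcc_of_le hκ0]; exact Set.Icc_subset_Icc le_rfl hσκ)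
  have hInt2 : IntervalIntegrable (fun q => deriv R q * S q) volume σ κstar :=
    hInt.mono_set (by rw [Set.uIcc_of_le hσκ, Set.uIcc_of_le hκ0]; exact Set.Icc_subset_Icc hσ0 le_rfl)
  have hsplit : (∫ q in (0:ℝ)..κstar, deriv R q * S q)
      = (∫ q in (0:ℝ)..σ, deriv R q * S q) + ∫ q in σ..κstar, deriv R q * S q :=
    (intervalIntegral.integral_add_adjacent_intervals hInt1 hInt2).symm
  -- helper for ae bounds on Icc from pointwise bounds on Ioo
  have hae : ∀ (a b : ℝ) (f g : ℝ → ℝ), (∀ x ∈ Set.Ioo a b, f x ≤ g x) →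
      f ≤ᵐ[volume.restrict (Set.Icc a b)] g := by
    intro a b f g h
    rw [← Measure.restrict_congr_set Ioo_ae_eq_Icc]
    exact (ae_restrict_iff' measurableSet_Ioo).mpr (ae_of_all _ h)
  -- bound on [0, σ]
  have hb1 : (∫ q in (0:ℝ)..σ, deriv R q * S q) ≤ R σ * S 0 := by
    have hIg : IntervalIntegrable (fun q => D q * S 0) volume 0 σ :=
      (hD_int 0 σ le_rfl hσ0 hσ1).mul_const _
    have hmono := intervalIntegral.integral_mono_ae_restrict hσ0 hInt1 hIg
      (hae 0 σ _ _ ?_)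
    · calc (∫ q in (0:ℝ)..σ, deriv R q * S q) ≤ ∫ q in (0:ℝ)..σ, D q * S 0 := hmono
        _ = (∫ q in (0:ℝ)..σ, D q) * S 0 := intervalIntegral.integral_mul_const _ _
        _ = (R σ - R 0) * S 0 := by rw [hFTC 0 σ le_rfl hσ0 hσ1]
        _ = R σ * S 0 := by rw [hR0]; ring
    · intro x hx
      have hxI : x ∈ Set.Ioo (0:ℝ) 1 := ⟨hx.1, lt_of_lt_of_le hx.2 (by linarith)⟩
      have hxIcc : x ∈ Set.Icc (0:ℝ) 1 := Set.Ioo_subset_Icc_self hxI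
      obtain ⟨_, heq⟩ := hDeq x hxI
      rw [heq]
      have hDx : 0 ≤ D x := hDnn x hxIcc (lt_of_lt_of_le hx.2 hσκ)
      have hSx : S x ≤ S 0 := hS_anti h0mem hxIcc hx.1.le
      exact mul_le_mul_of_nonneg_left hSx hDx
  -- bound on [σ, κstar]
  have hb2 : (∫ q in σ..κstar, deriv R q * S q) ≤ (R κstar - R σ) * S σ := by
    have hIg : IntervalIntegrable (fun q => D q * S σ) volume σ κstar :=
      (hD_int σ κstar hσ0 hσκ hκ1).mul_const _
    have hmono := intervalIntegral.integral_mono_ae_restrict hσκ hInt2 hIg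
      (hae σ κstar _ _ ?_)
    · calc (∫ q in σ..κstar, deriv R q * S q) ≤ ∫ q in σ..κstar, D q * S σ := hmono
        _ = (∫ q in σ..κstar, D q) * S σ := intervalIntegral.integral_mul_const _ _
        _ = (R κstar - R σ) * S σ := by rw [hFTC σ κstar hσ0 hσκ hκ1]
    · intro x hx
      have hxI : x ∈ Set.Ioo (0:ℝ) 1 := ⟨lt_of_le_of_lt hσ0 hx.1, lt_of_lt_of_le hx.2 hκ1⟩
      have hxIcc : x ∈ Set.Icc (0:ℝ) 1 := Set.Ioo_subset_Icc_self hxI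
      obtain ⟨_, heq⟩ := hDeq x hxI
      rw [heq]
      have hDx : 0 ≤ D x := hDnn x hxIcc hx.2
      have hSx : S x ≤ S σ := hS_anti hσmem hxIcc hx.1.le
      exact mul_le_mul_of_nonneg_left hSx hDx
  rw [hsplit]
  have h1 : R σ * S 0 ≤ R σ * (2 * S σ) := mul_le_mul_of_nonneg_left hS0le hRσnn
  have h2 : (R κstar - R σ) * S σ ≤ R σ * S σ :=
    mul_le_mul_of_nonneg_right (by linarith) hSσnn
  nlinarith [hb1, hb2]
end

section
/- For H > 0 define R_H(q) = q·(1−q)/(1/H + q) for q ∈ [0,1] and κ*_H = (√(1+H) − 1)/H. Then: (a) κ*_H is the unique maximizer of R_H on [0,1]; (b) κ*_H → 0 as H → ∞; (c) R_H(κ*_H)·(1−κ*_H) + ∫_0^{κ*_H} R_H(q) dq → 1 as H → ∞; and (d) (1/2)·R_H(1/2) → 1/4 as H → ∞. Consequently the ratio of the quantities in (c) and (d) tends to 4, so the 4-approximation factor of the median threshold mechanism for linear status is tight. -/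
open MeasureTheory intervalIntegral Filter

/-- The revenue function of the ability distribution with CDF
`F_H(v) = ((H+1)/H) · v/(v+1)` on `[0,H]`. -/
noncomputable def RH (H : ℝ) (q : ℝ) : ℝ := q * (1 - q) / (1 / H + q)

/-- The monopoly quantile of the above distribution. -/
noncomputable def κH (H : ℝ) : ℝ := (Real.sqrt (1 + H) - 1) / H

lemma sqrt_sq' {H : ℝ} (hH : 0 < H) : (Real.sqrt (1+H))^2 = 1+H :=
  Real.sq_sqrt (by linarith)

lemma sqrt_gt_one {H : ℝ} (hH : 0 < H) : 1 < Real.sqrt (1+H) := by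
  have h := sqrt_sq' hH
  nlinarith [Real.sqrt_nonneg (1+H)]

lemma kappa_eq {H : ℝ} (hH : 0 < H) : κH H = 1 / (Real.sqrt (1+H) + 1) := by
  set s := Real.sqrt (1+H) with hs
  have h2 : s^2 = 1+H := sqrt_sq' hH
  have h1 : 1 < s := sqrt_gt_one hH
  have hHe : H = (s-1)*(s+1) := by nlinarith
  rw [κH, ← hs, hHe]
  have ha : s - 1 ≠ 0 := by linarith
  have hb : s + 1 ≠ 0 := by linarith
  field_simp

lemma RH_kappa {H : ℝ} (hH : 0 < H) :
    RH H (κH H) = (Real.sqrt (1+H) - 1) / (Real.sqrt (1+H) + 1) := by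
  set s := Real.sqrt (1+H) with hs
  have h2 : s^2 = 1+H := sqrt_sq' hH
  have h1 : 1 < s := sqrt_gt_one hH
  rw [RH, kappa_eq hH, ← hs, show H = (s-1)*(s+1) by nlinarith]
  have hs1 : s + 1 ≠ 0 := by linarith
  have hsm : s - 1 ≠ 0 := by linarith
  have hden : 1 / ((s-1)*(s+1)) + 1/(s+1) = s / ((s-1)*(s+1)) := by
    field_simp; ring
  rw [hden]
  have hsne : s ≠ 0 := by linarith
  field_simp
  ring

lemma RH_lt {H q : ℝ} (hH : 0 < H) (hq0 : 0 ≤ q) (hne : q ≠ κH H) :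
    RH H q < RH H (κH H) := by
  set s := Real.sqrt (1+H) with hs
  have h2 : s^2 = 1+H := sqrt_sq' hH
  have h1 : 1 < s := sqrt_gt_one hH
  have hHe : H = (s-1)*(s+1) := by nlinarith
  have hden : 0 < 1/H + q := by
    have : 0 < 1/H := by positivity
    linarith
  have ha : s - 1 ≠ 0 := by linarith
  have hb : s + 1 ≠ 0 := by linarith
  have key : (RH H (κH H) - RH H q) * (1/H + q) = (q - κH H)^2 := by
    rw [RH_kappa hH, RH, sub_mul, div_mul_cancel₀ _ (ne_of_gt hden), kappa_eq hH, ← hs, hHe]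
    field_simp
    ring
  have hsq : 0 < (q - κH H)^2 := by
    have : q - κH H ≠ 0 := sub_ne_zero.mpr hne
    positivity
  nlinarith [key, hden, hsq]

lemma kappa_mem {H : ℝ} (hH : 0 < H) : κH H ∈ Set.Icc (0:ℝ) 1 := by
  have h2 : (Real.sqrt (1+H))^2 = 1+H := sqrt_sq' hH
  have h1 : 1 < Real.sqrt (1+H) := sqrt_gt_one hH
  rw [kappa_eq hH]
  constructor
  · positivity
  · rw [div_le_one (by linarith)]; linarith

lemma sqrt_tendsto_atTop : Tendsto Real.sqrt atTop atTop := by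
  rw [tendsto_atTop_atTop]
  intro b
  refine ⟨(max b 0)^2, fun x hx => ?_⟩
  calc b ≤ max b 0 := le_max_left _ _
    _ = Real.sqrt ((max b 0)^2) := (Real.sqrt_sq (le_max_right _ _)).symm
    _ ≤ Real.sqrt x := Real.sqrt_le_sqrt hx

lemma sqrt_one_add_tendsto : Tendsto (fun H : ℝ => Real.sqrt (1+H)) atTop atTop :=
  sqrt_tendsto_atTop.comp (tendsto_atTop_add_const_left _ 1 tendsto_id)

lemma kappa_tendsto : Tendsto κH atTop (nhds 0) := by
  have h : Tendsto (fun H : ℝ => 1 / (Real.sqrt (1+H) + 1)) atTop (nhds 0) :=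
    Tendsto.div_atTop tendsto_const_nhds
      (tendsto_atTop_add_const_right _ 1 sqrt_one_add_tendsto)
  exact h.congr' ((eventually_gt_atTop 0).mono fun H hH => (kappa_eq hH).symm)

lemma integral_RH {H : ℝ} (hH : 0 < H) :
    ∫ q in (0:ℝ)..(κH H), RH H q
      = -(κH H)^2/2 + (1+1/H)*(κH H)
        - (1/H*(1+1/H)) * Real.log (Real.sqrt (1+H)) := by
  have hκ0 : 0 ≤ κH H := (kappa_mem hH).1
  have hIcc : Set.uIcc (0:ℝ) (κH H) = Set.Icc 0 (κH H) := Set.uIcc_of_le hκ0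
  have hpos : ∀ q ∈ Set.Icc (0:ℝ) (κH H), 0 < 1/H + q := by
    intro q hq
    have : 0 < 1/H := by positivity
    have := hq.1
    linarith
  set F : ℝ → ℝ := fun q => -q^2/2 + (1+1/H)*q - (1/H*(1+1/H))*Real.log (1/H + q)
    with hF
  have hderiv : ∀ q ∈ Set.uIcc (0:ℝ) (κH H), HasDerivAt F (RH H q) q := by
    intro q hq
    rw [hIcc] at hq
    have hne : 1/H + q ≠ 0 := ne_of_gt (hpos q hq)
    have h1 : HasDerivAt (fun q : ℝ => -q^2/2) (-q) q := by
      have := ((hasDerivAt_pow 2 q).div_const 2).neg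
      rw [show (fun q : ℝ => -q^2/2) = -fun x : ℝ => x^2/2 by funext x; simp [neg_div]]
      simpa using this
    have h2 : HasDerivAt (fun q : ℝ => (1+1/H)*q) (1+1/H) q := by
      simpa using (hasDerivAt_id q).const_mul (1+1/H)
    have h3 : HasDerivAt (fun q : ℝ => Real.log (1/H + q)) (1/(1/H+q)) q := by
      have := ((hasDerivAt_id q).const_add (1/H)).log hne
      simpa using this
    have h4 := (h1.add h2).sub (h3.const_mul (1/H*(1+1/H)))
    refine h4.congr_deriv ?_
    rw [RH]
    have hne2 : 1 + q*H ≠ 0 := by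
      have h5 := hpos q hq
      have : 1 + q*H = H * (1/H + q) := by field_simp
      rw [this]
      positivity
    field_simp [hne2]
    ring
  have hint : IntervalIntegrable (RH H) MeasureTheory.volume 0 (κH H) := by
    apply ContinuousOn.intervalIntegrable
    rw [hIcc]
    apply ContinuousOn.div
    · exact (by continuity : Continuous fun q : ℝ => q * (1-q)).continuousOn
    · exact (by continuity : Continuous fun q : ℝ => 1/H + q).continuousOn
    · exact fun x hx => ne_of_gt (hpos x hx)
  rw [integral_eq_sub_of_hasDerivAt hderiv hint, hF]
  have hsne : Real.sqrt (1+H) ≠ 0 := ne_of_gt (Real.sqrt_pos.2 (by linarith))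
  have hlog : Real.log (1/H + κH H) = Real.log (Real.sqrt (1+H)) + Real.log (1/H) := by
    have h4 : 1/H + κH H = Real.sqrt (1+H) * (1/H) := by rw [κH]; field_simp; ring
    rw [h4, Real.log_mul hsne (by positivity)]
  simp only [hlog]
  simp [Real.log_one]
  ring

noncomputable def G (s : ℝ) : ℝ :=
  (1 - 2/(s+1)) * (1 - 1/(s+1)) +
    (-(1/(s+1))^2/2 + (1 + 1/(s^2-1))*(1/(s+1))
      - Real.log s / s * (s/(s^2-1)) * (1 + 1/(s^2-1)))

lemma G_tendsto : Tendsto G atTop (nhds 1) := by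
  have hA : Tendsto (fun s : ℝ => 2/(s+1)) atTop (nhds 0) :=
    Tendsto.div_atTop tendsto_const_nhds (tendsto_atTop_add_const_right _ 1 tendsto_id)
  have hB : Tendsto (fun s : ℝ => 1/(s+1)) atTop (nhds 0) :=
    Tendsto.div_atTop tendsto_const_nhds (tendsto_atTop_add_const_right _ 1 tendsto_id)
  have hsq : Tendsto (fun s : ℝ => s^2 - 1) atTop atTop := by
    have := tendsto_atTop_add_const_right atTop (-1) (tendsto_pow_atTop (n := 2) (by norm_num) : Tendsto (fun x : ℝ => x^2) atTop atTop)
    exact this.congr fun x => by ring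
  have hC : Tendsto (fun s : ℝ => 1/(s^2-1)) atTop (nhds 0) :=
    Tendsto.div_atTop tendsto_const_nhds hsq
  have hD : Tendsto (fun s : ℝ => Real.log s / s) atTop (nhds 0) := by
    simpa using Real.isLittleO_log_id_atTop.tendsto_div_nhds_zero
  have hE : Tendsto (fun s : ℝ => s/(s^2-1)) atTop (nhds 0) := by
    have hden : Tendsto (fun s : ℝ => s - 1/s) atTop atTop := by
      apply tendsto_atTop_mono' atTop
        (show ∀ᶠ s : ℝ in atTop, s - 1 ≤ s - 1/s by
          filter_upwards [eventually_ge_atTop (1:ℝ)] with s hs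
          have h1 : (0:ℝ) < s := by linarith
          have : 1/s ≤ 1 := by rw [div_le_one h1]; linarith
          linarith)
      exact tendsto_atTop_add_const_right _ (-1) tendsto_id
    have h0 : Tendsto (fun s : ℝ => 1/(s - 1/s)) atTop (nhds 0) :=
      Tendsto.div_atTop tendsto_const_nhds hden
    apply h0.congr'
    filter_upwards [eventually_gt_atTop (1:ℝ)] with s hs
    have h1 : s ≠ 0 := by linarith
    have h2 : s^2 - 1 ≠ 0 := by nlinarith
    have h3 : s - 1/s ≠ 0 := by
      intro h
      apply h2
      field_simp at h
      nlinarith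
    rw [div_eq_div_iff h3 h2]
    field_simp
  have key : Tendsto (fun s : ℝ =>
      (1 - 2/(s+1)) * (1 - 1/(s+1)) +
        (-(1/(s+1))^2/2 + (1 + 1/(s^2-1))*(1/(s+1))
          - Real.log s / s * (s/(s^2-1)) * (1 + 1/(s^2-1)))) atTop
      (nhds (((1:ℝ)-0)*(1-0) + (-(0:ℝ)^2/2 + (1+0)*0 - 0*0*(1+0)))) :=
    ((tendsto_const_nhds.sub hA).mul (tendsto_const_nhds.sub hB)).add
      ((((hB.pow 2).neg.div_const 2).add ((tendsto_const_nhds.add hC).mul hB)).sub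
        ((hD.mul hE).mul (tendsto_const_nhds.add hC)))
  have hval : ((1:ℝ)-0)*(1-0) + (-(0:ℝ)^2/2 + (1+0)*0 - 0*0*(1+0)) = 1 := by norm_num
  rw [hval] at key
  exact key

lemma E_tendsto : Tendsto
    (fun H : ℝ => RH H (κH H) * (1 - κH H) + ∫ q in (0:ℝ)..(κH H), RH H q)
    atTop (nhds 1) := by
  refine (G_tendsto.comp sqrt_one_add_tendsto).congr' ?_
  filter_upwards [eventually_gt_atTop (0:ℝ)] with H hH
  rw [Function.comp_apply, integral_RH hH, RH_kappa hH, kappa_eq hH]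
  set s := Real.sqrt (1+H) with hs
  have h2 : s^2 = 1+H := sqrt_sq' hH
  have h1 : 1 < s := sqrt_gt_one hH
  have hHe : H = s^2 - 1 := by linarith
  rw [G, hHe]
  have ha : s - 1 ≠ 0 := by linarith
  have hb : s + 1 ≠ 0 := by linarith
  have hc : s^2 - 1 ≠ 0 := by nlinarith
  have hd : s ≠ 0 := by linarith
  field_simp
  ring

lemma median_tendsto : Tendsto (fun H : ℝ => (1/2) * RH H (1/2)) atTop (nhds (1/4)) := by
  have hinv : Tendsto (fun H : ℝ => 1/H) atTop (nhds 0) :=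
    tendsto_inv_atTop_zero.congr fun x => (one_div x).symm
  have hden : Tendsto (fun H : ℝ => 1/H + 1/2) atTop (nhds (0 + 1/2)) :=
    hinv.add tendsto_const_nhds
  have key : Tendsto (fun H : ℝ => (1/2) * ((1/2) * (1 - 1/2) / (1/H + 1/2)))
      atTop (nhds ((1/2) * ((1/2) * (1 - 1/2) / (0 + 1/2)))) :=
    tendsto_const_nhds.mul (Tendsto.div tendsto_const_nhds hden (by norm_num))
  have hval : ((1:ℝ)/2) * ((1/2) * (1 - 1/2) / (0 + 1/2)) = 1/4 := by norm_num
  rw [hval] at key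
  exact key

theorem median_mechanism_four_approx_tight :
    (∀ H : ℝ, 0 < H →
      κH H ∈ Set.Icc (0:ℝ) 1 ∧
      (∀ q ∈ Set.Icc (0:ℝ) 1, q ≠ κH H → RH H q < RH H (κH H))) ∧
    Tendsto κH atTop (nhds 0) ∧
    Tendsto (fun H : ℝ => RH H (κH H) * (1 - κH H) + ∫ q in (0:ℝ)..(κH H), RH H q)
      atTop (nhds 1) ∧
    Tendsto (fun H : ℝ => (1/2) * RH H (1/2)) atTop (nhds (1/4)) := by
  refine ⟨fun H hH => ⟨kappa_mem hH, fun q hq hne => RH_lt hH hq.1 hne⟩,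
    kappa_tendsto, E_tendsto, median_tendsto⟩
end

section
/- Let v : [0,1] → ℝ be continuous and strictly decreasing with v(1) = 0 and v(0) > 0, and let S : [0,1] → ℝ be continuous and strictly decreasing with S(1) = 0. Let 0 = θ_0 < θ_1 < θ_2 < … < θ_m be contribution thresholds, and adopt the convention κ_0 = 1. Then there exist a unique integer p with 0 ≤ p ≤ m and unique quantiles 1 > κ_1 > κ_2 > … > κ_p > 0 such that v(κ_t)·(S(κ_t) − S(κ_{t−1})) = θ_t − θ_{t−1} for every t = 1, …, p, and, if p < m, additionally v(0)·(S(0) − S(κ_p)) ≤ θ_{p+1} − θ_p. -/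
/-- The conditions characterizing the symmetric equilibrium of an absolute threshold
mechanism: quantile thresholds `1 = κ 0 > κ 1 > … > κ p > 0` such that the user at each
boundary quantile is indifferent between adjacent badges, and, if `p < m`, the
highest-ability user does not prefer to reach threshold `p+1`. -/
def EqmQuantileThresholds (v S : ℝ → ℝ) (m : ℕ) (θ : ℕ → ℝ) (p : ℕ) (κ : ℕ → ℝ) : Prop :=
  p ≤ m ∧
  κ 0 = 1 ∧
  (∀ t, 1 ≤ t → t ≤ p → 0 < κ t) ∧
  (∀ t, 1 ≤ t → t ≤ p → κ t < κ (t - 1)) ∧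
  (∀ t, 1 ≤ t → t ≤ p → v (κ t) * (S (κ t) - S (κ (t - 1))) = θ t - θ (t - 1)) ∧
  (p < m → v 0 * (S 0 - S (κ p)) ≤ θ (p + 1) - θ p)

open Set

section Aux

variable {v S : ℝ → ℝ}

lemma v_nonneg (hv_anti : StrictAntiOn v (Icc 0 1)) (hv1 : v 1 = 0)
    {y : ℝ} (hy : y ∈ Icc (0:ℝ) 1) : 0 ≤ v y := by
  rcases eq_or_lt_of_le hy.2 with h | h
  · rw [h, hv1]
  · have h1 : (1:ℝ) ∈ Icc (0:ℝ) 1 := ⟨by norm_num, le_refl 1⟩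
    have := hv_anti hy h1 h
    rw [hv1] at this
    exact le_of_lt this

lemma gStrictAnti (hv_anti : StrictAntiOn v (Icc 0 1)) (hv1 : v 1 = 0)
    (hS_anti : StrictAntiOn S (Icc 0 1)) {c : ℝ} (hc : c ∈ Ioc (0:ℝ) 1) :
    StrictAntiOn (fun q => v q * (S q - S c)) (Icc 0 c) := by
  intro x hx y hy hxy
  have hsub : Icc (0:ℝ) c ⊆ Icc 0 1 := Icc_subset_Icc le_rfl hc.2
  have hx1 := hsub hx
  have hy1 := hsub hy
  have hc1 : c ∈ Icc (0:ℝ) 1 := ⟨le_of_lt hc.1, hc.2⟩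
  have hvy : 0 ≤ v y := v_nonneg hv_anti hv1 hy1
  have hvxy : v y < v x := hv_anti hx1 hy1 hxy
  have hSy : 0 ≤ S y - S c := by
    rcases eq_or_lt_of_le hy.2 with h | h
    · rw [h]; simp
    · have := hS_anti hy1 hc1 h; linarith
  have hSxy : S y - S c < S x - S c := by
    have := hS_anti hx1 hy1 hxy; linarith
  exact mul_lt_mul'' hvxy hSxy hvy hSy

lemma gCont (hv_cont : ContinuousOn v (Icc 0 1)) (hS_cont : ContinuousOn S (Icc 0 1))
    {c : ℝ} (hc : c ∈ Ioc (0:ℝ) 1) :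
    ContinuousOn (fun q => v q * (S q - S c)) (Icc 0 c) := by
  have hsub : Icc (0:ℝ) c ⊆ Icc 0 1 := Icc_subset_Icc le_rfl hc.2
  exact (hv_cont.mono hsub).mul ((hS_cont.mono hsub).sub continuousOn_const)

lemma stepExists (hv_cont : ContinuousOn v (Icc 0 1)) (hS_cont : ContinuousOn S (Icc 0 1))
    {c Δ : ℝ} (hc : c ∈ Ioc (0:ℝ) 1) (hΔpos : 0 < Δ)
    (hΔlt : Δ < v 0 * (S 0 - S c)) :
    ∃ q, q ∈ Ioo (0:ℝ) c ∧ v q * (S q - S c) = Δ := by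
  have hgc : v c * (S c - S c) = 0 := by ring
  have h0c : (0:ℝ) ≤ c := le_of_lt hc.1
  have hmem : Δ ∈ Icc (v c * (S c - S c)) (v 0 * (S 0 - S c)) :=
    ⟨by rw [hgc]; exact le_of_lt hΔpos, le_of_lt hΔlt⟩
  obtain ⟨q, hq, hgq⟩ := intermediate_value_Icc' h0c (gCont hv_cont hS_cont hc) hmem
  refine ⟨q, ⟨?_, ?_⟩, hgq⟩
  · rcases eq_or_lt_of_le hq.1 with h | h
    · exfalso
      rw [← h] at hgq
      simp only at hgq
      linarith
    · exact h
  · rcases eq_or_lt_of_le hq.2 with h | h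
    · exfalso
      rw [h] at hgq
      simp only at hgq
      linarith
    · exact h

end Aux

open scoped Classical in
/-- The recursively constructed quantile thresholds. -/
noncomputable def kappaSeq (v S : ℝ → ℝ) (θ : ℕ → ℝ) : ℕ → ℝ
  | 0 => 1
  | n + 1 =>
    if h : ∃ q, q ∈ Set.Ioo (0:ℝ) (kappaSeq v S θ n) ∧
        v q * (S q - S (kappaSeq v S θ n)) = θ (n+1) - θ n
    then h.choose else kappaSeq v S θ n

/-- The condition that all steps up to `t` succeed. -/
def pProp (v S : ℝ → ℝ) (θ : ℕ → ℝ) (t : ℕ) : Prop :=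
  ∀ s, 1 ≤ s → s ≤ t → θ s - θ (s-1) < v 0 * (S 0 - S (kappaSeq v S θ (s-1)))

open scoped Classical in
/-- The number of active thresholds. -/
noncomputable def pVal (v S : ℝ → ℝ) (m : ℕ) (θ : ℕ → ℝ) : ℕ :=
  Nat.findGreatest (pProp v S θ) m

section Main

variable {v S : ℝ → ℝ} {m : ℕ} {θ : ℕ → ℝ}

lemma pVal_conj : pProp v S θ (pVal v S m θ) ∧ pVal v S m θ ≤ m ∧
    ∀ k, pVal v S m θ < k → k ≤ m → ¬ pProp v S θ k := by
  classical
  unfold pVal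
  refine ⟨Nat.findGreatest_spec (Nat.zero_le m) ?_, Nat.findGreatest_le m,
    fun k hk hkm => Nat.findGreatest_is_greatest hk hkm⟩
  intro s hs1 hs0; omega

lemma pVal_le : pVal v S m θ ≤ m := pVal_conj.2.1

lemma pVal_spec : ∀ s, 1 ≤ s → s ≤ pVal v S m θ →
    θ s - θ (s-1) < v 0 * (S 0 - S (kappaSeq v S θ (s-1))) := pVal_conj.1

lemma pVal_max {k : ℕ} (hk : pVal v S m θ < k) (hkm : k ≤ m) : ¬ pProp v S θ k :=
  pVal_conj.2.2 k hk hkm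

lemma kappa_inv (hv_cont : ContinuousOn v (Icc 0 1))
    (hv_anti : StrictAntiOn v (Icc 0 1)) (hv1 : v 1 = 0)
    (hS_cont : ContinuousOn S (Icc 0 1))
    (hθ_mono : ∀ t, t < m → θ t < θ (t + 1)) :
    ∀ t, t ≤ pVal v S m θ →
      (0 < kappaSeq v S θ t ∧ kappaSeq v S θ t ≤ 1) ∧
      (1 ≤ t → kappaSeq v S θ t < kappaSeq v S θ (t-1) ∧
        v (kappaSeq v S θ t) * (S (kappaSeq v S θ t) - S (kappaSeq v S θ (t-1)))
          = θ t - θ (t-1)) := by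
  classical
  intro t
  induction t with
  | zero =>
    intro _
    refine ⟨⟨by norm_num [kappaSeq], by norm_num [kappaSeq]⟩, by omega⟩
  | succ t ih =>
    intro ht
    have ht' : t ≤ pVal v S m θ := le_trans (Nat.le_succ t) ht
    obtain ⟨⟨hpos, hle⟩, _⟩ := ih ht'
    have hc : kappaSeq v S θ t ∈ Ioc (0:ℝ) 1 := ⟨hpos, hle⟩
    have hΔpos : 0 < θ (t+1) - θ t := by
      have : t < m := by have := pVal_le (v := v) (S := S) (m := m) (θ := θ); omega
      linarith [hθ_mono t this]
    have hΔlt : θ (t+1) - θ t < v 0 * (S 0 - S (kappaSeq v S θ t)) := by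
      have := pVal_spec (v := v) (S := S) (m := m) (θ := θ) (t+1) (by omega) ht
      simpa using this
    have hex : ∃ q, q ∈ Set.Ioo (0:ℝ) (kappaSeq v S θ t) ∧
        v q * (S q - S (kappaSeq v S θ t)) = θ (t+1) - θ t :=
      stepExists hv_cont hS_cont hc hΔpos hΔlt
    have hval : kappaSeq v S θ (t+1) = hex.choose := by
      rw [kappaSeq, dif_pos hex]
    obtain ⟨hmem, heq⟩ := hex.choose_spec
    rw [hval]
    refine ⟨⟨hmem.1, le_trans (le_of_lt hmem.2) hle⟩, fun _ => ?_⟩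
    simpa using ⟨hmem.2, heq⟩

lemma eqm_kappa_le_one {p : ℕ} {κ : ℕ → ℝ}
    (h : EqmQuantileThresholds v S m θ p κ) :
    ∀ t, t ≤ p → κ t ≤ 1 := by
  intro t
  induction t with
  | zero => intro _; rw [h.2.1]
  | succ t ih =>
    intro ht
    have h1 := h.2.2.2.1 (t+1) (by omega) ht
    simp only [Nat.add_sub_cancel] at h1
    exact le_trans (le_of_lt h1) (ih (by omega))

lemma eqm_unique_kappa (hv_anti : StrictAntiOn v (Icc 0 1)) (hv1 : v 1 = 0)
    (hS_anti : StrictAntiOn S (Icc 0 1))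
    {p1 p2 : ℕ} {κ1 κ2 : ℕ → ℝ}
    (h1 : EqmQuantileThresholds v S m θ p1 κ1)
    (h2 : EqmQuantileThresholds v S m θ p2 κ2) :
    ∀ t, t ≤ p1 → t ≤ p2 → κ1 t = κ2 t := by
  intro t
  induction t with
  | zero => intro _ _; rw [h1.2.1, h2.2.1]
  | succ t ih =>
    intro ht1 ht2
    have hteq : κ1 t = κ2 t := ih (by omega) (by omega)
    have hcpos : 0 < κ1 t := by
      rcases Nat.eq_zero_or_pos t with h | h
      · rw [h, h1.2.1]; norm_num
      · exact h1.2.2.1 t h (by omega)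
    have hcle : κ1 t ≤ 1 := eqm_kappa_le_one h1 t (by omega)
    have hc : κ1 t ∈ Ioc (0:ℝ) 1 := ⟨hcpos, hcle⟩
    have hanti := gStrictAnti hv_anti hv1 hS_anti hc
    have hm1 : κ1 (t+1) ∈ Icc (0:ℝ) (κ1 t) := by
      have ha := h1.2.2.1 (t+1) (by omega) ht1
      have hb := h1.2.2.2.1 (t+1) (by omega) ht1
      simp only [Nat.add_sub_cancel] at hb
      exact ⟨le_of_lt ha, le_of_lt hb⟩
    have hm2 : κ2 (t+1) ∈ Icc (0:ℝ) (κ1 t) := by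
      have ha := h2.2.2.1 (t+1) (by omega) ht2
      have hb := h2.2.2.2.1 (t+1) (by omega) ht2
      simp only [Nat.add_sub_cancel] at hb
      rw [← hteq] at hb
      exact ⟨le_of_lt ha, le_of_lt hb⟩
    have he1 := h1.2.2.2.2.1 (t+1) (by omega) ht1
    have he2 := h2.2.2.2.2.1 (t+1) (by omega) ht2
    simp only [Nat.add_sub_cancel] at he1 he2
    rw [← hteq] at he2
    exact hanti.injOn hm1 hm2 (by rw [he1, he2])

lemma eqm_p_not_lt (hv_anti : StrictAntiOn v (Icc 0 1)) (hv1 : v 1 = 0)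
    (hS_anti : StrictAntiOn S (Icc 0 1))
    {p1 p2 : ℕ} {κ1 κ2 : ℕ → ℝ}
    (h1 : EqmQuantileThresholds v S m θ p1 κ1)
    (h2 : EqmQuantileThresholds v S m θ p2 κ2) :
    ¬ p1 < p2 := by
  intro hlt
  have hp1m : p1 < m := lt_of_lt_of_le hlt h2.1
  have hkeq : κ1 p1 = κ2 p1 :=
    eqm_unique_kappa hv_anti hv1 hS_anti h1 h2 p1 le_rfl (le_of_lt hlt)
  have hfin := h1.2.2.2.2.2 hp1m
  have hcpos : 0 < κ2 p1 := by
    rcases Nat.eq_zero_or_pos p1 with h | h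
    · rw [h, h2.2.1]; norm_num
    · exact h2.2.2.1 p1 h (le_of_lt hlt)
  have hcle : κ2 p1 ≤ 1 := eqm_kappa_le_one h2 p1 (le_of_lt hlt)
  have hc : κ2 p1 ∈ Ioc (0:ℝ) 1 := ⟨hcpos, hcle⟩
  have hqpos : 0 < κ2 (p1+1) := h2.2.2.1 (p1+1) (by omega) hlt
  have hqlt : κ2 (p1+1) < κ2 p1 := by
    have := h2.2.2.2.1 (p1+1) (by omega) hlt
    simpa using this
  have heq : v (κ2 (p1+1)) * (S (κ2 (p1+1)) - S (κ2 p1)) = θ (p1+1) - θ p1 := by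
    have := h2.2.2.2.2.1 (p1+1) (by omega) hlt
    simpa using this
  have hanti := gStrictAnti hv_anti hv1 hS_anti hc
  have h0mem : (0:ℝ) ∈ Icc (0:ℝ) (κ2 p1) := ⟨le_refl 0, le_of_lt hcpos⟩
  have hqmem : κ2 (p1+1) ∈ Icc (0:ℝ) (κ2 p1) := ⟨le_of_lt hqpos, le_of_lt hqlt⟩
  have := hanti h0mem hqmem hqpos
  simp only at this
  rw [hkeq] at hfin
  linarith

theorem eqm_p_eq (hv_anti : StrictAntiOn v (Icc 0 1)) (hv1 : v 1 = 0)
    (hS_anti : StrictAntiOn S (Icc 0 1))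
    {p1 p2 : ℕ} {κ1 κ2 : ℕ → ℝ}
    (h1 : EqmQuantileThresholds v S m θ p1 κ1)
    (h2 : EqmQuantileThresholds v S m θ p2 κ2) :
    p1 = p2 :=
  le_antisymm (not_lt.1 (eqm_p_not_lt hv_anti hv1 hS_anti h2 h1))
    (not_lt.1 (eqm_p_not_lt hv_anti hv1 hS_anti h1 h2))

end Main

theorem unique_equilibrium_absolute_threshold
    (v : ℝ → ℝ)
    (hv_cont : ContinuousOn v (Set.Icc 0 1))
    (hv_anti : StrictAntiOn v (Set.Icc 0 1))
    (hv1 : v 1 = 0) (hv0 : 0 < v 0)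
    (S : ℝ → ℝ)
    (hS_cont : ContinuousOn S (Set.Icc 0 1))
    (hS_anti : StrictAntiOn S (Set.Icc 0 1))
    (hS1 : S 1 = 0)
    (m : ℕ) (θ : ℕ → ℝ)
    (hθ0 : θ 0 = 0)
    (hθ_mono : ∀ t, t < m → θ t < θ (t + 1)) :
    ∃ p : ℕ, ∃ κ : ℕ → ℝ,
      EqmQuantileThresholds v S m θ p κ ∧
      ∀ p' : ℕ, ∀ κ' : ℕ → ℝ, EqmQuantileThresholds v S m θ p' κ' →
        p' = p ∧ ∀ t, 1 ≤ t → t ≤ p → κ' t = κ t := by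
  classical
  set p := pVal v S m θ with hp
  set κ := kappaSeq v S θ with hκ
  have hinv := kappa_inv hv_cont hv_anti hv1 hS_cont hθ_mono
  have heqm : EqmQuantileThresholds v S m θ p κ := by
    refine ⟨pVal_le, by norm_num [hκ, kappaSeq], ?_, ?_, ?_, ?_⟩
    · intro t ht1 ht2; exact (hinv t ht2).1.1
    · intro t ht1 ht2; exact ((hinv t ht2).2 ht1).1
    · intro t ht1 ht2; exact ((hinv t ht2).2 ht1).2
    · intro hpm
      by_contra hcon
      push_neg at hcon
      have hmax := pVal_max (v := v) (S := S) (m := m) (θ := θ)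
        (k := p + 1) (Nat.lt_succ_self p) (by omega)
      apply hmax
      intro s hs1 hs2
      rcases Nat.lt_or_ge s (p+1) with h | h
      · exact pVal_spec (m := m) s hs1 (by omega)
      · have hsp : s = p + 1 := by omega
        rw [hsp]
        simpa using hcon
  refine ⟨p, κ, heqm, ?_⟩
  intro p' κ' h'
  have hpeq : p' = p := eqm_p_eq hv_anti hv1 hS_anti h' heqm
  refine ⟨hpeq, ?_⟩
  intro t ht1 ht2
  exact eqm_unique_kappa hv_anti hv1 hS_anti h' heqm t (by omega) ht2
end

section
/- Let m ≥ 3 be an integer. Let R : ℝ → ℝ be differentiable and concave on [0,1] with R(0) = R(1) = 0, and let κ* ∈ [0,1] be a point where R attains its maximum over [0,1]. Let S : ℝ → ℝ be differentiable, concave, strictly decreasing on [0,1] with S(1) = 0. Set Δ = (S(0) − S(κ*))/m, put κ_1 = κ*, and for t = 2, …, m let κ_t ∈ [0, κ*] satisfy S(κ_t) = S(κ*) + (t−1)·Δ. Then ∫_0^{κ*} R'(q)·S(q) dq ≤ (m/(m−2)) · ( R(κ*)·S(κ*) + ∑_{t=2}^{m} R(κ_t)·Δ ). (That is, an absolute threshold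 mechanism with m badges achieves an m/(m−2)-approximation to the optimal expected per-user contribution when the status function is concave.) -/
open MeasureTheory intervalIntegral Finset

lemma aux_shift (f : ℕ → ℝ) : ∀ n : ℕ, 1 ≤ n →
    ∑ j ∈ Finset.range n, f (j + 1) = f 1 + ∑ t ∈ Finset.Icc 2 n, f t := by
  intro n hn
  induction n with
  | zero => omega
  | succ k ih =>
    rcases Nat.lt_or_ge k 1 with hk | hk
    · interval_cases k
      simp
    · rw [Finset.sum_range_succ, ih hk, Finset.sum_Icc_succ_top (by omega : 2 ≤ k + 1)]
      ring

lemma aux_gauss : ∀ n : ℕ, 1 ≤ n →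
    ∑ t ∈ Finset.Icc 2 n, ((n : ℝ) + 1 - (t : ℝ)) = (n : ℝ) * ((n : ℝ) - 1) / 2 := by
  intro n hn
  induction n with
  | zero => omega
  | succ k ih =>
    rcases Nat.lt_or_ge k 1 with hk | hk
    · interval_cases k
      norm_num
    · have hcard : (Finset.Icc 2 k).card = k - 1 := by rw [Nat.card_Icc]; omega
      have hc : ((k : ℝ) - 1) = ((k - 1 : ℕ) : ℝ) := by
        push_cast [Nat.cast_sub hk]; ring
      rw [Finset.sum_Icc_succ_top (by omega : 2 ≤ k + 1)]
      push_cast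
      rw [show ∑ t ∈ Finset.Icc 2 k, ((k : ℝ) + 1 + 1 - (t : ℝ))
          = ∑ t ∈ Finset.Icc 2 k, (((k : ℝ) + 1 - (t : ℝ)) + 1) from
        Finset.sum_congr rfl fun t _ => by ring]
      rw [Finset.sum_add_distrib, ih hk, Finset.sum_const, hcard]
      rw [nsmul_eq_mul, ← hc]
      ring

theorem multi_badge_approx_concave
    (m : ℕ) (hm : 3 ≤ m)
    (R : ℝ → ℝ)
    (hR_diff : DifferentiableOn ℝ R (Set.Icc 0 1))
    (hR_concave : ConcaveOn ℝ (Set.Icc 0 1) R)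
    (hR0 : R 0 = 0) (hR1 : R 1 = 0)
    (κstar : ℝ) (hκ : κstar ∈ Set.Icc (0:ℝ) 1)
    (hκ_max : ∀ q ∈ Set.Icc (0:ℝ) 1, R q ≤ R κstar)
    (S : ℝ → ℝ)
    (hS_diff : DifferentiableOn ℝ S (Set.Icc 0 1))
    (hS_concave : ConcaveOn ℝ (Set.Icc 0 1) S)
    (hS_anti : StrictAntiOn S (Set.Icc 0 1))
    (hS1 : S 1 = 0)
    (Δ : ℝ) (hΔ : Δ = (S 0 - S κstar) / m)
    (κ : ℕ → ℝ) (hκ1 : κ 1 = κstar)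
    (hκt_mem : ∀ t, 2 ≤ t → t ≤ m → κ t ∈ Set.Icc (0:ℝ) κstar)
    (hκt_val : ∀ t, 2 ≤ t → t ≤ m → S (κ t) = S κstar + (t - 1 : ℝ) * Δ) :
    (∫ q in (0:ℝ)..κstar, deriv R q * S q) ≤
      (m / (m - 2 : ℝ)) * (R κstar * S κstar + ∑ t ∈ Finset.Icc 2 m, R (κ t) * Δ) := by
  have h0K : (0:ℝ) ≤ κstar := hκ.1
  have hK1 : κstar ≤ 1 := hκ.2
  have h0m : (0:ℝ) ∈ Set.Icc (0:ℝ) 1 := Set.left_mem_Icc.2 zero_le_one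
  have h1m : (1:ℝ) ∈ Set.Icc (0:ℝ) 1 := Set.right_mem_Icc.2 zero_le_one
  have hsub : Set.Icc (0:ℝ) κstar ⊆ Set.Icc (0:ℝ) 1 := Set.Icc_subset_Icc le_rfl hK1
  have hmR : (3:ℝ) ≤ (m:ℝ) := by exact_mod_cast hm
  have hmpos : (0:ℝ) < (m:ℝ) := by linarith
  -- nonnegativity of R on [0,1]
  have hR_nonneg : ∀ q ∈ Set.Icc (0:ℝ) 1, 0 ≤ R q := by
    intro q hq
    have h := hR_concave.2 h0m h1m (by linarith [hq.2] : (0:ℝ) ≤ 1 - q) hq.1 (by ring)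
    simp only [smul_eq_mul] at h
    have harg : (1 - q) * 0 + q * 1 = q := by ring
    rw [harg, hR0, hR1] at h
    linarith
  -- nonnegativity of S on [0,1]
  have hS_nonneg : ∀ q ∈ Set.Icc (0:ℝ) 1, 0 ≤ S q := by
    intro q hq
    rcases eq_or_lt_of_le hq.2 with h | h
    · rw [h, hS1]
    · have := hS_anti hq h1m h
      rw [hS1] at this; linarith
  -- comparison via S
  have hcomp : ∀ x ∈ Set.Icc (0:ℝ) 1, ∀ y ∈ Set.Icc (0:ℝ) 1, S y ≤ S x → x ≤ y := by
    intro x hx y hy h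
    by_contra hlt
    push_neg at hlt
    have := hS_anti hy hx hlt
    linarith
  have hΔ0 : 0 ≤ Δ := by
    rw [hΔ]
    apply div_nonneg _ (le_of_lt hmpos)
    rcases eq_or_lt_of_le h0K with h | h
    · rw [← h]; linarith
    · have := hS_anti h0m hκ h
      linarith
  -- monotonicity of R on [0, κstar]
  have hRmono : MonotoneOn R (Set.Icc 0 κstar) := by
    intro x hx y hy hxy
    rcases eq_or_lt_of_le hxy with rfl | hlt
    · exact le_rfl
    rcases eq_or_lt_of_le hy.2 with hyk | hyk
    · rw [hyk]; exact hκ_max x (hsub hx)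
    · have hxk : x < κstar := hlt.trans hyk
      have hden : 0 < κstar - x := by linarith
      have h := hR_concave.2 (hsub hx) hκ
        (div_nonneg (by linarith : (0:ℝ) ≤ κstar - y) hden.le)
        (div_nonneg (by linarith : (0:ℝ) ≤ y - x) hden.le)
        (by field_simp; ring)
      simp only [smul_eq_mul] at h
      have harg : (κstar - y)/(κstar - x) * x + (y - x)/(κstar - x) * κstar = y := by
        field_simp; ring
      rw [harg] at h
      have hRxk : R x ≤ R κstar := hκ_max x (hsub hx)
      have hb : 0 ≤ (y - x)/(κstar - x) := div_nonneg (by linarith) hden.le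
      have h2 : (y - x)/(κstar - x) * R x ≤ (y - x)/(κstar - x) * R κstar :=
        mul_le_mul_of_nonneg_left hRxk hb
      have h3 : R x = (κstar - y)/(κstar - x) * R x + (y - x)/(κstar - x) * R x := by
        field_simp
        ring
      linarith
  -- differentiability inside
  have hRd_at : ∀ q ∈ Set.Ioo (0:ℝ) 1, DifferentiableAt ℝ R q := fun q hq =>
    (hR_diff q (Set.Ioo_subset_Icc_self hq)).differentiableAt (Icc_mem_nhds hq.1 hq.2)
  have hg : ConvexOn ℝ (Set.Icc (0:ℝ) 1) (fun x => -R x) := hR_concave.neg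
  have hgd : DifferentiableOn ℝ (fun x => -R x) (Set.Icc (0:ℝ) 1) := hR_diff.neg
  -- derivative nonneg on (0, κstar)
  have hderiv_nonneg : ∀ q ∈ Set.Ioo (0:ℝ) κstar, 0 ≤ deriv R q := by
    intro q hq
    have hq1 : q ∈ Set.Ioo (0:ℝ) 1 := ⟨hq.1, lt_of_lt_of_le hq.2 hK1⟩
    have hqm : q ∈ Set.Icc (0:ℝ) 1 := Set.Ioo_subset_Icc_self hq1
    have h3 : deriv (fun x => -R x) q ≤ slope (fun x => -R x) q κstar :=
      hg.deriv_le_slope hqm hκ hq.2 ((hRd_at q hq1).neg)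
    rw [show deriv (fun x => -R x) q = -deriv R q from deriv.neg] at h3
    rw [slope_def_field] at h3
    have hnum : -R κstar - -R q ≤ 0 := by
      have := hκ_max q hqm; linarith
    have hden : 0 ≤ κstar - q := by linarith [hq.2]
    have hfrac : (-R κstar - -R q) / (κstar - q) ≤ 0 :=
      div_nonpos_of_nonpos_of_nonneg hnum hden
    linarith
  -- uniform bound on deriv R on (0,1)
  set d0 : ℝ := derivWithin (fun x => -R x) (Set.Icc (0:ℝ) 1) 0 with hd0def
  set d1 : ℝ := derivWithin (fun x => -R x) (Set.Icc (0:ℝ) 1) 1 with hd1def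
  set C : ℝ := max |d0| |d1| with hCdef
  have hC : ∀ q ∈ Set.Ioo (0:ℝ) 1, |deriv R q| ≤ C := by
    intro q hq
    have hqm : q ∈ Set.Icc (0:ℝ) 1 := Set.Ioo_subset_Icc_self hq
    have h1 : d0 ≤ slope (fun x => -R x) 0 q :=
      hg.derivWithin_le_slope h0m hqm hq.1 (hgd 0 h0m)
    have h2 : slope (fun x => -R x) 0 q ≤ deriv (fun x => -R x) q :=
      hg.slope_le_deriv h0m hqm hq.1 ((hRd_at q hq).neg)
    have h3 : deriv (fun x => -R x) q ≤ slope (fun x => -R x) q 1 :=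
      hg.deriv_le_slope hqm h1m hq.2 ((hRd_at q hq).neg)
    have h4 : slope (fun x => -R x) q 1 ≤ d1 :=
      hg.slope_le_derivWithin hqm h1m hq.2 (hgd 1 h1m)
    have h5 : deriv (fun x => -R x) q = -deriv R q := deriv.neg
    have h5 : deriv (fun x => -R x) q = -deriv R q := deriv.neg
    rw [h5] at h2 h3
    have hA : d0 ≤ -deriv R q := h1.trans h2
    have hB : -deriv R q ≤ d1 := h3.trans h4
    rw [abs_le]
    constructor
    · linarith [le_abs_self d1, le_max_right |d0| |d1|]
    · linarith [neg_abs_le d0, le_max_left |d0| |d1|]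
  -- interval integrability of deriv R
  have hIntK : ∀ x y, x ∈ Set.Icc (0:ℝ) 1 → y ∈ Set.Icc (0:ℝ) 1 →
      IntervalIntegrable (deriv R) volume x y := by
    intro x y hx hy
    rw [intervalIntegrable_iff]
    have hconst : IntegrableOn (fun _ : ℝ => C) (Set.uIoc x y) volume :=
      intervalIntegrable_iff.mp (_root_.intervalIntegrable_const (μ := volume) (a := x) (b := y) (c := C))
    apply MeasureTheory.Integrable.mono' hconst
    · exact (measurable_deriv R).aestronglyMeasurable
    · have hnull : ∀ᵐ q : ℝ ∂volume, q ∉ ({0, 1} : Set ℝ) :=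
        (((Set.countable_singleton (1:ℝ)).insert 0)).ae_notMem volume
      filter_upwards [ae_restrict_mem measurableSet_uIoc,
        ae_restrict_of_ae hnull] with q hq h01
      have hqm : q ∈ Set.Icc (0:ℝ) 1 := (Set.uIcc_subset_Icc hx hy) (Set.uIoc_subset_uIcc hq)
      have hq0 : q ≠ 0 := fun h => h01 (by simp [h])
      have hq1 : q ≠ 1 := fun h => h01 (by simp [h])
      have hqi : q ∈ Set.Ioo (0:ℝ) 1 :=
        ⟨lt_of_le_of_ne hqm.1 (Ne.symm hq0), lt_of_le_of_ne hqm.2 hq1⟩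
      rw [Real.norm_eq_abs]
      exact hC q hqi
  have hR_cont : ContinuousOn R (Set.Icc (0:ℝ) 1) := hR_diff.continuousOn
  have hS_cont : ContinuousOn S (Set.Icc (0:ℝ) 1) := hS_diff.continuousOn
  have hIntRS : ∀ x y, x ∈ Set.Icc (0:ℝ) 1 → y ∈ Set.Icc (0:ℝ) 1 →
      IntervalIntegrable (fun q => deriv R q * S q) volume x y := fun x y hx hy =>
    (hIntK x y hx hy).mul_continuousOn (hS_cont.mono (Set.uIcc_subset_Icc hx hy))
  -- FTC
  have hFTC : ∀ x y, x ∈ Set.Icc (0:ℝ) 1 → y ∈ Set.Icc (0:ℝ) 1 → x ≤ y →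
      (∫ q in x..y, deriv R q) = R y - R x := by
    intro x y hx hy hxy
    refine integral_eq_sub_of_hasDerivAt_of_le hxy
      (hR_cont.mono (Set.Icc_subset_Icc hx.1 hy.2)) (fun q hq => ?_) (hIntK x y hx hy)
    exact (hRd_at q ⟨lt_of_le_of_lt hx.1 hq.1, lt_of_lt_of_le hq.2 hy.2⟩).hasDerivAt
  -- per-piece bound
  have hpiece : ∀ x y, x ∈ Set.Icc (0:ℝ) κstar → y ∈ Set.Icc (0:ℝ) κstar → x ≤ y →
      (∫ q in x..y, deriv R q * S q) ≤ (R y - R x) * S x := by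
    intro x y hx hy hxy
    have hx1 : x ∈ Set.Icc (0:ℝ) 1 := hsub hx
    have hy1 : y ∈ Set.Icc (0:ℝ) 1 := hsub hy
    have hint1 : IntervalIntegrable (fun q => deriv R q * S q) volume x y := hIntRS x y hx1 hy1
    have hint2 : IntervalIntegrable (fun q => deriv R q * S x) volume x y :=
      (hIntK x y hx1 hy1).mul_continuousOn continuousOn_const
    have hae : (fun q => deriv R q * S q) ≤ᵐ[volume.restrict (Set.Icc x y)]
        fun q => deriv R q * S x := by
      have hnull : ∀ᵐ q : ℝ ∂volume, q ∉ ({0, κstar} : Set ℝ) :=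
        ((Set.countable_singleton κstar).insert 0).ae_notMem volume
      filter_upwards [ae_restrict_mem measurableSet_Icc,
        ae_restrict_of_ae hnull] with q hq h01
      have hq0 : q ≠ 0 := fun h => h01 (by simp [h])
      have hqk : q ≠ κstar := fun h => h01 (by simp [h])
      have hqi : q ∈ Set.Ioo (0:ℝ) κstar :=
        ⟨lt_of_le_of_ne (hx.1.trans hq.1) (Ne.symm hq0),
         lt_of_le_of_ne (hq.2.trans hy.2) hqk⟩
      have hd : 0 ≤ deriv R q := hderiv_nonneg q hqi
      have hqm : q ∈ Set.Icc (0:ℝ) 1 := ⟨hx1.1.trans hq.1, hq.2.trans hy1.2⟩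
      have hSle : S q ≤ S x := by
        rcases eq_or_lt_of_le hq.1 with rfl | h
        · exact le_rfl
        · exact (hS_anti hx1 hqm h).le
      exact mul_le_mul_of_nonneg_left hSle hd
    calc (∫ q in x..y, deriv R q * S q) ≤ ∫ q in x..y, deriv R q * S x :=
          integral_mono_ae_restrict hxy hint1 hint2 hae
      _ = (R y - R x) * S x := by
          rw [intervalIntegral.integral_mul_const, hFTC x y hx1 hy1 hxy]
  -- the partition sequence
  set a : ℕ → ℝ := fun i => if i = 0 then 0 else κ (m + 1 - i) with ha
  have ha0 : a 0 = 0 := by simp [ha]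
  have ham : a m = κstar := by
    have h1 : m + 1 - m = 1 := by omega
    have h2 : a m = κ (m + 1 - m) := by rw [ha]; exact if_neg (by omega)
    rw [h2, h1, hκ1]
  have hamem : ∀ i, i ≤ m → a i ∈ Set.Icc (0:ℝ) κstar := by
    intro i hi
    rcases Nat.eq_zero_or_pos i with rfl | hipos
    · rw [ha0]; exact ⟨le_rfl, h0K⟩
    · rcases eq_or_lt_of_le hi with rfl | hilt
      · rw [ham]; exact ⟨h0K, le_rfl⟩
      · have hai : a i = κ (m + 1 - i) := by rw [ha]; exact if_neg (by omega)
        rw [hai]; exact hκt_mem (m + 1 - i) (by omega) (by omega)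
  have hSa : ∀ i, i ≤ m → S (a i) = S κstar + ((m : ℝ) - i) * Δ := by
    intro i hi
    rcases Nat.eq_zero_or_pos i with rfl | hipos
    · rw [ha0]
      have hne : (m:ℝ) ≠ 0 := ne_of_gt hmpos
      have : ((m:ℝ) - (0:ℕ)) * ((S 0 - S κstar) / m) = S 0 - S κstar := by
        push_cast; field_simp; ring
      rw [hΔ, this]; ring
    · rcases eq_or_lt_of_le hi with rfl | hilt
      · rw [ham]; simp
      · have hai : a i = κ (m + 1 - i) := by rw [ha]; exact if_neg (by omega)
        rw [hai, hκt_val (m + 1 - i) (by omega) (by omega)]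
        have hcast : ((m + 1 - i : ℕ) : ℝ) - 1 = (m:ℝ) - i := by
          push_cast [Nat.cast_sub (by omega : i ≤ m + 1)]; ring
        rw [hcast]
  have hmono_a : ∀ i, i < m → a i ≤ a (i + 1) := by
    intro i hi
    apply hcomp (a i) (hsub (hamem i hi.le)) (a (i + 1)) (hsub (hamem (i + 1) hi))
    rw [hSa i hi.le, hSa (i + 1) hi]
    have hle : ((m:ℝ) - ((i:ℕ) + 1 : ℕ)) ≤ (m:ℝ) - i := by push_cast; linarith
    nlinarith [mul_le_mul_of_nonneg_right hle hΔ0]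
  -- split the integral
  have hsplitInt : ∀ k, k < m → IntervalIntegrable (fun q => deriv R q * S q)
      volume (a k) (a (k + 1)) := fun k hk =>
    hIntRS (a k) (a (k + 1)) (hsub (hamem k hk.le)) (hsub (hamem (k + 1) hk))
  have hsum : (∫ q in (0:ℝ)..κstar, deriv R q * S q)
      = ∑ i ∈ Finset.range m, ∫ q in (a i)..(a (i + 1)), deriv R q * S q := by
    rw [sum_integral_adjacent_intervals hsplitInt, ha0, ham]
  set G : ℕ → ℝ := fun i => R (a i) * (S κstar + ((m : ℝ) - i) * Δ) with hG
  have hterm : ∀ i ∈ Finset.range m,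
      (R (a (i + 1)) - R (a i)) * S (a i) = (G (i + 1) - G i) + R (a (i + 1)) * Δ := by
    intro i hi
    have him := Finset.mem_range.1 hi
    rw [hSa i him.le]
    simp only [hG]
    push_cast
    ring
  have hGm : G m = R κstar * S κstar := by
    simp only [hG, ham]; ring_nf
  have hG0 : G 0 = 0 := by simp [hG, ha0, hR0]
  have hrefl : ∑ i ∈ Finset.range m, R (a (i + 1)) * Δ
      = ∑ j ∈ Finset.range m, R (κ (j + 1)) * Δ := by
    rw [← Finset.sum_range_reflect (fun j => R (κ (j + 1)) * Δ) m]
    apply Finset.sum_congr rfl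
    intro i hi
    have him := Finset.mem_range.1 hi
    have h1 : a (i + 1) = κ (m + 1 - (i + 1)) := by rw [ha]; exact if_neg (by omega)
    have h2 : m + 1 - (i + 1) = m - 1 - i + 1 := by omega
    rw [h1, h2]
  have hshift : ∑ j ∈ Finset.range m, R (κ (j + 1)) * Δ
      = R κstar * Δ + ∑ t ∈ Finset.Icc 2 m, R (κ t) * Δ := by
    rw [aux_shift (fun t => R (κ t) * Δ) m (by omega), hκ1]
  -- lower bound on badge terms via concavity
  have hRκt : ∀ t ∈ Finset.Icc 2 m, (((m:ℝ) + 1 - t) / m) * R κstar ≤ R (κ t) := by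
    intro t ht
    obtain ⟨ht2, htm⟩ := Finset.mem_Icc.1 ht
    have htR : (2:ℝ) ≤ (t:ℝ) := by exact_mod_cast ht2
    have htRm : (t:ℝ) ≤ (m:ℝ) := by exact_mod_cast htm
    set lam : ℝ := ((m:ℝ) + 1 - t) / m with hlam
    have hlam0 : 0 ≤ lam := by
      rw [hlam]; apply div_nonneg (by linarith) hmpos.le
    have hlam1 : lam ≤ 1 := by
      rw [hlam, div_le_one hmpos]; linarith
    set c : ℝ := lam * κstar with hc
    have hcmem : c ∈ Set.Icc (0:ℝ) κstar := by
      constructor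
      · exact mul_nonneg hlam0 h0K
      · rw [hc]; nlinarith
    have hκtm : κ t ∈ Set.Icc (0:ℝ) κstar := hκt_mem t ht2 htm
    have hSc : S (κ t) ≤ S c := by
      have h := hS_concave.2 hκ h0m hlam0 (by linarith : (0:ℝ) ≤ 1 - lam) (by ring)
      simp only [smul_eq_mul] at h
      have harg : lam * κstar + (1 - lam) * 0 = c := by rw [hc]; ring
      rw [harg] at h
      have hval : S (κ t) = S κstar + ((t:ℝ) - 1) * Δ := hκt_val t ht2 htm
      have hcomb : lam * S κstar + (1 - lam) * S 0 = S κstar + ((t:ℝ) - 1) * Δ := by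
        rw [hlam, hΔ]; field_simp; ring
      rw [hcomb] at h
      rw [hval]; exact h
    have hct : c ≤ κ t := hcomp c (hsub hcmem) (κ t) (hsub hκtm) hSc
    have hRc : R c ≤ R (κ t) := hRmono hcmem hκtm hct
    have h := hR_concave.2 hκ h0m hlam0 (by linarith : (0:ℝ) ≤ 1 - lam) (by ring)
    simp only [smul_eq_mul] at h
    have harg : lam * κstar + (1 - lam) * 0 = c := by rw [hc]; ring
    rw [harg, hR0] at h
    calc (((m:ℝ) + 1 - t) / m) * R κstar = lam * R κstar + (1 - lam) * 0 := by
          rw [hlam]; ring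
      _ ≤ R c := h
      _ ≤ R (κ t) := hRc
  have hTlb : ((m:ℝ) - 1) / 2 * (R κstar * Δ) ≤ ∑ t ∈ Finset.Icc 2 m, R (κ t) * Δ := by
    have h1 : ∑ t ∈ Finset.Icc 2 m, ((((m:ℝ) + 1 - t) / m) * R κstar * Δ)
        ≤ ∑ t ∈ Finset.Icc 2 m, R (κ t) * Δ :=
      Finset.sum_le_sum fun t ht => mul_le_mul_of_nonneg_right (hRκt t ht) hΔ0
    have h2 : ∑ t ∈ Finset.Icc 2 m, ((((m:ℝ) + 1 - t) / m) * R κstar * Δ)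
        = ((m:ℝ) - 1) / 2 * (R κstar * Δ) := by
      have hne : (m:ℝ) ≠ 0 := ne_of_gt hmpos
      rw [show (∑ t ∈ Finset.Icc 2 m, ((((m:ℝ) + 1 - t) / m) * R κstar * Δ))
          = (∑ t ∈ Finset.Icc 2 m, ((m:ℝ) + 1 - (t:ℝ))) * (R κstar * Δ / m) from by
        rw [Finset.sum_mul]; exact Finset.sum_congr rfl fun t _ => by ring]
      rw [aux_gauss m (by omega)]
      field_simp
    linarith
  -- put everything together
  have hRκ0 : 0 ≤ R κstar := hR_nonneg κstar hκ
  have hSκ0 : 0 ≤ S κstar := hS_nonneg κstar hκ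
  have hmain : (∫ q in (0:ℝ)..κstar, deriv R q * S q)
      ≤ R κstar * S κstar + (R κstar * Δ + ∑ t ∈ Finset.Icc 2 m, R (κ t) * Δ) := by
    calc (∫ q in (0:ℝ)..κstar, deriv R q * S q)
        = ∑ i ∈ Finset.range m, ∫ q in (a i)..(a (i + 1)), deriv R q * S q := hsum
      _ ≤ ∑ i ∈ Finset.range m, (R (a (i + 1)) - R (a i)) * S (a i) :=
          Finset.sum_le_sum fun i hi => hpiece (a i) (a (i + 1))
            (hamem i (Finset.mem_range.1 hi).le) (hamem (i + 1) (Finset.mem_range.1 hi))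
            (hmono_a i (Finset.mem_range.1 hi))
      _ = ∑ i ∈ Finset.range m, ((G (i + 1) - G i) + R (a (i + 1)) * Δ) :=
          Finset.sum_congr rfl hterm
      _ = (G m - G 0) + ∑ i ∈ Finset.range m, R (a (i + 1)) * Δ := by
          rw [Finset.sum_add_distrib, Finset.sum_range_sub]
      _ = R κstar * S κstar + (R κstar * Δ + ∑ t ∈ Finset.Icc 2 m, R (κ t) * Δ) := by
          rw [hGm, hG0, hrefl, hshift]; ring
  have hm2 : (0:ℝ) < (m:ℝ) - 2 := by linarith
  have hfinal : R κstar * S κstar + (R κstar * Δ + ∑ t ∈ Finset.Icc 2 m, R (κ t) * Δ)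
      ≤ (m / ((m:ℝ) - 2)) * (R κstar * S κstar + ∑ t ∈ Finset.Icc 2 m, R (κ t) * Δ) := by
    rw [div_mul_eq_mul_div, le_div_iff₀ hm2]
    linarith [mul_nonneg hRκ0 hSκ0, mul_nonneg hRκ0 hΔ0, hTlb]
  exact hmain.trans hfinal
end

section
/- Let R : ℝ → ℝ be differentiable and concave on [0,1] with R(0) = R(1) = 0, and let κ* ∈ [0,1] be a point where R attains its maximum over [0,1]. Let S : ℝ → ℝ be differentiable, convex, and nonincreasing on [0,1] with S(1) = 0. Then ∫_0^{κ*} R'(q)·S(q) dq ≤ 2 · ∫_0^{1} R'(q)·S(q) dq. (That is, for any convex status function, the leaderboard mechanism is a 2-approximation to the optimal badge mechanism.) -/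
open MeasureTheory intervalIntegral

lemma integral_nonneg_Ioo' {f : ℝ → ℝ} {a b : ℝ} (hab : a ≤ b)
    (h : ∀ x ∈ Set.Ioo a b, 0 ≤ f x) : 0 ≤ ∫ x in a..b, f x := by
  apply intervalIntegral.integral_nonneg_of_ae_restrict hab
  rw [Filter.EventuallyLE, ae_restrict_iff' measurableSet_Icc]
  have ha : ∀ᵐ x : ℝ, x ≠ a := by
    rw [MeasureTheory.ae_iff]; simp [Set.setOf_eq_eq_singleton']
  have hb : ∀ᵐ x : ℝ, x ≠ b := by
    rw [MeasureTheory.ae_iff]; simp [Set.setOf_eq_eq_singleton']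
  filter_upwards [ha, hb] with x hxa hxb hx
  exact h x ⟨lt_of_le_of_ne hx.1 (Ne.symm hxa), lt_of_le_of_ne hx.2 hxb⟩

lemma deriv_ii_of_convex' {f : ℝ → ℝ}
    (hd : DifferentiableOn ℝ f (Set.Icc 0 1))
    (hc : ConvexOn ℝ (Set.Icc 0 1) f) :
    IntervalIntegrable (deriv f) MeasureTheory.volume 0 1 := by
  have hmono := hc.monotoneOn_derivWithin hd
  set d0 := derivWithin f (Set.Icc 0 1) 0 with hd0
  set d1 := derivWithin f (Set.Icc 0 1) 1 with hd1
  have hbound : ∀ x ∈ Set.Ioo (0:ℝ) 1, ‖deriv f x‖ ≤ max |d0| |d1| := by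
    intro x hx
    have hxm : x ∈ Set.Icc (0:ℝ) 1 := Set.Ioo_subset_Icc_self hx
    have key : deriv f x = derivWithin f (Set.Icc 0 1) x :=
      (derivWithin_of_mem_nhds (Icc_mem_nhds hx.1 hx.2)).symm
    have h0 : d0 ≤ derivWithin f (Set.Icc 0 1) x :=
      hmono (Set.left_mem_Icc.mpr zero_le_one) hxm hx.1.le
    have h1 : derivWithin f (Set.Icc 0 1) x ≤ d1 :=
      hmono hxm (Set.right_mem_Icc.mpr zero_le_one) hx.2.le
    rw [Real.norm_eq_abs, key, abs_le]
    constructor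
    · linarith [neg_abs_le d0, le_max_left |d0| |d1|]
    · linarith [le_abs_self d1, le_max_right |d0| |d1|]
  rw [intervalIntegrable_iff_integrableOn_Ioc_of_le zero_le_one]
  have hconst : MeasureTheory.IntegrableOn (fun _ : ℝ => max |d0| |d1|) (Set.Ioc 0 1) := by
    apply (MeasureTheory.integrableOn_const_iff enorm_ne_top).mpr
    right; rw [Real.volume_Ioc]; exact ENNReal.ofReal_lt_top
  refine MeasureTheory.Integrable.mono' hconst
    ((measurable_deriv f).aestronglyMeasurable.restrict) ?_
  rw [MeasureTheory.ae_restrict_iff' measurableSet_Ioc]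
  have hb : ∀ᵐ x : ℝ, x ≠ 1 := by
    rw [MeasureTheory.ae_iff]; simp [Set.setOf_eq_eq_singleton']
  filter_upwards [hb] with x hx1 hx
  exact hbound x ⟨hx.1, lt_of_le_of_ne hx.2 hx1⟩

theorem leaderboard_two_approx_convex
    (R : ℝ → ℝ)
    (hR_diff : DifferentiableOn ℝ R (Set.Icc 0 1))
    (hR_concave : ConcaveOn ℝ (Set.Icc 0 1) R)
    (hR0 : R 0 = 0) (hR1 : R 1 = 0)
    (κstar : ℝ) (hκ : κstar ∈ Set.Icc (0:ℝ) 1)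
    (hκ_max : ∀ q ∈ Set.Icc (0:ℝ) 1, R q ≤ R κstar)
    (S : ℝ → ℝ)
    (hS_diff : DifferentiableOn ℝ S (Set.Icc 0 1))
    (hS_convex : ConvexOn ℝ (Set.Icc 0 1) S)
    (hS_anti : AntitoneOn S (Set.Icc 0 1))
    (hS1 : S 1 = 0) :
    (∫ q in (0:ℝ)..κstar, deriv R q * S q) ≤ 2 * ∫ q in (0:ℝ)..1, deriv R q * S q := by
  obtain ⟨hκ0, hκ1⟩ := hκ
  have h01 : (0:ℝ) ≤ 1 := zero_le_one
  have hRc : ContinuousOn R (Set.Icc 0 1) := hR_diff.continuousOn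
  have hSc : ContinuousOn S (Set.Icc 0 1) := hS_diff.continuousOn
  have hRc' : ContinuousOn R (Set.uIcc (0:ℝ) 1) := by
    rw [Set.uIcc_of_le h01]; exact hRc
  have hSc' : ContinuousOn S (Set.uIcc (0:ℝ) 1) := by
    rw [Set.uIcc_of_le h01]; exact hSc
  -- derivatives at interior points
  have hRd : ∀ x ∈ Set.Ioo (0:ℝ) 1, HasDerivAt R (deriv R x) x := fun x hx =>
    ((hR_diff x (Set.Ioo_subset_Icc_self hx)).differentiableAt
      (Icc_mem_nhds hx.1 hx.2)).hasDerivAt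
  have hSd : ∀ x ∈ Set.Ioo (0:ℝ) 1, HasDerivAt S (deriv S x) x := fun x hx =>
    ((hS_diff x (Set.Ioo_subset_Icc_self hx)).differentiableAt
      (Icc_mem_nhds hx.1 hx.2)).hasDerivAt
  -- nonnegativity of R
  have hRnn : ∀ q ∈ Set.Icc (0:ℝ) 1, 0 ≤ R q := by
    intro q hq
    have h := hR_concave.2 (Set.left_mem_Icc.mpr h01) (Set.right_mem_Icc.mpr h01)
      (by linarith [hq.2] : (0:ℝ) ≤ 1 - q) hq.1 (by ring)
    simp only [smul_eq_mul, mul_zero, mul_one, zero_add, hR0, hR1] at h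
    linarith
  -- nonnegativity of S
  have hSnn : ∀ q ∈ Set.Icc (0:ℝ) 1, 0 ≤ S q := fun q hq =>
    hS1 ▸ hS_anti hq (Set.right_mem_Icc.mpr h01) hq.2
  -- deriv S nonpositive on the interior
  have hSd0 : ∀ x ∈ Set.Ioo (0:ℝ) 1, deriv S x ≤ 0 := by
    intro x hx
    have hxm : x ∈ Set.Icc (0:ℝ) 1 := Set.Ioo_subset_Icc_self hx
    have h1 : deriv S x ≤ slope S x 1 :=
      hS_convex.deriv_le_slope hxm (Set.right_mem_Icc.mpr h01) hx.2
        ((hS_diff x hxm).differentiableAt (Icc_mem_nhds hx.1 hx.2))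
    have h2 : slope S x 1 ≤ 0 := by
      rw [slope_def_field]
      apply div_nonpos_of_nonpos_of_nonneg
      · have := hS_anti hxm (Set.right_mem_Icc.mpr h01) hx.2.le
        linarith
      · linarith [hx.2]
    linarith
  -- integrability of the derivatives
  have intRd : IntervalIntegrable (deriv R) volume 0 1 := by
    have h := deriv_ii_of_convex' hR_diff.neg hR_concave.neg
    have he : deriv R = fun x => -(deriv (fun y => -R y) x) := by
      funext x; rw [deriv.fun_neg]; ring
    rw [he]
    exact h.neg
  have intSd : IntervalIntegrable (deriv S) volume 0 1 :=
    deriv_ii_of_convex' hS_diff hS_convex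
  -- integrability of various integrands on subintervals
  have hsub : ∀ a b : ℝ, 0 ≤ a → a ≤ b → b ≤ 1 → Set.uIcc a b ⊆ Set.uIcc (0:ℝ) 1 := by
    intro a b ha hab hb
    rw [Set.uIcc_of_le hab, Set.uIcc_of_le h01]
    exact Set.Icc_subset_Icc ha hb
  have iRS : ∀ a b : ℝ, 0 ≤ a → a ≤ b → b ≤ 1 →
      IntervalIntegrable (fun q => deriv R q * S q) volume a b := fun a b ha hab hb =>
    (intRd.mono_set (hsub a b ha hab hb)).mul_continuousOn (hSc'.mono (hsub a b ha hab hb))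
  have iRS' : ∀ a b : ℝ, 0 ≤ a → a ≤ b → b ≤ 1 →
      IntervalIntegrable (fun q => R q * deriv S q) volume a b := fun a b ha hab hb =>
    (intSd.mono_set (hsub a b ha hab hb)).continuousOn_mul (hRc'.mono (hsub a b ha hab hb))
  have iS : ∀ a b : ℝ, 0 ≤ a → a ≤ b → b ≤ 1 →
      IntervalIntegrable S volume a b := fun a b ha hab hb =>
    (hSc'.mono (hsub a b ha hab hb)).intervalIntegrable
  have i1qS' : ∀ a b : ℝ, 0 ≤ a → a ≤ b → b ≤ 1 →
      IntervalIntegrable (fun q => (1 - q) * deriv S q) volume a b := fun a b ha hab hb =>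
    (intSd.mono_set (hsub a b ha hab hb)).continuousOn_mul
      ((continuous_const.sub continuous_id).continuousOn)
  -- FTC for R * S
  have ftcRS : ∀ a b : ℝ, 0 ≤ a → a ≤ b → b ≤ 1 →
      (∫ q in a..b, (deriv R q * S q + R q * deriv S q)) = R b * S b - R a * S a := by
    intro a b ha hab hb
    apply intervalIntegral.integral_eq_sub_of_hasDerivAt_of_le hab
    · exact (hRc.mono (Set.Icc_subset_Icc ha hb)).mul (hSc.mono (Set.Icc_subset_Icc ha hb))
    · intro x hx
      have hx' : x ∈ Set.Ioo (0:ℝ) 1 := ⟨lt_of_le_of_lt ha hx.1, lt_of_lt_of_le hx.2 hb⟩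
      exact (hRd x hx').mul (hSd x hx')
    · exact (iRS a b ha hab hb).add (iRS' a b ha hab hb)
  -- FTC for (1 - q) * S
  have ftc1S : ∀ a b : ℝ, 0 ≤ a → a ≤ b → b ≤ 1 →
      (∫ q in a..b, ((-1) * S q + (1 - q) * deriv S q))
        = (1 - b) * S b - (1 - a) * S a := by
    intro a b ha hab hb
    apply intervalIntegral.integral_eq_sub_of_hasDerivAt_of_le hab
    · exact ((continuous_const.sub continuous_id).continuousOn).mul
        (hSc.mono (Set.Icc_subset_Icc ha hb))
    · intro x hx
      have hx' : x ∈ Set.Ioo (0:ℝ) 1 := ⟨lt_of_le_of_lt ha hx.1, lt_of_lt_of_le hx.2 hb⟩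
      exact ((hasDerivAt_id x).const_sub 1).mul (hSd x hx')
    · exact (((iS a b ha hab hb).const_mul (-1))).add (i1qS' a b ha hab hb)
  -- abbreviations
  set M := R κstar with hM_def
  set s := S κstar with hs_def
  have hM : 0 ≤ M := hRnn κstar ⟨hκ0, hκ1⟩
  have hs : 0 ≤ s := hSnn κstar ⟨hκ0, hκ1⟩
  -- main equalities
  have eqA : (∫ q in (0:ℝ)..κstar, deriv R q * S q)
      + (∫ q in (0:ℝ)..κstar, R q * deriv S q) = M * s := by
    rw [← intervalIntegral.integral_add (iRS 0 κstar le_rfl hκ0 hκ1)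
      (iRS' 0 κstar le_rfl hκ0 hκ1), ftcRS 0 κstar le_rfl hκ0 hκ1]
    simp [hR0]; rfl
  have eqB : (∫ q in κstar..1, deriv R q * S q)
      + (∫ q in κstar..1, R q * deriv S q) = -(M * s) := by
    rw [← intervalIntegral.integral_add (iRS κstar 1 hκ0 hκ1 le_rfl)
      (iRS' κstar 1 hκ0 hκ1 le_rfl), ftcRS κstar 1 hκ0 hκ1 le_rfl]
    simp [hS1]; rfl
  have eqSplit : (∫ q in (0:ℝ)..1, deriv R q * S q)
      = (∫ q in (0:ℝ)..κstar, deriv R q * S q) + (∫ q in κstar..1, deriv R q * S q) :=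
    (intervalIntegral.integral_add_adjacent_intervals (iRS 0 κstar le_rfl hκ0 hκ1)
      (iRS κstar 1 hκ0 hκ1 le_rfl)).symm
  -- P1 ≤ 0
  have hP1 : (∫ q in (0:ℝ)..κstar, R q * deriv S q) ≤ 0 := by
    have h := integral_nonneg_Ioo' hκ0 (f := fun q => -(R q * deriv S q)) ?_
    · rw [intervalIntegral.integral_neg] at h; linarith
    · intro x hx
      have hx' : x ∈ Set.Ioo (0:ℝ) 1 := ⟨hx.1, lt_of_lt_of_le hx.2 hκ1⟩
      have h1 := hRnn x (Set.Ioo_subset_Icc_self hx')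
      have h2 := hSd0 x hx'
      show 0 ≤ -(R x * deriv S x)
      nlinarith
  -- split into the case κstar = 1
  rcases eq_or_lt_of_le hκ1 with hceq | hc1
  · -- κstar = 1
    subst hceq
    have h0 : 0 ≤ ∫ q in (0:ℝ)..1, deriv R q * S q := by
      have : M * s = 0 := by rw [hM_def, hR1]; ring
      linarith [eqA, hP1, this.le]
    linarith
  · -- κstar < 1
    set I1 := ∫ q in (0:ℝ)..κstar, deriv R q * S q with hI1
    set I2 := ∫ q in κstar..1, deriv R q * S q with hI2
    set P1 := ∫ q in (0:ℝ)..κstar, R q * deriv S q with hP1d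
    set P2 := ∫ q in κstar..1, R q * deriv S q with hP2d
    set J := ∫ q in κstar..1, (1 - q) * deriv S q with hJd
    set K := ∫ q in κstar..1, S q with hKd
    -- eqJ : -K + J = -(1-κ)*s
    have eqJ : -K + J = -((1 - κstar) * s) := by
      have h := ftc1S κstar 1 hκ0 hκ1 le_rfl
      rw [intervalIntegral.integral_add (((iS κstar 1 hκ0 hκ1 le_rfl).const_mul (-1)))
        (i1qS' κstar 1 hκ0 hκ1 le_rfl)] at h
      rw [intervalIntegral.integral_const_mul] at h
      rw [hS1] at h
      rw [hJd, hKd]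
      linarith [h]
    -- hF6 : pointwise concavity bound integrated
    have hF6 : 0 ≤ ∫ q in κstar..1,
        ((1 - κstar) * R q - (1 - q) * M) * (-(deriv S q)) := by
      apply integral_nonneg_Ioo' hκ1
      intro x hx
      have hx' : x ∈ Set.Ioo (0:ℝ) 1 := ⟨lt_of_le_of_lt hκ0 hx.1, hx.2⟩
      have hS' : 0 ≤ -(deriv S x) := by linarith [hSd0 x hx']
      have hconc : (1 - x) * M ≤ (1 - κstar) * R x := by
        have hl1 : (0:ℝ) ≤ (1 - x) / (1 - κstar) :=
          div_nonneg (by linarith [hx.2]) (by linarith)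
        have hl2 : (0:ℝ) ≤ (x - κstar) / (1 - κstar) :=
          div_nonneg (by linarith [hx.1]) (by linarith)
        have hne : (1:ℝ) - κstar ≠ 0 := by linarith
        have hl3 : (1 - x) / (1 - κstar) + (x - κstar) / (1 - κstar) = 1 := by
          rw [← add_div, div_eq_one_iff_eq hne]; ring
        have h := hR_concave.2 (Set.mem_Icc.mpr ⟨hκ0, hκ1⟩)
          (Set.right_mem_Icc.mpr h01) hl1 hl2 hl3
        simp only [smul_eq_mul, mul_one] at h
        have harg : (1 - x) / (1 - κstar) * κstar + (x - κstar) / (1 - κstar) = x := by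
          rw [div_mul_eq_mul_div, ← add_div, div_eq_iff hne]; ring
        rw [harg, hR1, mul_zero, add_zero] at h
        rw [div_mul_eq_mul_div, div_le_iff₀ (by linarith : (0:ℝ) < 1 - κstar)] at h
        linarith
      exact mul_nonneg (by linarith) hS'
    -- expand hF6 linearly
    have hF6' : 0 ≤ -((1 - κstar) * P2) + M * J := by
      have he : (fun q => ((1 - κstar) * R q - (1 - q) * M) * (-(deriv S q)))
          = fun q => (1 - κstar) * (-(R q * deriv S q)) + M * ((1 - q) * deriv S q) := by
        funext q; ring
      rw [he] at hF6
      have if1 : IntervalIntegrable (fun q => (1 - κstar) * -(R q * deriv S q))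
          volume κstar 1 := by
        exact ((iRS' κstar 1 hκ0 hκ1 le_rfl).neg).const_mul (1 - κstar)
      have if2 : IntervalIntegrable (fun q => M * ((1 - q) * deriv S q))
          volume κstar 1 := by
        exact (i1qS' κstar 1 hκ0 hκ1 le_rfl).const_mul M
      rw [intervalIntegral.integral_add if1 if2] at hF6
      rw [intervalIntegral.integral_const_mul, intervalIntegral.integral_const_mul,
        intervalIntegral.integral_neg] at hF6
      rw [hP2d, hJd]
      linarith [hF6]
    -- hK : (1-κ)*K ≤ s*(1-κ)^2/2 by convexity of S
    have hKb : (1 - κstar) * K ≤ s * (1 - κstar) ^ 2 / 2 := by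
      have hptw : ∀ x ∈ Set.Icc κstar 1, (1 - κstar) * S x ≤ (1 - x) * s := by
        intro x hx
        have hl1 : (0:ℝ) ≤ (1 - x) / (1 - κstar) :=
          div_nonneg (by linarith [hx.2]) (by linarith)
        have hl2 : (0:ℝ) ≤ (x - κstar) / (1 - κstar) :=
          div_nonneg (by linarith [hx.1]) (by linarith)
        have hne : (1:ℝ) - κstar ≠ 0 := by linarith
        have hl3 : (1 - x) / (1 - κstar) + (x - κstar) / (1 - κstar) = 1 := by
          rw [← add_div, div_eq_one_iff_eq hne]; ring
        have h := hS_convex.2 (Set.mem_Icc.mpr ⟨hκ0, hκ1⟩)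
          (Set.right_mem_Icc.mpr h01) hl1 hl2 hl3
        simp only [smul_eq_mul, mul_one] at h
        have harg : (1 - x) / (1 - κstar) * κstar + (x - κstar) / (1 - κstar) = x := by
          rw [div_mul_eq_mul_div, ← add_div, div_eq_iff hne]; ring
        rw [harg, hS1, mul_zero, add_zero] at h
        rw [div_mul_eq_mul_div] at h
        rw [le_div_iff₀ (by linarith : (0:ℝ) < 1 - κstar)] at h
        linarith
      have hgc : Continuous (fun x : ℝ => (1 - x) * s) :=
        (continuous_const.sub continuous_id').mul continuous_const
      have hmono := intervalIntegral.integral_mono_on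
        (f := fun x => (1 - κstar) * S x) (g := fun x => (1 - x) * s) hκ1
        ((iS κstar 1 hκ0 hκ1 le_rfl).const_mul (1 - κstar))
        (hgc.intervalIntegrable κstar 1) hptw
      beta_reduce at hmono
      rw [intervalIntegral.integral_const_mul] at hmono
      have hrhs : (∫ x in κstar..1, (1 - x) * s) = s * (1 - κstar) ^ 2 / 2 := by
        rw [intervalIntegral.integral_mul_const]
        have : (∫ x in κstar..1, (1 - x))
            = (∫ x in κstar..1, (1:ℝ)) - ∫ x in κstar..1, x := by
          rw [← intervalIntegral.integral_sub intervalIntegrable_const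
            intervalIntegrable_id]
        rw [this, intervalIntegral.integral_const, integral_id]
        simp only [smul_eq_mul]; ring
      rw [hrhs] at hmono
      rw [hKd]
      linarith [hmono]
    -- final combination
    have hMK := mul_le_mul_of_nonneg_left hKb hM
    have h1c : (0:ℝ) < 1 - κstar := by linarith
    have hMJ : M * J = M * K - (1 - κstar) * (M * s) := by
      have : J = K - (1 - κstar) * s := by linarith [eqJ]
      rw [this]; ring
    have step1 : 0 ≤ (1 - κstar) * (-((1 - κstar) * P2) + M * J) :=
      mul_nonneg h1c.le hF6'
    have step2 : (1 - κstar) ^ 2 * (M * s / 2) ≤ (1 - κstar) ^ 2 * (-P2) := by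
      nlinarith [hMK, step1, hMJ]
    have hfin : M * s / 2 ≤ -P2 :=
      (mul_le_mul_iff_right₀ (by positivity : (0:ℝ) < (1 - κstar) ^ 2)).mp step2
    rw [eqSplit]
    linarith [eqA, eqB, hP1, hfin]
end

section
/- Let R : ℝ → ℝ be differentiable and concave on [0,1] with R(0) = R(1) = 0, and let κ* ∈ [0,1] be a point where R attains its maximum over [0,1]. Let S : ℝ → ℝ be differentiable, convex, and nonincreasing on [0,1] with S(1) = 0. Then ∫_{κ*}^{1} R'(q)·S(q) dq ≥ −(1/2)·S(κ*)·R(κ*). -/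
open MeasureTheory intervalIntegral

theorem leaderboard_negative_part_bound
    (R : ℝ → ℝ)
    (hR_diff : DifferentiableOn ℝ R (Set.Icc 0 1))
    (hR_concave : ConcaveOn ℝ (Set.Icc 0 1) R)
    (hR0 : R 0 = 0) (hR1 : R 1 = 0)
    (κstar : ℝ) (hκ : κstar ∈ Set.Icc (0:ℝ) 1)
    (hκ_max : ∀ q ∈ Set.Icc (0:ℝ) 1, R q ≤ R κstar)
    (S : ℝ → ℝ)
    (hS_diff : DifferentiableOn ℝ S (Set.Icc 0 1))
    (hS_convex : ConvexOn ℝ (Set.Icc 0 1) S)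
    (hS_anti : AntitoneOn S (Set.Icc 0 1))
    (hS1 : S 1 = 0) :
    -(1/2) * S κstar * R κstar ≤ ∫ q in κstar..1, deriv R q * S q := by
  obtain ⟨hκ0, hκ1⟩ := hκ
  rcases eq_or_lt_of_le hκ1 with heq | hlt
  · rw [heq]
    simp [hR1]
  -- basic facts
  have h0mem : (0:ℝ) ∈ Set.Icc (0:ℝ) 1 := ⟨le_refl 0, zero_le_one⟩
  have h1mem : (1:ℝ) ∈ Set.Icc (0:ℝ) 1 := ⟨zero_le_one, le_refl 1⟩
  have hκmem : κstar ∈ Set.Icc (0:ℝ) 1 := ⟨hκ0, hκ1⟩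
  have hsub : Set.Icc κstar 1 ⊆ Set.Icc (0:ℝ) 1 := Set.Icc_subset_Icc hκ0 le_rfl
  have hRκ : 0 ≤ R κstar := by have := hκ_max 0 h0mem; linarith [hR0]
  have hSκ : 0 ≤ S κstar := by have := hS_anti hκmem h1mem hκ1; linarith [hS1]
  have h1κ : (0:ℝ) < 1 - κstar := by linarith
  set c : ℝ := S κstar / (1 - κstar) with hc
  have hc0 : 0 ≤ c := div_nonneg hSκ h1κ.le
  have hcκ : c * (1 - κstar) = S κstar := div_mul_cancel₀ _ h1κ.ne'
  -- differentiability on the open interval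
  have hdiffAt : ∀ q ∈ Set.Ioo κstar 1, DifferentiableAt ℝ R q := by
    intro q hq
    have hqm : q ∈ Set.Ioo (0:ℝ) 1 := ⟨lt_of_le_of_lt hκ0 hq.1, hq.2⟩
    exact (hR_diff q ⟨hqm.1.le, hqm.2.le⟩).differentiableAt
      (Icc_mem_nhds hqm.1 hqm.2)
  set d1 : ℝ := derivWithin R (Set.Icc 0 1) 1 with hd1
  -- deriv R bounds on the open interval
  have hderiv_le : ∀ q ∈ Set.Ioo κstar 1, deriv R q ≤ 0 := by
    intro q hq
    have hs := hR_concave.deriv_le_slope (hsub ⟨le_refl κstar, hκ1⟩)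
      (hsub ⟨hq.1.le, hq.2.le⟩) hq.1 (hdiffAt q hq)
    have hsl : slope R κstar q ≤ 0 := by
      rw [slope_def_field]
      apply div_nonpos_of_nonpos_of_nonneg
      · have := hκ_max q (hsub ⟨hq.1.le, hq.2.le⟩); linarith
      · linarith [hq.1]
    linarith
  have hderiv_ge : ∀ q ∈ Set.Ioo κstar 1, d1 ≤ deriv R q := by
    intro q hq
    have hqm : q ∈ Set.Icc (0:ℝ) 1 := hsub ⟨hq.1.le, hq.2.le⟩
    have h1 : slope R q 1 ≤ deriv R q :=
      hR_concave.slope_le_deriv hqm h1mem hq.2 (hdiffAt q hq)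
    have h2 : d1 ≤ slope R q 1 :=
      hR_concave.derivWithin_le_slope hqm h1mem hq.2 (hR_diff 1 h1mem)
    linarith
  -- integrability of deriv R times bounded a.e.-measurable functions
  have hres : volume.restrict (Set.Icc κstar 1) = volume.restrict (Set.Ioo κstar 1) :=
    (Measure.restrict_congr_set Ioo_ae_eq_Icc).symm
  have hmeas : Measurable (deriv R) := measurable_deriv R
  have habs : ∀ᵐ q ∂(volume.restrict (Set.Icc κstar 1)), |deriv R q| ≤ |d1| := by
    rw [hres]
    filter_upwards [ae_restrict_mem measurableSet_Ioo] with q hq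
    rw [abs_le]
    exact ⟨(neg_abs_le d1).trans (hderiv_ge q hq), (hderiv_le q hq).trans (abs_nonneg d1)⟩
  have hint_aux : ∀ (g : ℝ → ℝ) (M : ℝ),
      AEStronglyMeasurable g (volume.restrict (Set.Icc κstar 1)) →
      (∀ q ∈ Set.Icc κstar 1, |g q| ≤ M) →
      IntervalIntegrable (fun q => deriv R q * g q) volume κstar 1 := by
    intro g M hg hM
    rw [intervalIntegrable_iff_integrableOn_Icc_of_le hκ1]
    have hMint : IntegrableOn (fun _ : ℝ => |d1| * M) (Set.Icc κstar 1) volume :=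
      integrableOn_const measure_Icc_lt_top.ne
    apply Integrable.mono' hMint ((hmeas.aestronglyMeasurable.restrict).mul hg)
    filter_upwards [habs, ae_restrict_mem measurableSet_Icc] with q h1 h2
    calc ‖deriv R q * g q‖ = |deriv R q| * |g q| := abs_mul _ _
      _ ≤ |d1| * M := mul_le_mul h1 (hM q h2) (abs_nonneg _) (abs_nonneg _)
  -- continuity
  have hScont : ContinuousOn S (Set.Icc κstar 1) := (hS_diff.continuousOn).mono hsub
  have hRcont : ContinuousOn R (Set.Icc κstar 1) := (hR_diff.continuousOn).mono hsub
  -- S is bounded by S κstar on [κstar, 1]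
  have hS_nonneg : ∀ q ∈ Set.Icc κstar 1, 0 ≤ S q := by
    intro q hq
    have := hS_anti (hsub hq) h1mem hq.2
    linarith [hS1]
  have hS_le : ∀ q ∈ Set.Icc κstar 1, S q ≤ S κstar := fun q hq =>
    hS_anti hκmem (hsub hq) hq.1
  -- integrability facts
  have hint_RS : IntervalIntegrable (fun q => deriv R q * S q) volume κstar 1 :=
    hint_aux S (S κstar) (hScont.aestronglyMeasurable measurableSet_Icc)
      (fun q hq => by rw [abs_of_nonneg (hS_nonneg q hq)]; exact hS_le q hq)
  have hint_chord : IntervalIntegrable (fun q => deriv R q * (c * (1 - q))) volume κstar 1 :=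
    hint_aux (fun q => c * (1 - q)) (c * (1 - κstar))
      ((by fun_prop : Continuous fun q : ℝ => c * (1 - q)).aestronglyMeasurable.restrict)
      (fun q hq => by
        show |c * (1 - q)| ≤ c * (1 - κstar)
        rw [abs_of_nonneg (by nlinarith [hq.2] : (0:ℝ) ≤ c * (1 - q))]
        nlinarith [hq.1])
  have hint_d1q : IntervalIntegrable (fun q => deriv R q * (1 - q)) volume κstar 1 :=
    hint_aux (fun q => (1 - q)) (1 - κstar)
      ((by fun_prop : Continuous fun q : ℝ => 1 - q).aestronglyMeasurable.restrict)
      (fun q hq => by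
        show |1 - q| ≤ 1 - κstar
        rw [abs_of_nonneg (by linarith [hq.2] : (0:ℝ) ≤ 1 - q)]
        linarith [hq.1])
  have hint_R : IntervalIntegrable R volume κstar 1 :=
    hRcont.intervalIntegrable_of_Icc hκ1
  -- chord bound on S: S q ≤ c * (1 - q) on [κstar, 1]
  have hS_chord : ∀ q ∈ Set.Icc κstar 1, S q ≤ c * (1 - q) := by
    intro q hq
    have ha : (0:ℝ) ≤ (1 - q) / (1 - κstar) := div_nonneg (by linarith [hq.2]) h1κ.le
    have hb : (0:ℝ) ≤ (q - κstar) / (1 - κstar) := div_nonneg (by linarith [hq.1]) h1κ.le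
    have hab : (1 - q) / (1 - κstar) + (q - κstar) / (1 - κstar) = 1 := by
      field_simp
      ring
    have hcv := hS_convex.2 hκmem h1mem ha hb hab
    simp only [smul_eq_mul, mul_one, hS1] at hcv
    have hpt : (1 - q) / (1 - κstar) * κstar + (q - κstar) / (1 - κstar) = q := by
      field_simp; ring
    rw [hpt] at hcv
    calc S q ≤ (1 - q) / (1 - κstar) * S κstar + (q - κstar) / (1 - κstar) * 0 := hcv
      _ = c * (1 - q) := by rw [hc]; ring
  -- chord bound on R
  have hR_chord : ∀ q ∈ Set.Icc κstar 1, R κstar * ((1 - q) / (1 - κstar)) ≤ R q := by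
    intro q hq
    have ha : (0:ℝ) ≤ (1 - q) / (1 - κstar) := div_nonneg (by linarith [hq.2]) h1κ.le
    have hb : (0:ℝ) ≤ (q - κstar) / (1 - κstar) := div_nonneg (by linarith [hq.1]) h1κ.le
    have hab : (1 - q) / (1 - κstar) + (q - κstar) / (1 - κstar) = 1 := by
      field_simp
      ring
    have hcv := hR_concave.2 hκmem h1mem ha hb hab
    simp only [smul_eq_mul, mul_one, hR1] at hcv
    have hpt : (1 - q) / (1 - κstar) * κstar + (q - κstar) / (1 - κstar) = q := by
      field_simp; ring
    rw [hpt] at hcv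
    calc R κstar * ((1 - q) / (1 - κstar))
        = (1 - q) / (1 - κstar) * R κstar + (q - κstar) / (1 - κstar) * 0 := by ring
      _ ≤ R q := hcv
  -- Step 1: compare with the chord integrand
  have step1 : (∫ q in κstar..1, deriv R q * (c * (1 - q)))
      ≤ ∫ q in κstar..1, deriv R q * S q := by
    apply integral_mono_ae_restrict hκ1 hint_chord hint_RS
    rw [hres]
    filter_upwards [ae_restrict_mem measurableSet_Ioo] with q hq
    exact mul_le_mul_of_nonpos_left (hS_chord q ⟨hq.1.le, hq.2.le⟩) (hderiv_le q hq)
  -- Step 2: FTC computation of ∫ deriv R * (1 - q)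
  have hFcont : ContinuousOn (fun q : ℝ => R q * (1 - q)) (Set.Icc κstar 1) :=
    hRcont.mul (by fun_prop)
  have hFderiv : ∀ q ∈ Set.Ioo κstar 1,
      HasDerivAt (fun q : ℝ => R q * (1 - q)) (deriv R q * (1 - q) - R q) q := by
    intro q hq
    have h2 : HasDerivAt (fun x : ℝ => 1 - x) (-1) q := by
      simpa using (hasDerivAt_id q).const_sub 1
    have h3 : HasDerivAt (fun y : ℝ => R y * (1 - y)) (deriv R q * (1 - q) + R q * -1) q :=
      ((hdiffAt q hq).hasDerivAt).mul h2
    convert h3 using 1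
    ring
  have hFTC : (∫ q in κstar..1, (deriv R q * (1 - q) - R q))
      = R 1 * (1 - 1) - R κstar * (1 - κstar) :=
    integral_eq_sub_of_hasDerivAt_of_le hκ1 hFcont hFderiv (hint_d1q.sub hint_R)
  have hJ : (∫ q in κstar..1, deriv R q * (1 - q))
      = (∫ q in κstar..1, R q) - R κstar * (1 - κstar) := by
    have hsplit := integral_sub hint_d1q hint_R
    rw [hFTC] at hsplit
    linarith [hsplit]
  -- Step 3: lower bound on ∫ R
  have hlin : (∫ q in κstar..1, (1 - q)) = (1 - κstar)^2 / 2 := by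
    rw [integral_sub intervalIntegrable_const intervalIntegrable_id,
      intervalIntegral.integral_const, integral_id, smul_eq_mul]
    ring
  have hRint_lb : R κstar * (1 - κstar) / 2 ≤ ∫ q in κstar..1, R q := by
    have heqf : (fun q : ℝ => R κstar * ((1 - q) / (1 - κstar)))
        = fun q : ℝ => (R κstar / (1 - κstar)) * (1 - q) := by
      funext q; ring
    have hmono : (∫ q in κstar..1, R κstar * ((1 - q) / (1 - κstar)))
        ≤ ∫ q in κstar..1, R q := by
      apply integral_mono_on hκ1 _ hint_R hR_chord
      rw [heqf]
      exact ((by fun_prop : Continuous fun q : ℝ =>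
        (R κstar / (1 - κstar)) * (1 - q)).intervalIntegrable _ _)
    have hval : (∫ q in κstar..1, R κstar * ((1 - q) / (1 - κstar)))
        = R κstar * (1 - κstar) / 2 := by
      rw [heqf, intervalIntegral.integral_const_mul, hlin]
      field_simp
    linarith [hmono, hval]
  -- Assemble
  have hJlb : -(R κstar * (1 - κstar) / 2) ≤ ∫ q in κstar..1, deriv R q * (1 - q) := by
    rw [hJ]; linarith
  have hmul := mul_le_mul_of_nonneg_left hJlb hc0
  have hpull : (∫ q in κstar..1, deriv R q * (c * (1 - q)))
      = c * ∫ q in κstar..1, deriv R q * (1 - q) := by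
    rw [← intervalIntegral.integral_const_mul]
    congr 1
    funext q
    ring
  have hfinal : -(1/2) * S κstar * R κstar = c * -(R κstar * (1 - κstar) / 2) := by
    rw [← hcκ]; ring
  rw [hfinal]
  calc c * -(R κstar * (1 - κstar) / 2)
      ≤ c * ∫ q in κstar..1, deriv R q * (1 - q) := hmul
    _ = ∫ q in κstar..1, deriv R q * (c * (1 - q)) := hpull.symm
    _ ≤ ∫ q in κstar..1, deriv R q * S q := step1
end

section
/- Let R : ℝ → ℝ be differentiable and concave on [0,1] with R(0) = 0, and let κ* ∈ [0,1] be a point where R attains its maximum over [0,1]. Then for every measurable function x : [0,1] → [0,1], ∫_0^{1} R'(q)·x(q) dq ≤ R(κ*). (That is, the expected per-user contribution of any badge mechanism is at most the monopoly revenue R(κ*).) -/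
open MeasureTheory intervalIntegral Set

theorem contribution_at_most_monopoly_revenue
    (R : ℝ → ℝ)
    (hR_diff : DifferentiableOn ℝ R (Set.Icc 0 1))
    (hR_concave : ConcaveOn ℝ (Set.Icc 0 1) R)
    (hR0 : R 0 = 0)
    (κstar : ℝ) (hκ : κstar ∈ Set.Icc (0:ℝ) 1)
    (hκ_max : ∀ q ∈ Set.Icc (0:ℝ) 1, R q ≤ R κstar)
    (x : ℝ → ℝ) (hx_meas : Measurable x)
    (hx_mem : ∀ q ∈ Set.Icc (0:ℝ) 1, x q ∈ Set.Icc (0:ℝ) 1) :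
    (∫ q in (0:ℝ)..1, deriv R q * x q) ≤ R κstar := by
  obtain ⟨hκ0, hκ1⟩ := hκ
  have h01 : (0:ℝ) ≤ 1 := zero_le_one
  have h0mem : (0:ℝ) ∈ Set.Icc (0:ℝ) 1 := ⟨le_rfl, h01⟩
  have h1mem : (1:ℝ) ∈ Set.Icc (0:ℝ) 1 := ⟨h01, le_rfl⟩
  have hκmem : κstar ∈ Set.Icc (0:ℝ) 1 := ⟨hκ0, hκ1⟩
  -- differentiability at interior points
  have hdiff : ∀ q ∈ Set.Ioo (0:ℝ) 1, DifferentiableAt ℝ R q := fun q hq =>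
    (hR_diff q (Ioo_subset_Icc_self hq)).differentiableAt (Icc_mem_nhds hq.1 hq.2)
  have hcont : ContinuousOn R (Set.Icc 0 1) := hR_diff.continuousOn
  -- bound on deriv
  set D0 := derivWithin R (Set.Icc (0:ℝ) 1) 0 with hD0
  set D1 := derivWithin R (Set.Icc (0:ℝ) 1) 1 with hD1
  set C := max |D0| |D1| with hC
  have hbound : ∀ q ∈ Set.Ioo (0:ℝ) 1, ‖deriv R q‖ ≤ C := by
    intro q hq
    have hqmem : q ∈ Set.Icc (0:ℝ) 1 := Ioo_subset_Icc_self hq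
    have h1 : deriv R q ≤ D0 := by
      have a1 : deriv R q ≤ slope R 0 q :=
        hR_concave.deriv_le_slope h0mem hqmem hq.1 (hdiff q hq)
      have a2 : slope R 0 q ≤ D0 :=
        hR_concave.slope_le_derivWithin h0mem hqmem hq.1 (hR_diff 0 h0mem)
      exact a1.trans a2
    have h2 : D1 ≤ deriv R q := by
      have a1 : D1 ≤ slope R q 1 :=
        hR_concave.derivWithin_le_slope hqmem h1mem hq.2 (hR_diff 1 h1mem)
      have a2 : slope R q 1 ≤ deriv R q :=
        hR_concave.slope_le_deriv hqmem h1mem hq.2 (hdiff q hq)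
      exact a1.trans a2
    rw [Real.norm_eq_abs, abs_le]
    constructor
    · exact le_trans (neg_le_neg (le_max_right |D0| |D1|)) (le_trans (neg_abs_le D1) h2)
    · exact le_trans h1 (le_trans (le_abs_self D0) (le_max_left _ _))
  have hmeas : Measurable (deriv R) := measurable_deriv R
  -- truncated x
  set x' : ℝ → ℝ := fun q => max 0 (min (x q) 1) with hx'def
  have hx'_meas : Measurable x' := measurable_const.max (hx_meas.min measurable_const)
  have hx'_mem : ∀ q, x' q ∈ Set.Icc (0:ℝ) 1 := fun q =>
    ⟨le_max_left _ _, max_le h01 (min_le_right _ _)⟩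
  have hx'_eq : ∀ q ∈ Set.Icc (0:ℝ) 1, x' q = x q := by
    intro q hq
    have := hx_mem q hq
    simp only [hx'def, min_eq_left this.2, max_eq_right this.1]
  -- integrability of deriv R on Icc 0 1
  have hIntIoo : IntegrableOn (deriv R) (Set.Ioo (0:ℝ) 1) := by
    have hc : IntegrableOn (fun _ : ℝ => C) (Set.Ioo (0:ℝ) 1) :=
      integrableOn_const measure_Ioo_lt_top.ne
    refine Integrable.mono' hc hmeas.aestronglyMeasurable ?_
    exact (ae_restrict_iff' measurableSet_Ioo).2 (ae_of_all _ hbound)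
  have hIntIcc : IntegrableOn (deriv R) (Set.Icc (0:ℝ) 1) :=
    (integrableOn_Icc_iff_integrableOn_Ioo).2 hIntIoo
  have hIntPIcc : IntegrableOn (fun q => deriv R q * x' q) (Set.Icc (0:ℝ) 1) := by
    have := Integrable.bdd_mul (c := 1) hIntIcc hx'_meas.aestronglyMeasurable
      (ae_of_all _ fun q => by
        rw [Real.norm_eq_abs, abs_le]
        exact ⟨le_trans (by norm_num) (hx'_mem q).1, (hx'_mem q).2⟩)
    exact this.congr (ae_of_all _ (fun q => mul_comm _ _))
  have hII : ∀ a b : ℝ, 0 ≤ a → a ≤ b → b ≤ 1 →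
      IntervalIntegrable (fun q => deriv R q * x' q) volume a b ∧
      IntervalIntegrable (deriv R) volume a b := by
    intro a b ha hab hb1
    have hsub : Set.Ioc a b ⊆ Set.Icc (0:ℝ) 1 := fun q hq =>
      ⟨le_trans ha hq.1.le, le_trans hq.2 hb1⟩
    exact ⟨(intervalIntegrable_iff_integrableOn_Ioc_of_le hab).2 (hIntPIcc.mono_set hsub),
      (intervalIntegrable_iff_integrableOn_Ioc_of_le hab).2 (hIntIcc.mono_set hsub)⟩
  obtain ⟨hIP1, hID1⟩ := hII 0 κstar le_rfl hκ0 hκ1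
  obtain ⟨hIP2, hID2⟩ := hII κstar 1 hκ0 hκ1 le_rfl
  -- sign facts
  have hpos : ∀ q ∈ Set.Ioo 0 κstar, 0 ≤ deriv R q := by
    intro q hq
    have hqmem : q ∈ Set.Icc (0:ℝ) 1 := ⟨hq.1.le, le_trans hq.2.le hκ1⟩
    have a1 : slope R q κstar ≤ deriv R q :=
      hR_concave.slope_le_deriv hqmem hκmem hq.2 (hdiff q ⟨hq.1, lt_of_lt_of_le hq.2 hκ1⟩)
    refine le_trans ?_ a1
    rw [slope_def_field]
    exact div_nonneg (sub_nonneg.2 (hκ_max q hqmem)) (sub_nonneg.2 hq.2.le)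
  have hneg : ∀ q ∈ Set.Ioo κstar 1, deriv R q ≤ 0 := by
    intro q hq
    have hqmem : q ∈ Set.Icc (0:ℝ) 1 := ⟨le_trans hκ0 hq.1.le, hq.2.le⟩
    have a1 : deriv R q ≤ slope R κstar q :=
      hR_concave.deriv_le_slope hκmem hqmem hq.1 (hdiff q ⟨lt_of_le_of_lt hκ0 hq.1, hq.2⟩)
    refine le_trans a1 ?_
    rw [slope_def_field]
    exact div_nonpos_of_nonpos_of_nonneg (sub_nonpos.2 (hκ_max q hqmem))
      (sub_nonneg.2 hq.1.le)
  -- rewrite integrand with x'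
  have hcongr : (∫ q in (0:ℝ)..1, deriv R q * x q)
      = ∫ q in (0:ℝ)..1, deriv R q * x' q := by
    refine intervalIntegral.integral_congr (fun q hq => ?_)
    rw [Set.uIcc_of_le h01] at hq
    rw [hx'_eq q hq]
  rw [hcongr]
  -- split the integral
  have hsplit : (∫ q in (0:ℝ)..1, deriv R q * x' q)
      = (∫ q in (0:ℝ)..κstar, deriv R q * x' q)
        + ∫ q in κstar..(1:ℝ), deriv R q * x' q :=
    (intervalIntegral.integral_add_adjacent_intervals hIP1 hIP2).symm
  rw [hsplit]
  -- first piece ≤ ∫ deriv R = R κstar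
  have hIoo_ae1 : (volume.restrict (Set.Icc (0:ℝ) κstar))
      = volume.restrict (Set.Ioo (0:ℝ) κstar) :=
    (Measure.restrict_congr_set Ioo_ae_eq_Icc).symm
  have hfirst : (∫ q in (0:ℝ)..κstar, deriv R q * x' q)
      ≤ ∫ q in (0:ℝ)..κstar, deriv R q := by
    refine intervalIntegral.integral_mono_ae_restrict hκ0 hIP1 hID1 ?_
    rw [hIoo_ae1]
    refine (ae_restrict_iff' measurableSet_Ioo).2 (ae_of_all _ (fun q hq => ?_))
    calc deriv R q * x' q ≤ deriv R q * 1 :=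
          mul_le_mul_of_nonneg_left (hx'_mem q).2 (hpos q hq)
      _ = deriv R q := mul_one _
  have hFTC : (∫ q in (0:ℝ)..κstar, deriv R q) = R κstar := by
    have := intervalIntegral.integral_eq_sub_of_hasDerivAt_of_le hκ0
      (hcont.mono (Icc_subset_Icc le_rfl hκ1))
      (fun q hq => (hdiff q ⟨hq.1, lt_of_lt_of_le hq.2 hκ1⟩).hasDerivAt) hID1
    rw [this, hR0, sub_zero]
  -- second piece ≤ 0
  have hIoo_ae2 : (volume.restrict (Set.Icc κstar (1:ℝ)))
      = volume.restrict (Set.Ioo κstar (1:ℝ)) :=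
    (Measure.restrict_congr_set Ioo_ae_eq_Icc).symm
  have hsecond : (∫ q in κstar..(1:ℝ), deriv R q * x' q) ≤ 0 := by
    have h0 : (∫ q in κstar..(1:ℝ), (0:ℝ)) = 0 := by simp
    rw [← h0]
    refine intervalIntegral.integral_mono_ae_restrict hκ1 hIP2
      (intervalIntegrable_const) ?_
    rw [hIoo_ae2]
    refine (ae_restrict_iff' measurableSet_Ioo).2 (ae_of_all _ (fun q hq => ?_))
    exact mul_nonpos_of_nonpos_of_nonneg (hneg q hq) (hx'_mem q).1
  calc (∫ q in (0:ℝ)..κstar, deriv R q * x' q) + ∫ q in κstar..(1:ℝ), deriv R q * x' q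
      ≤ (∫ q in (0:ℝ)..κstar, deriv R q) + 0 := add_le_add hfirst hsecond
    _ = R κstar := by rw [add_zero, hFTC]
end

section
/- Let R : ℝ → ℝ be differentiable and concave on [0,1] with R(0) = R(1) = 0, and let κ* ∈ [0,1] be a point where R attains its maximum over [0,1]. Then for every measurable function x : [0,1] → [0,1], ∫_0^{1} R'(q)·x(q) dq ≤ 4 · (1/2)·R(1/2) = 2·R(1/2). (That is, for every tie-breaking parameter β ∈ [0,1], the median badge mechanism, whose expected per-user contribution is (1/2)·R(1/2), achieves a 4-approximation to the contribution of the optimal mechanism.) -/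
open MeasureTheory intervalIntegral

theorem median_mechanism_four_approx_tie_breaking
    (R : ℝ → ℝ)
    (hR_diff : DifferentiableOn ℝ R (Set.Icc 0 1))
    (hR_concave : ConcaveOn ℝ (Set.Icc 0 1) R)
    (hR0 : R 0 = 0) (hR1 : R 1 = 0)
    (κstar : ℝ) (hκ : κstar ∈ Set.Icc (0:ℝ) 1)
    (hκ_max : ∀ q ∈ Set.Icc (0:ℝ) 1, R q ≤ R κstar)
    (x : ℝ → ℝ) (hx_meas : Measurable x)
    (hx_mem : ∀ q ∈ Set.Icc (0:ℝ) 1, x q ∈ Set.Icc (0:ℝ) 1) :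
    (∫ q in (0:ℝ)..1, deriv R q * x q) ≤ 4 * ((1/2) * R (1/2)) := by
  obtain ⟨hκ0, hκ1⟩ := hκ
  have hmem0 : (0:ℝ) ∈ Set.Icc (0:ℝ) 1 := by norm_num
  have hmem1 : (1:ℝ) ∈ Set.Icc (0:ℝ) 1 := by norm_num
  have hRκ : 0 ≤ R κstar := hR0 ▸ hκ_max 0 hmem0
  -- derivative facts on the interior
  have hDiffAt : ∀ q ∈ Set.Ioo (0:ℝ) 1, DifferentiableAt ℝ R q := by
    intro q hq
    exact (hR_diff q (Set.Ioo_subset_Icc_self hq)).differentiableAt (Icc_mem_nhds hq.1 hq.2)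
  have hDA : ∀ q ∈ Set.Ioo (0:ℝ) 1, HasDerivAt R (deriv R q) q := fun q hq =>
    (hDiffAt q hq).hasDerivAt
  have hEq : ∀ q ∈ Set.Ioo (0:ℝ) 1, derivWithin R (Set.Icc 0 1) q = deriv R q := by
    intro q hq
    exact derivWithin_of_mem_nhds (Icc_mem_nhds hq.1 hq.2)
  have hanti := hR_concave.antitoneOn_derivWithin hR_diff
  set C : ℝ := max ‖derivWithin R (Set.Icc (0:ℝ) 1) 0‖ ‖derivWithin R (Set.Icc (0:ℝ) 1) 1‖ with hC
  have hbound : ∀ q ∈ Set.Ioo (0:ℝ) 1, ‖deriv R q‖ ≤ C := by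
    intro q hq
    rw [← hEq q hq]
    have h1 := hanti hmem0 (Set.Ioo_subset_Icc_self hq) hq.1.le
    have h2 := hanti (Set.Ioo_subset_Icc_self hq) hmem1 hq.2.le
    rw [Real.norm_eq_abs, abs_le]
    constructor
    · calc -C ≤ -‖derivWithin R (Set.Icc (0:ℝ) 1) 1‖ := neg_le_neg (le_max_right _ _)
        _ ≤ derivWithin R (Set.Icc (0:ℝ) 1) 1 := neg_abs_le _
        _ ≤ derivWithin R (Set.Icc (0:ℝ) 1) q := h2
    · calc derivWithin R (Set.Icc (0:ℝ) 1) q ≤ derivWithin R (Set.Icc (0:ℝ) 1) 0 := h1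
        _ ≤ ‖derivWithin R (Set.Icc (0:ℝ) 1) 0‖ := le_abs_self _
        _ ≤ C := le_max_left _ _
  -- sign of the derivative
  have hsign_pos : ∀ q ∈ Set.Ioo (0:ℝ) 1, q ≤ κstar → 0 ≤ deriv R q := by
    intro q hq hqκ
    rcases lt_or_eq_of_le hqκ with h | h
    · have hs := hR_concave.slope_le_deriv (Set.Ioo_subset_Icc_self hq) ⟨hκ0, hκ1⟩ h
        (hDiffAt q hq)
      refine le_trans ?_ hs
      rw [slope_def_field]
      apply div_nonneg
      · linarith [hκ_max q (Set.Ioo_subset_Icc_self hq)]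
      · linarith
    · subst h
      have hlm : IsLocalMax R q := by
        filter_upwards [Icc_mem_nhds hq.1 hq.2] with y hy using hκ_max y hy
      exact hlm.deriv_eq_zero.ge
  have hsign_neg : ∀ q ∈ Set.Ioo (0:ℝ) 1, κstar ≤ q → deriv R q ≤ 0 := by
    intro q hq hκq
    rcases lt_or_eq_of_le hκq with h | h
    · have hs := hR_concave.deriv_le_slope ⟨hκ0, hκ1⟩ (Set.Ioo_subset_Icc_self hq) h
        (hDiffAt q hq)
      refine hs.trans ?_
      rw [slope_def_field]
      apply div_nonpos_of_nonpos_of_nonneg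
      · linarith [hκ_max q (Set.Ioo_subset_Icc_self hq)]
      · linarith
    · have hlm : IsLocalMax R q := by
        filter_upwards [Icc_mem_nhds hq.1 hq.2] with y hy using h ▸ hκ_max y hy
      exact hlm.deriv_eq_zero.le
  -- integrability
  have hintx : IntegrableOn (fun q => deriv R q * x q) (Set.Ioo (0:ℝ) 1) volume := by
    apply Measure.integrableOn_of_bounded (M := C) measure_Ioo_lt_top.ne
      ((measurable_deriv R).mul hx_meas).aestronglyMeasurable
    rw [ae_restrict_iff' measurableSet_Ioo]
    filter_upwards with q hq
    have hx' := hx_mem q (Set.Ioo_subset_Icc_self hq)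
    have hxn : ‖x q‖ ≤ 1 := by
      rw [Real.norm_eq_abs, abs_le]; exact ⟨by linarith [hx'.1], hx'.2⟩
    calc ‖deriv R q * x q‖ = ‖deriv R q‖ * ‖x q‖ := norm_mul _ _
      _ ≤ C * 1 := mul_le_mul (hbound q hq) hxn (norm_nonneg _)
          (le_trans (norm_nonneg _) (hbound q hq))
      _ = C := mul_one C
  have hintd : IntegrableOn (deriv R) (Set.Ioo (0:ℝ) 1) volume := by
    apply Measure.integrableOn_of_bounded (M := C) measure_Ioo_lt_top.ne
      (measurable_deriv R).aestronglyMeasurable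
    rw [ae_restrict_iff' measurableSet_Ioo]
    filter_upwards with q hq
    exact hbound q hq
  have hII : IntervalIntegrable (fun q => deriv R q * x q) volume 0 1 := by
    rw [intervalIntegrable_iff_integrableOn_Ioc_of_le (by norm_num : (0:ℝ) ≤ 1)]
    exact hintx.congr_set_ae Ioo_ae_eq_Ioc.symm
  have hsubIoo : Set.Ioo (0:ℝ) κstar ⊆ Set.Ioo (0:ℝ) 1 := Set.Ioo_subset_Ioo le_rfl hκ1
  have hIId : IntervalIntegrable (deriv R) volume 0 κstar := by
    rw [intervalIntegrable_iff_integrableOn_Ioc_of_le hκ0]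
    exact (hintd.mono_set hsubIoo).congr_set_ae Ioo_ae_eq_Ioc.symm
  have hsub1 : Set.uIcc (0:ℝ) κstar ⊆ Set.uIcc (0:ℝ) 1 := by
    rw [Set.uIcc_of_le hκ0, Set.uIcc_of_le (by norm_num : (0:ℝ) ≤ 1)]
    exact Set.Icc_subset_Icc le_rfl hκ1
  have hsub2 : Set.uIcc κstar 1 ⊆ Set.uIcc (0:ℝ) 1 := by
    rw [Set.uIcc_of_le hκ1, Set.uIcc_of_le (by norm_num : (0:ℝ) ≤ 1)]
    exact Set.Icc_subset_Icc hκ0 le_rfl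
  have hsplit := intervalIntegral.integral_add_adjacent_intervals
    (hII.mono_set hsub1) (hII.mono_set hsub2)
  -- first part: ∫₀^κ* ≤ R κstar
  have h1 : (∫ q in (0:ℝ)..κstar, deriv R q * x q) ≤ R κstar := by
    have e1 : (∫ q in (0:ℝ)..κstar, deriv R q * x q)
        = ∫ q in Set.Ioo (0:ℝ) κstar, deriv R q * x q := by
      rw [intervalIntegral.integral_of_le hκ0]
      exact (setIntegral_congr_set Ioo_ae_eq_Ioc).symm
    have e2 : (∫ q in Set.Ioo (0:ℝ) κstar, deriv R q * x q)
        ≤ ∫ q in Set.Ioo (0:ℝ) κstar, deriv R q := by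
      refine setIntegral_mono_on (hintx.mono_set hsubIoo) (hintd.mono_set hsubIoo)
        measurableSet_Ioo ?_
      intro q hq
      have hq' : q ∈ Set.Ioo (0:ℝ) 1 := ⟨hq.1, lt_of_lt_of_le hq.2 hκ1⟩
      have hd := hsign_pos q hq' hq.2.le
      exact mul_le_of_le_one_right hd (hx_mem q (Set.Ioo_subset_Icc_self hq')).2
    have e3 : (∫ q in Set.Ioo (0:ℝ) κstar, deriv R q) = R κstar := by
      have hftc := intervalIntegral.integral_eq_sub_of_hasDeriv_right_of_le hκ0
        (hR_diff.continuousOn.mono (Set.Icc_subset_Icc le_rfl hκ1))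
        (fun t ht => (hDA t ⟨ht.1, lt_of_lt_of_le ht.2 hκ1⟩).hasDerivWithinAt) hIId
      rw [intervalIntegral.integral_of_le hκ0] at hftc
      rw [setIntegral_congr_set Ioo_ae_eq_Ioc, hftc, hR0, sub_zero]
    rw [e1, ← e3]
    exact e2
  -- second part: ∫_κ*^1 ≤ 0
  have h2 : (∫ q in κstar..(1:ℝ), deriv R q * x q) ≤ 0 := by
    rw [intervalIntegral.integral_of_le hκ1, ← setIntegral_congr_set Ioo_ae_eq_Ioc]
    apply setIntegral_nonpos measurableSet_Ioo
    intro q hq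
    have hq' : q ∈ Set.Ioo (0:ℝ) 1 := ⟨lt_of_le_of_lt hκ0 hq.1, hq.2⟩
    have hd := hsign_neg q hq' hq.1.le
    have hx' := hx_mem q (Set.Ioo_subset_Icc_self hq')
    exact mul_nonpos_iff.2 (Or.inr ⟨hd, hx'.1⟩)
  -- concavity: R κstar ≤ 2 * R (1/2)
  have hκ2 : R κstar ≤ 2 * R (1/2) := by
    rcases le_total κstar (1/2 : ℝ) with hc | hc
    · set a : ℝ := (1/2) / (1 - κstar) with ha
      have hden : (0:ℝ) < 1 - κstar := by linarith
      have ha0 : 0 ≤ a := div_nonneg (by norm_num) hden.le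
      have ha1 : a ≤ 1 := by rw [div_le_one hden]; linarith
      have hahalf : 1/2 ≤ a := by rw [le_div_iff₀ hden]; nlinarith
      have hcomb := hR_concave.2 ⟨hκ0, hκ1⟩ hmem1 ha0 (by linarith : (0:ℝ) ≤ 1 - a)
        (by ring)
      have hval : a • κstar + (1-a) • (1:ℝ) = 1/2 := by
        simp only [smul_eq_mul, ha]
        field_simp
        ring
      rw [hval, hR1] at hcomb
      simp only [smul_eq_mul, mul_zero, add_zero] at hcomb
      nlinarith
    · set b : ℝ := (1/2) / κstar with hb
      have hden : (0:ℝ) < κstar := by linarith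
      have hb0 : 0 ≤ b := div_nonneg (by norm_num) hden.le
      have hb1 : b ≤ 1 := by rw [div_le_one hden]; linarith
      have hbhalf : 1/2 ≤ b := by rw [le_div_iff₀ hden]; nlinarith
      have hcomb := hR_concave.2 hmem0 ⟨hκ0, hκ1⟩ (by linarith : (0:ℝ) ≤ 1 - b) hb0
        (by ring)
      have hval : (1-b) • (0:ℝ) + b • κstar = 1/2 := by
        simp only [smul_eq_mul, hb]
        field_simp
        ring
      rw [hval, hR0] at hcomb
      simp only [smul_eq_mul, mul_zero, zero_add] at hcomb
      nlinarith
  have hfinal : (∫ q in (0:ℝ)..1, deriv R q * x q) ≤ R κstar := by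
    rw [← hsplit]; linarith
  linarith
end

section
/- Let R : ℝ → ℝ be differentiable and concave on [0,1] with R(0) = R(1) = 0, and let κ* ∈ [0,1] be a point where R attains its maximum over [0,1]. Then for every measurable function x : [0,1] → [0,1], ∫_0^{1} R'(q)·x(q) dq ≤ 2 · ∫_0^{1} R(q) dq. (That is, for every tie-breaking parameter β ∈ [0,1], the leaderboard mechanism, whose expected per-user contribution under linear status is ∫_0^1 R(q) dq, is a 2-approximation to the total contribution of the optimal mechanism.) -/
open MeasureTheory intervalIntegral Set

theorem leaderboard_two_approx_tie_breaking
    (R : ℝ → ℝ)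
    (hR_diff : DifferentiableOn ℝ R (Set.Icc 0 1))
    (hR_concave : ConcaveOn ℝ (Set.Icc 0 1) R)
    (hR0 : R 0 = 0) (hR1 : R 1 = 0)
    (κstar : ℝ) (hκ : κstar ∈ Set.Icc (0:ℝ) 1)
    (hκ_max : ∀ q ∈ Set.Icc (0:ℝ) 1, R q ≤ R κstar)
    (x : ℝ → ℝ) (hx_meas : Measurable x)
    (hx_mem : ∀ q ∈ Set.Icc (0:ℝ) 1, x q ∈ Set.Icc (0:ℝ) 1) :
    (∫ q in (0:ℝ)..1, deriv R q * x q) ≤ 2 * ∫ q in (0:ℝ)..1, R q := by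
  set S : Set ℝ := Set.Icc 0 1 with hS
  set g : ℝ → ℝ := fun q => derivWithin R S q with hg
  obtain ⟨hκ0, hκ1⟩ := hκ
  have hκS : κstar ∈ S := ⟨hκ0, hκ1⟩
  have h0S : (0:ℝ) ∈ S := ⟨le_rfl, zero_le_one⟩
  have h1S : (1:ℝ) ∈ S := ⟨zero_le_one, le_rfl⟩
  have hganti : AntitoneOn g S := hR_concave.antitoneOn_derivWithin hR_diff
  have hgint : ∀ a b : ℝ, a ∈ S → b ∈ S → IntervalIntegrable g volume a b := by
    intro a b ha hb
    exact (hganti.mono (uIcc_subset_Icc ha hb)).intervalIntegrable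
  have hRcont : ContinuousOn R S := hR_diff.continuousOn
  -- `g` equals `deriv R` on the open interior
  have hg_eq : ∀ q ∈ Ioo (0:ℝ) 1, g q = deriv R q := by
    intro q hq
    exact derivWithin_of_mem_nhds (Icc_mem_nhds hq.1 hq.2)
  have hdiffat : ∀ q ∈ Ioo (0:ℝ) 1, DifferentiableAt ℝ R q := by
    intro q hq
    exact (hR_diff q ⟨hq.1.le, hq.2.le⟩).differentiableAt (Icc_mem_nhds hq.1 hq.2)
  -- FTC for g
  have hFTC : ∀ a b : ℝ, a ∈ S → b ∈ S → a ≤ b → (∫ q in a..b, g q) = R b - R a := by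
    intro a b ha hb hab
    apply integral_eq_sub_of_hasDeriv_right_of_le hab
      (hRcont.mono (Icc_subset_Icc ha.1 hb.2))
    · intro q hq
      have hqo : q ∈ Ioo (0:ℝ) 1 := ⟨lt_of_le_of_lt ha.1 hq.1, lt_of_lt_of_le hq.2 hb.2⟩
      have := (hdiffat q hqo).hasDerivAt
      rw [hg_eq q hqo]
      exact this.hasDerivWithinAt
    · exact hgint a b ha hb
  -- sign of g
  have hsign_pos : ∀ q ∈ S, q < κstar → 0 ≤ g q := by
    intro q hq hlt
    have hslope : slope R q κstar ≤ g q :=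
      hR_concave.slope_le_derivWithin hq hκS hlt (hR_diff q hq)
    refine le_trans ?_ hslope
    rw [slope_def_field]
    apply div_nonneg
    · simp [sub_nonneg, hκ_max q hq]
    · linarith
  have hsign_neg : ∀ q ∈ S, κstar < q → g q ≤ 0 := by
    intro q hq hlt
    have hslope : g q ≤ slope R κstar q :=
      hR_concave.derivWithin_le_slope hκS hq hlt (hR_diff q hq)
    refine hslope.trans ?_
    rw [slope_def_field]
    apply div_nonpos_of_nonpos_of_nonneg
    · simp [sub_nonpos, hκ_max q hq]
    · linarith
  -- boundedness of g on the interior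
  set C : ℝ := max |g 0| |g 1| with hC
  have hgbdd : ∀ q ∈ Ioo (0:ℝ) 1, |g q| ≤ C := by
    intro q hq
    have h1 : g q ≤ g 0 := hganti h0S ⟨hq.1.le, hq.2.le⟩ hq.1.le
    have h2 : g 1 ≤ g q := hganti ⟨hq.1.le, hq.2.le⟩ h1S hq.2.le
    rw [abs_le]
    constructor
    · calc -C ≤ -|g 1| := by simp [hC]
        _ ≤ g 1 := neg_abs_le _
        _ ≤ g q := h2
    · calc g q ≤ g 0 := h1
        _ ≤ |g 0| := le_abs_self _
        _ ≤ C := le_max_left _ _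
  -- integrability of the integrand
  have hmeas : Measurable fun q => deriv R q * x q := (measurable_deriv R).mul hx_meas
  have hint_main : IntervalIntegrable (fun q => deriv R q * x q) volume 0 1 := by
    rw [intervalIntegrable_iff_integrableOn_Ioo_of_le zero_le_one]
    apply Measure.integrableOn_of_bounded (by simp [measure_Ioo_lt_top.ne]) hmeas.aestronglyMeasurable (M := C)
    filter_upwards [ae_restrict_mem measurableSet_Ioo] with q hq
    have hx01 := hx_mem q ⟨hq.1.le, hq.2.le⟩
    rw [Real.norm_eq_abs, abs_mul, ← hg_eq q hq]
    calc |g q| * |x q| ≤ C * 1 := by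
          apply mul_le_mul (hgbdd q hq) _ (abs_nonneg _) ((abs_nonneg _).trans (hgbdd q hq))
          rw [abs_le]; constructor <;> linarith [hx01.1, hx01.2]
      _ = C := mul_one C
  -- the majorant φ
  set φ : ℝ → ℝ := fun q => if q ≤ κstar then g q else 0 with hφ
  have hφ_int1 : IntervalIntegrable φ volume 0 κstar := by
    apply (hgint 0 κstar h0S hκS).congr
    intro q hq
    rw [uIoc_of_le hκ0] at hq
    simp [hφ, hq.2]
  have hφ_int2 : IntervalIntegrable φ volume κstar 1 := by
    apply (intervalIntegrable_const (c := (0:ℝ))).congr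
    intro q hq
    rw [uIoc_of_le hκ1] at hq
    simp [hφ, not_le.mpr hq.1]
  have hφ_int : IntervalIntegrable φ volume 0 1 := hφ_int1.trans hφ_int2
  have hφ_val : (∫ q in (0:ℝ)..1, φ q) = R κstar := by
    rw [← integral_add_adjacent_intervals hφ_int1 hφ_int2]
    have e1 : (∫ q in (0:ℝ)..κstar, φ q) = ∫ q in (0:ℝ)..κstar, g q := by
      apply integral_congr
      intro q hq
      rw [uIcc_of_le hκ0] at hq
      simp [hφ, hq.2]
    have e2 : (∫ q in κstar..(1:ℝ), φ q) = ∫ q in κstar..(1:ℝ), (0:ℝ) := by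
      apply intervalIntegral.integral_congr_ae
      filter_upwards with q hq
      rw [uIoc_of_le hκ1] at hq
      simp [hφ, not_le.mpr hq.1]
    rw [intervalIntegral.integral_zero] at e2
    rw [e1, e2, hFTC 0 κstar h0S hκS hκ0, hR0]
    ring
  -- main bound: ∫ deriv R * x ≤ R κstar
  have hbound1 : (∫ q in (0:ℝ)..1, deriv R q * x q) ≤ R κstar := by
    rw [← hφ_val]
    apply integral_mono_ae_restrict zero_le_one hint_main hφ_int
    have hne : ∀ᵐ q : ℝ, q ≠ κstar ∧ q ≠ 0 ∧ q ≠ 1 := by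
      have h1 : ∀ᵐ q : ℝ, q ≠ κstar := by
        rw [ae_iff]; simp only [ne_eq, not_not, setOf_eq_eq_singleton]; exact measure_singleton κstar
      have h2 : ∀ᵐ q : ℝ, q ≠ (0:ℝ) := by
        rw [ae_iff]; simp only [ne_eq, not_not, setOf_eq_eq_singleton]; exact measure_singleton (0:ℝ)
      have h3 : ∀ᵐ q : ℝ, q ≠ (1:ℝ) := by
        rw [ae_iff]; simp only [ne_eq, not_not, setOf_eq_eq_singleton]; exact measure_singleton (1:ℝ)
      filter_upwards [h1, h2, h3] with q hq1 hq2 hq3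
      exact ⟨hq1, hq2, hq3⟩
    filter_upwards [ae_restrict_mem measurableSet_Icc, ae_restrict_of_ae hne] with q hq hqne
    obtain ⟨hqκ, hq0, hq1'⟩ := hqne
    have hqo : q ∈ Ioo (0:ℝ) 1 := ⟨lt_of_le_of_ne hq.1 (Ne.symm hq0), lt_of_le_of_ne hq.2 hq1'⟩
    have hx01 := hx_mem q hq
    rw [← hg_eq q hqo]
    rcases lt_or_gt_of_ne hqκ with hlt | hgt
    · have hφq : φ q = g q := by simp [hφ, hlt.le]
      rw [hφq]
      exact mul_le_of_le_one_right (hsign_pos q hq hlt) hx01.2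
    · have hφq : φ q = 0 := by simp [hφ, not_le.mpr hgt]
      rw [hφq]
      exact mul_nonpos_of_nonpos_of_nonneg (hsign_neg q hq hgt) hx01.1
  -- second part: R κstar ≤ 2 * ∫ R
  have hRint : ∀ a b : ℝ, a ∈ S → b ∈ S → IntervalIntegrable R volume a b := by
    intro a b ha hb
    exact (hRcont.mono (uIcc_subset_Icc ha hb)).intervalIntegrable
  have hsplit : (∫ q in (0:ℝ)..1, R q) =
      (∫ q in (0:ℝ)..κstar, R q) + ∫ q in κstar..(1:ℝ), R q :=
    (integral_add_adjacent_intervals (hRint 0 κstar h0S hκS) (hRint κstar 1 hκS h1S)).symm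
  have hpiece1 : κstar * R κstar / 2 ≤ ∫ q in (0:ℝ)..κstar, R q := by
    rcases eq_or_lt_of_le hκ0 with heq | hpos
    · rw [← heq]; simp
    · have hpt : ∀ q ∈ Icc (0:ℝ) κstar, (R κstar / κstar) * q ≤ R q := by
        intro q hq
        have hb0 : (0:ℝ) ≤ q / κstar := div_nonneg hq.1 hκ0
        have hb1 : q / κstar ≤ 1 := (div_le_one hpos).mpr hq.2
        have := hR_concave.2 h0S hκS (by linarith : (0:ℝ) ≤ 1 - q / κstar) hb0 (by ring)
        simp only [smul_eq_mul, mul_zero, mul_one] at this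
        rw [hR0] at this
        have hx' : (0:ℝ) + q / κstar * κstar = q := by
          field_simp
          ring
        rw [hx'] at this
        calc (R κstar / κstar) * q = q / κstar * R κstar := by ring
          _ ≤ R q := by linarith
      have hmono := integral_mono_on hκ0
        ((continuous_const.mul continuous_id).intervalIntegrable 0 κstar)
        (hRint 0 κstar h0S hκS) hpt
      simp only [Pi.mul_apply, Pi.sub_apply, id_eq] at hmono
      have hcalc : (∫ q in (0:ℝ)..κstar, (R κstar / κstar) * q) = κstar * R κstar / 2 := by
        rw [intervalIntegral.integral_const_mul, integral_id]
        field_simp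
        ring
      linarith [hmono, hcalc.symm.le]
  have hpiece2 : (1 - κstar) * R κstar / 2 ≤ ∫ q in κstar..(1:ℝ), R q := by
    rcases eq_or_lt_of_le hκ1 with heq | hlt1
    · rw [heq]; simp
    · have hpt : ∀ q ∈ Icc κstar (1:ℝ), (R κstar / (1 - κstar)) * (1 - q) ≤ R q := by
        intro q hq
        have hd : (0:ℝ) < 1 - κstar := by linarith
        have hb0 : (0:ℝ) ≤ (1 - q) / (1 - κstar) := div_nonneg (by linarith [hq.2]) hd.le
        have hb1 : (1 - q) / (1 - κstar) ≤ 1 := (div_le_one hd).mpr (by linarith [hq.1])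
        have := hR_concave.2 hκS h1S hb0 (by linarith : (0:ℝ) ≤ 1 - (1 - q) / (1 - κstar))
          (by ring)
        simp only [smul_eq_mul, mul_one] at this
        rw [hR1] at this
        have hx' : (1 - q) / (1 - κstar) * κstar + (1 - (1 - q) / (1 - κstar)) = q := by
          field_simp
          ring
        rw [hx'] at this
        calc (R κstar / (1 - κstar)) * (1 - q) = (1 - q) / (1 - κstar) * R κstar := by ring
          _ ≤ R q := by linarith
      have hmono := integral_mono_on hκ1
        ((continuous_const.mul (continuous_const.sub continuous_id)).intervalIntegrable κstar 1)
        (hRint κstar 1 hκS h1S) hpt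
      simp only [Pi.mul_apply, Pi.sub_apply, id_eq] at hmono
      have hcalc : (∫ q in κstar..(1:ℝ), (R κstar / (1 - κstar)) * (1 - q))
          = (1 - κstar) * R κstar / 2 := by
        rw [intervalIntegral.integral_const_mul]
        have : (∫ q in κstar..(1:ℝ), (1 - q))
            = (∫ q in κstar..(1:ℝ), (1:ℝ)) - ∫ q in κstar..(1:ℝ), q :=
          intervalIntegral.integral_sub (intervalIntegrable_const) intervalIntegral.intervalIntegrable_id
        rw [this, integral_id, intervalIntegral.integral_const]
        have hd : (1:ℝ) - κstar ≠ 0 := by linarith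
        field_simp
        ring
      linarith [hmono, hcalc.symm.le]
  have hRκ_le : R κstar ≤ 2 * ∫ q in (0:ℝ)..1, R q := by
    rw [hsplit]
    linarith [hpiece1, hpiece2]
  exact hbound1.trans hRκ_le
end

section
/- Let n ≥ 2 be an integer, let w : {1,…,n} → ℝ be nonincreasing (w_1 ≥ w_2 ≥ … ≥ w_n), and let k ∈ {0,…,n} be such that w_i ≥ 0 for all i ≤ k and w_i < 0 for all i > k. For a badge assignment r : {1,…,n} → ℕ and each i, let n_g(i,r) = |{j ≠ i : r_j > r_i}| and define σ_i(r) = 1 − n_g(i,r)/(n−1). Then for every badge assignment r, ∑_{i=1}^{n} w_i·σ_i(r) ≤ ∑_{i=1}^{k} w_i + ∑_{i=k+1}^{n} w_i·(1 − (i−1)/(n−1)); that is, when ties impose no cost (β = 0) the virtual surplus is maximized by grouping all users with nonnegative weight into the single highest badge and assigning distinct decreasing badges to the users with negative weight. -/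
open Finset

/-- Status value of user `i` under badge assignment `r` with tie-breaking parameter
`β = 0`: `1 - n_g/(n-1)`, where `n_g` counts other users with a strictly higher badge
(users with an equal badge impose no status loss). -/
noncomputable def statusNoTieCost (n : ℕ) (r : Fin n → ℕ) (i : Fin n) : ℝ :=
  1 - ((Finset.univ.filter (fun j => j ≠ i ∧ r i < r j)).card : ℝ) / (n - 1)

/-- Number of other users with a strictly higher badge. -/
def ngc (n : ℕ) (r : Fin n → ℕ) (i : Fin n) : ℕ :=
  (Finset.univ.filter (fun j => j ≠ i ∧ r i < r j)).card

lemma reindex_filter_le {M : Type*} [AddCommMonoid M] (n a : ℕ) (G : ℕ → M) :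
    ∑ i ∈ (univ : Finset (Fin n)).filter (fun i : Fin n => a ≤ (i : ℕ)), G (i : ℕ)
      = ∑ j ∈ Finset.range (n - a), G (a + j) := by
  have h0 : ∑ i ∈ (univ : Finset (Fin n)).filter (fun i : Fin n => a ≤ (i : ℕ)), G (i : ℕ)
      = ∑ i : Fin n, (fun j : ℕ => if a ≤ j then G j else 0) (i : ℕ) := by
    rw [Finset.sum_filter]
  rw [h0, Fin.sum_univ_eq_sum_range (fun j : ℕ => if a ≤ j then G j else 0) n,
    ← Finset.sum_filter]
  have h : (Finset.range n).filter (fun j => a ≤ j) = Finset.Ico a n := by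
    ext x; simp [Finset.mem_Ico]; omega
  rw [h, Finset.sum_Ico_eq_sum_range]

lemma sum_ngc_le (n : ℕ) (r : Fin n → ℕ) (S : Finset (Fin n)) :
    2 * ∑ i ∈ S, ngc n r i ≤ S.card * (S.card - 1) + 2 * (S.card * (n - S.card)) := by
  have hsplit : ∀ i : Fin n, ngc n r i =
      (∑ j ∈ S, if j ≠ i ∧ r i < r j then 1 else 0)
      + ∑ j ∈ Sᶜ, if j ≠ i ∧ r i < r j then 1 else 0 := by
    intro i
    rw [ngc, Finset.card_filter, ← Finset.sum_add_sum_compl S]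
  have h2 : ∑ i ∈ S, ∑ j ∈ Sᶜ, (if j ≠ i ∧ r i < r j then 1 else 0)
      ≤ S.card * (n - S.card) := by
    calc ∑ i ∈ S, ∑ j ∈ Sᶜ, (if j ≠ i ∧ r i < r j then 1 else 0)
        ≤ ∑ i ∈ S, ∑ j ∈ Sᶜ, 1 := by
          apply Finset.sum_le_sum; intro i _; apply Finset.sum_le_sum; intro j _
          split <;> omega
      _ = S.card * (n - S.card) := by
          simp [Finset.sum_const, Finset.card_compl, Fintype.card_fin]
  have h1 : 2 * ∑ i ∈ S, ∑ j ∈ S, (if j ≠ i ∧ r i < r j then 1 else 0)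
      ≤ S.card * (S.card - 1) := by
    have hcomm : ∑ i ∈ S, ∑ j ∈ S, (if j ≠ i ∧ r i < r j then 1 else 0)
        = ∑ i ∈ S, ∑ j ∈ S, (if i ≠ j ∧ r j < r i then 1 else 0) :=
      Finset.sum_comm
    have hdbl : 2 * ∑ i ∈ S, ∑ j ∈ S, (if j ≠ i ∧ r i < r j then 1 else 0)
        = ∑ i ∈ S, ∑ j ∈ S, ((if j ≠ i ∧ r i < r j then 1 else 0)
            + (if i ≠ j ∧ r j < r i then 1 else 0)) := by
      rw [two_mul]
      nth_rewrite 2 [hcomm]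
      rw [← Finset.sum_add_distrib]
      apply Finset.sum_congr rfl; intro i _
      rw [← Finset.sum_add_distrib]
    rw [hdbl]
    have hlast : ∀ i ∈ S, (∑ j ∈ S, if i = j then (0:ℕ) else 1) = S.card - 1 := by
      intro i hi
      rw [← Finset.insert_erase hi, Finset.sum_insert (Finset.notMem_erase i S), if_pos rfl,
        Finset.card_insert_of_notMem (Finset.notMem_erase i S)]
      rw [Finset.sum_congr rfl (fun j hj => if_neg (Finset.ne_of_mem_erase hj).symm)]
      rw [Finset.sum_const, smul_eq_mul, mul_one]
      omega
    calc ∑ i ∈ S, ∑ j ∈ S, ((if j ≠ i ∧ r i < r j then 1 else 0)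
            + (if i ≠ j ∧ r j < r i then 1 else 0))
        ≤ ∑ i ∈ S, ∑ j ∈ S, (if i = j then 0 else 1) := by
          apply Finset.sum_le_sum; intro i _; apply Finset.sum_le_sum; intro j _
          rcases eq_or_ne i j with hij | hij
          · subst hij; simp
          · rw [if_neg hij]
            rcases lt_trichotomy (r i) (r j) with h | h | h
            · rw [if_pos ⟨hij.symm, h⟩, if_neg (fun hc => absurd hc.2 (by omega))]
            · rw [if_neg (fun hc => absurd hc.2 (by omega)),
                if_neg (fun hc => absurd hc.2 (by omega))]
              omega
            · rw [if_neg (fun hc => absurd hc.2 (by omega)), if_pos ⟨hij, h⟩]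
      _ = S.card * (S.card - 1) := by
          rw [Finset.sum_congr rfl hlast, Finset.sum_const, smul_eq_mul]
  calc 2 * ∑ i ∈ S, ngc n r i
      = 2 * ∑ i ∈ S, ∑ j ∈ S, (if j ≠ i ∧ r i < r j then 1 else 0)
        + 2 * ∑ i ∈ S, ∑ j ∈ Sᶜ, (if j ≠ i ∧ r i < r j then 1 else 0) := by
        rw [Finset.sum_congr rfl (fun i _ => hsplit i), Finset.sum_add_distrib]; ring
    _ ≤ S.card * (S.card - 1) + 2 * (S.card * (n - S.card)) := by omega

lemma tail_nat (n t : ℕ) (r : Fin n → ℕ) :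
    ∑ i ∈ univ.filter (fun i : Fin n => t ≤ (i : ℕ)), ngc n r i
      ≤ ∑ i ∈ univ.filter (fun i : Fin n => t ≤ (i : ℕ)), (i : ℕ) := by
  set S := univ.filter (fun i : Fin n => t ≤ (i : ℕ)) with hS
  have hcard : S.card = n - t := by
    rw [hS, Finset.card_eq_sum_ones, reindex_filter_le n t (fun _ => 1),
      Finset.sum_const, smul_eq_mul, mul_one, Finset.card_range]
  have hsum : ∑ i ∈ S, (i : ℕ) = ∑ j ∈ Finset.range (n - t), (t + j) := by
    rw [hS, reindex_filter_le n t (fun j => j)]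
  have hgauss : 2 * ∑ j ∈ Finset.range (n - t), j = (n - t) * ((n - t) - 1) := by
    have := Finset.sum_range_id_mul_two (n - t)
    omega
  have h1 := sum_ngc_le n r S
  rw [hcard] at h1
  have h2 : ∑ j ∈ Finset.range (n - t), (t + j)
      = (n - t) * t + ∑ j ∈ Finset.range (n - t), j := by
    rw [Finset.sum_add_distrib, Finset.sum_const, smul_eq_mul, Finset.card_range]
  have h3 : n - (n - t) ≤ t := by omega
  have h4 : (n - t) * (n - (n - t)) ≤ (n - t) * t := Nat.mul_le_mul_left _ h3
  omega

-- real version of the tail bound for the shifted/reified function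
lemma abel_tail (m : ℕ) (C H : ℕ → ℝ)
    (hC0 : ∀ j, j < m → 0 ≤ C j)
    (hmono : ∀ j, j + 1 < m → C j ≤ C (j + 1))
    (htail : ∀ t, ∑ j ∈ Finset.Ico t m, H j ≤ 0) :
    ∑ j ∈ Finset.range m, C j * H j ≤ 0 := by
  have key : ∀ s, 1 ≤ s → s ≤ m → ∑ j ∈ Finset.Ico (m - s) m, C j * H j
      ≤ C (m - s) * ∑ j ∈ Finset.Ico (m - s) m, H j := by
    intro s hs1
    induction s with
    | zero => omega
    | succ s ih =>
      intro hs
      rcases Nat.eq_zero_or_pos s with hs0 | hs0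
      · subst hs0
        have hlt : m - 1 < m := by omega
        rw [Finset.sum_eq_sum_Ico_succ_bot hlt, Finset.sum_eq_sum_Ico_succ_bot hlt (f := H),
          show m - 1 + 1 = m by omega, Finset.Ico_self, Finset.sum_empty, Finset.sum_empty,
          add_zero, add_zero]
      · have h1 : m - s = (m - (s+1)) + 1 := by omega
        have hlt : m - (s+1) < m := by omega
        rw [Finset.sum_eq_sum_Ico_succ_bot hlt, Finset.sum_eq_sum_Ico_succ_bot hlt (f := H)]
        rw [← h1]
        have ih' := ih hs0 (by omega)
        have hT : ∑ j ∈ Finset.Ico (m - s) m, H j ≤ 0 := htail _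
        have hCle : C (m - (s+1)) ≤ C (m - s) := by
          rw [h1]; exact hmono _ (by omega)
        have : C (m - s) * ∑ j ∈ Finset.Ico (m - s) m, H j
            ≤ C (m - (s+1)) * ∑ j ∈ Finset.Ico (m - s) m, H j :=
          mul_le_mul_of_nonpos_right hCle hT
        nlinarith [ih', this]
  rcases Nat.eq_zero_or_pos m with hm | hm
  · simp [hm]
  · have hkey := key m (by omega) (le_refl m)
    rw [Nat.sub_self] at hkey
    rw [Finset.range_eq_Ico]
    calc ∑ j ∈ Finset.Ico 0 m, C j * H j ≤ C 0 * ∑ j ∈ Finset.Ico 0 m, H j := hkey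
      _ ≤ 0 := mul_nonpos_of_nonneg_of_nonpos (hC0 0 hm) (htail 0)

theorem grouping_top_optimal_zero_ties
    (n : ℕ) (hn : 2 ≤ n)
    (w : Fin n → ℝ)
    (hw_anti : ∀ i j : Fin n, i ≤ j → w j ≤ w i)
    (k : ℕ) (hk : k ≤ n)
    (hw_nonneg : ∀ i : Fin n, (i : ℕ) < k → 0 ≤ w i)
    (hw_neg : ∀ i : Fin n, k ≤ (i : ℕ) → w i < 0) :
    ∀ r : Fin n → ℕ,
      ∑ i, w i * statusNoTieCost n r i ≤
        (∑ i ∈ Finset.univ.filter (fun i : Fin n => (i : ℕ) < k), w i) +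
          ∑ i ∈ Finset.univ.filter (fun i : Fin n => k ≤ (i : ℕ)),
            w i * (1 - (i : ℕ) / (n - 1)) := by
  intro r
  have hD : (0:ℝ) < (n : ℝ) - 1 := by
    have : (2:ℝ) ≤ (n:ℝ) := by exact_mod_cast hn
    linarith
  -- ℕ-indexed versions
  set wN : ℕ → ℝ := fun j => if h : j < n then w ⟨j, h⟩ else 0 with hwN
  set gN : ℕ → ℕ := fun j => if h : j < n then ngc n r ⟨j, h⟩ else 0 with hgN
  have hwNv : ∀ i : Fin n, wN (i : ℕ) = w i := by
    intro i; simp [hwN, i.isLt]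
  have hgNv : ∀ i : Fin n, gN (i : ℕ) = ngc n r i := by
    intro i; simp [hgN, i.isLt]
  have hstatus : ∀ i : Fin n, statusNoTieCost n r i = 1 - (ngc n r i : ℝ) / ((n:ℝ) - 1) := by
    intro i; rfl
  -- real tail bound
  have tailR : ∀ a : ℕ, ∑ i ∈ univ.filter (fun i : Fin n => a ≤ (i : ℕ)),
      ((ngc n r i : ℝ) - (i : ℕ)) ≤ 0 := by
    intro a
    have h1 := tail_nat n a r
    have h2 : (∑ i ∈ univ.filter (fun i : Fin n => a ≤ (i : ℕ)), (ngc n r i : ℝ))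
        ≤ ∑ i ∈ univ.filter (fun i : Fin n => a ≤ (i : ℕ)), ((i : ℕ) : ℝ) := by
      rw [← Nat.cast_sum, ← Nat.cast_sum]
      exact_mod_cast h1
    rw [Finset.sum_sub_distrib]
    linarith
  -- key inequality for negative part
  have hK : ∑ i ∈ univ.filter (fun i : Fin n => k ≤ (i : ℕ)),
      (-w i) * ((ngc n r i : ℝ) - (i : ℕ)) ≤ 0 := by
    have hre : ∑ i ∈ univ.filter (fun i : Fin n => k ≤ (i : ℕ)),
        (-w i) * ((ngc n r i : ℝ) - (i : ℕ))
        = ∑ j ∈ Finset.range (n - k),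
            (-wN (k + j)) * ((gN (k + j) : ℝ) - ((k + j : ℕ) : ℝ)) := by
      rw [← reindex_filter_le n k (fun j => (-wN j) * ((gN j : ℝ) - (j : ℕ)))]
      apply Finset.sum_congr rfl
      intro i _
      rw [hwNv i, hgNv i]
    rw [hre]
    apply abel_tail (n - k) (fun j => -wN (k + j))
      (fun j => (gN (k + j) : ℝ) - ((k + j : ℕ) : ℝ))
    · intro j hj
      have hjn : k + j < n := by omega
      have : wN (k + j) = w ⟨k + j, hjn⟩ := by simp [hwN, hjn]
      rw [this]
      have := hw_neg ⟨k + j, hjn⟩ (by simp)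
      linarith
    · intro j hj
      have hjn : k + j < n := by omega
      have hjn' : k + (j + 1) < n := by omega
      have e1 : wN (k + j) = w ⟨k + j, hjn⟩ := by simp [hwN, hjn]
      have e2 : wN (k + (j + 1)) = w ⟨k + (j + 1), hjn'⟩ := by simp [hwN, hjn']
      simp only [e1, e2]
      have := hw_anti ⟨k + j, hjn⟩ ⟨k + (j + 1), hjn'⟩ (by simp [Fin.le_def])
      linarith
    · intro t
      rcases le_or_gt (n - k) t with ht | ht
      · rw [Finset.Ico_eq_empty (by omega), Finset.sum_empty]
      · rw [Finset.sum_Ico_eq_sum_range]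
        have h2 : ∑ i ∈ univ.filter (fun i : Fin n => k + t ≤ (i : ℕ)),
            ((gN (i : ℕ) : ℝ) - ((i : ℕ) : ℕ)) ≤ 0 := by
          calc ∑ i ∈ univ.filter (fun i : Fin n => k + t ≤ (i : ℕ)),
              ((gN (i : ℕ) : ℝ) - ((i : ℕ) : ℕ))
              = ∑ i ∈ univ.filter (fun i : Fin n => k + t ≤ (i : ℕ)),
                ((ngc n r i : ℝ) - (i : ℕ)) :=
                Finset.sum_congr rfl (fun i _ => by rw [hgNv i])
            _ ≤ 0 := tailR (k + t)
        rw [reindex_filter_le n (k + t) (fun j => (gN j : ℝ) - (j : ℕ))] at h2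
        have he : n - k - t = n - (k + t) := by omega
        rw [he]
        refine le_trans (le_of_eq (Finset.sum_congr rfl (fun j _ => ?_))) h2
        rw [show k + (t + j) = k + t + j from (add_assoc k t j).symm]
  -- split the LHS and finish
  have hsplit : ∑ i : Fin n, w i * statusNoTieCost n r i
      = (∑ i ∈ univ.filter (fun i : Fin n => (i : ℕ) < k), w i * statusNoTieCost n r i)
        + ∑ i ∈ univ.filter (fun i : Fin n => k ≤ (i : ℕ)), w i * statusNoTieCost n r i := by
    rw [← Finset.sum_filter_add_sum_filter_not univ (fun i : Fin n => (i : ℕ) < k)]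
    congr 1
    apply Finset.sum_congr _ (fun _ _ => rfl)
    apply Finset.filter_congr
    intro i _
    simp [not_lt]
  have part1 : ∑ i ∈ univ.filter (fun i : Fin n => (i : ℕ) < k), w i * statusNoTieCost n r i
      ≤ ∑ i ∈ univ.filter (fun i : Fin n => (i : ℕ) < k), w i := by
    apply Finset.sum_le_sum
    intro i hi
    have hik : (i : ℕ) < k := (Finset.mem_filter.1 hi).2
    have hw0 : 0 ≤ w i := hw_nonneg i hik
    have hs1 : statusNoTieCost n r i ≤ 1 := by
      rw [hstatus i]
      have : 0 ≤ (ngc n r i : ℝ) / ((n:ℝ) - 1) := by positivity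
      linarith
    calc w i * statusNoTieCost n r i ≤ w i * 1 := mul_le_mul_of_nonneg_left hs1 hw0
      _ = w i := mul_one _
  have part2 : ∑ i ∈ univ.filter (fun i : Fin n => k ≤ (i : ℕ)), w i * statusNoTieCost n r i
      ≤ ∑ i ∈ univ.filter (fun i : Fin n => k ≤ (i : ℕ)), w i * (1 - (i : ℕ) / ((n:ℝ) - 1)) := by
    rw [← sub_nonneg, ← Finset.sum_sub_distrib]
    have hterm : ∀ i ∈ univ.filter (fun i : Fin n => k ≤ (i : ℕ)),
        w i * (1 - (i : ℕ) / ((n:ℝ) - 1)) - w i * statusNoTieCost n r i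
        = (-(((n:ℝ) - 1)⁻¹)) * ((-w i) * ((ngc n r i : ℝ) - (i : ℕ))) := by
      intro i _
      rw [hstatus i]
      field_simp
      ring
    rw [Finset.sum_congr rfl hterm, ← Finset.mul_sum]
    nlinarith [mul_nonneg (inv_nonneg.2 hD.le)
      (neg_nonneg.2 hK)]
  rw [hsplit]
  exact add_le_add part1 part2
end
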